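/- arXiv:1510.05412 — 9 statements merged into one kernel-verified Lean document; each statement's English description precedes it below -/
import Mathlib

section
/- Let G be a locally compact group, μ a bounded regular Borel measure on G that is singular with respect to a left Haar measure λ on G, and U a compact neighbourhood of the identity. Then μ ⊥ (μ ∗ δ_x) (i.e., μ is mutually singular with its right translate by x) for λ-almost all x in U. -/
open MeasureTheory Topology

open Set Filter MeasureTheory.Measure
open scoped ENNReal Pointwise NNReal

section Auxiliary

variable {G : Type*} [Group G] [TopologicalSpace G] [IsTopologicalGroup G]
    [LocallyCompactSpace G] [T2Space G] [MeasurableSpace G] [BorelSpace G]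

/-- Local comparison between a regular Haar measure and its image under inversion, on compact
subsets of a fixed compact set: `χ A ≤ M * χ A⁻¹`. -/
lemma aux_loc_inv_comparison (χ : Measure G) [χ.IsHaarMeasure] [χ.Regular]
    {L : Set G} (hL : IsCompact L) :
    ∃ M : ℝ≥0∞, M ≠ ∞ ∧ ∀ A : Set G, A ⊆ L → IsCompact A → χ A ≤ M * χ A⁻¹ := by
  set ν := χ.inv with hν
  -- a reference bump function `g` with `g 1 = 1`
  obtain ⟨g, g_one, -, g_comp, g_mem⟩ :=
    exists_continuous_one_zero_of_isCompact (isCompact_singleton (x := (1 : G)))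
      isClosed_empty (disjoint_empty _)
  have g_nonneg : (0 : G → ℝ) ≤ ⇑g := fun x => (g_mem x).1
  have g_pos : g 1 ≠ 0 := by
    have : g 1 = 1 := g_one rfl
    simp [this]
  set D : G → ℝ := fun x => ∫ z, g (z⁻¹ * x) ∂ν with hD
  have D_cont : Continuous D := continuous_integral_apply_inv_mul g.continuous g_comp
  have D_pos : ∀ x, 0 < D x := by
    intro x
    have C : Continuous fun y => g (y⁻¹ * x) :=
      g.continuous.comp (continuous_inv.mul continuous_const)
    apply (integral_pos_iff_support_of_nonneg (fun y => (g_mem _).1) ?_).2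
    · apply C.isOpen_support.measure_pos ν
      refine ⟨x, ?_⟩
      simp only [Function.mem_support, inv_mul_cancel]
      exact g_pos
    · apply C.integrable_of_hasCompactSupport
      exact g_comp.comp_homeomorph ((Homeomorph.inv G).trans (Homeomorph.mulRight x))
  -- a compact set `K'` whose interior contains `L`
  obtain ⟨K', K'_comp, hLK'⟩ := exists_compact_superset hL
  -- a positive lower bound for `D` on `K' ∪ {1}`
  obtain ⟨y₀, hy₀, hmin⟩ :=
    (K'_comp.union isCompact_singleton).exists_isMinOn ⟨1, Or.inr rfl⟩ D_cont.continuousOn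
  set m : ℝ := (D y₀)⁻¹ with hm
  have m_nonneg : 0 ≤ m := (inv_pos.2 (D_pos y₀)).le
  set Ig : ℝ := ∫ x, g x ∂χ with hIg
  have Ig_nonneg : 0 ≤ Ig := integral_nonneg g_nonneg
  refine ⟨ENNReal.ofReal (m * Ig), ENNReal.ofReal_ne_top, ?_⟩
  intro A hAL hA
  set M := ENNReal.ofReal (m * Ig) with hM
  have hM_ne_top : M ≠ ∞ := ENNReal.ofReal_ne_top
  have hAinv_ne_top : χ A⁻¹ ≠ ∞ := hA.inv.measure_lt_top.ne
  apply ENNReal.le_of_forall_pos_le_add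
  intro ε hε _
  -- choose an open set `W'` around `A⁻¹` of almost minimal measure
  set ε' : ℝ≥0∞ := (ε : ℝ≥0∞) / (M + 1) with hε'
  have hε'0 : ε' ≠ 0 := by
    rw [hε']
    simp only [ne_eq, ENNReal.div_eq_zero_iff, ENNReal.coe_eq_zero, ENNReal.add_eq_top,
      ENNReal.one_ne_top, or_false, not_or]
    exact ⟨fun h => by simp [h] at hε, hM_ne_top⟩
  obtain ⟨W', hW'sub, hW'open, hW'lt⟩ :=
    (A⁻¹).exists_isOpen_lt_of_lt _ (ENNReal.lt_add_right hAinv_ne_top hε'0)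
  set O : Set G := W'⁻¹ ∩ interior K' with hO
  have O_open : IsOpen O := (hW'open.inv).inter isOpen_interior
  have hAO : A ⊆ O := by
    intro a ha
    refine ⟨?_, hLK' (hAL ha)⟩
    show a⁻¹ ∈ W'
    exact hW'sub (Set.inv_mem_inv.2 ha)
  obtain ⟨f, f_one, f_zero, f_comp, f_mem⟩ :=
    exists_continuous_one_zero_of_isCompact hA O_open.isClosed_compl
      (disjoint_compl_right_iff_subset.mpr hAO)
  have f_supp_sub : tsupport ⇑f ⊆ K' := by
    apply (closure_minimal ?_ K'_comp.isClosed)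
    intro x hx
    rcases Classical.em (x ∈ O) with h | h
    · exact interior_subset h.2
    · exact absurd (f_zero h) (by simpa [Function.mem_support] using hx)
  -- step 1 : `χ A ≤ ofReal (∫ f ∂χ)`
  have step1 : χ A ≤ ENNReal.ofReal (∫ x, f x ∂χ) := by
    apply (f.continuous.integrable_of_hasCompactSupport f_comp).measure_le_integral
    · exact Eventually.of_forall fun x => (f_mem x).1
    · intro x hx
      rw [f_one hx, Pi.one_apply]
  -- step 2 : the left/right combo identity
  have step2 : ∫ x, f x ∂χ = (∫ y, f y * (D y)⁻¹ ∂ν) * Ig := by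
    exact integral_isMulLeftInvariant_isMulRightInvariant_combo
      f.continuous f_comp g.continuous g_comp g_nonneg g_pos
  -- step 3 : bound the ν-integral by `m * ∫ f ∂ν`
  have int_f : Integrable (⇑f) ν := f.continuous.integrable_of_hasCompactSupport f_comp
  have step3 : ∫ y, f y * (D y)⁻¹ ∂ν ≤ m * ∫ y, f y ∂ν := by
    have int1 : Integrable (fun y => f y * (D y)⁻¹) ν := by
      apply Continuous.integrable_of_hasCompactSupport
      · exact f.continuous.mul (D_cont.inv₀ fun x => (D_pos x).ne')
      · exact f_comp.mul_right
    have int2 : Integrable (fun y => m * f y) ν := int_f.const_mul m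
    calc ∫ y, f y * (D y)⁻¹ ∂ν ≤ ∫ y, m * f y ∂ν := by
          apply integral_mono int1 int2
          intro y
          rcases Classical.em (f y = 0) with h | h
          · simp [h]
          · have hyK : y ∈ K' ∪ {1} := Or.inl (f_supp_sub (subset_tsupport _ h))
            have hD' : (D y)⁻¹ ≤ m := inv_anti₀ (D_pos y₀) (hmin hyK)
            calc f y * (D y)⁻¹ ≤ f y * m :=
                  mul_le_mul_of_nonneg_left hD' (f_mem y).1
              _ = m * f y := mul_comm _ _
      _ = m * ∫ y, f y ∂ν := integral_const_mul m _
  -- step 4 : `ofReal (∫ f ∂ν) ≤ ν O ≤ χ W'`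
  have step4 : ENNReal.ofReal (∫ y, f y ∂ν) ≤ χ W' := by
    calc ENNReal.ofReal (∫ y, f y ∂ν) ≤ ν O :=
          integral_le_measure (fun x _ => (f_mem x).2) (fun x hx => (f_zero hx).le)
      _ = χ O⁻¹ := Measure.inv_apply χ O
      _ ≤ χ W' := by
          apply measure_mono
          intro z hz
          have : z⁻¹ ∈ O := hz
          simpa using this.1
  have int_f_nonneg : 0 ≤ ∫ y, f y ∂ν := integral_nonneg fun x => (f_mem x).1
  -- assemble
  calc χ A ≤ ENNReal.ofReal (∫ x, f x ∂χ) := step1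
    _ = ENNReal.ofReal ((∫ y, f y * (D y)⁻¹ ∂ν) * Ig) := by rw [step2]
    _ ≤ ENNReal.ofReal ((m * ∫ y, f y ∂ν) * Ig) :=
        ENNReal.ofReal_le_ofReal (mul_le_mul_of_nonneg_right step3 Ig_nonneg)
    _ = ENNReal.ofReal ((m * Ig) * ∫ y, f y ∂ν) := by ring_nf
    _ = M * ENNReal.ofReal (∫ y, f y ∂ν) :=
        ENNReal.ofReal_mul (by positivity)
    _ ≤ M * χ W' := mul_le_mul_right step4 M
    _ ≤ M * (χ A⁻¹ + ε') := mul_le_mul_right hW'lt.le M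
    _ = M * χ A⁻¹ + M * ε' := mul_add M _ _
    _ ≤ M * χ A⁻¹ + ε := by
        apply add_le_add_right
        calc M * ε' ≤ (M + 1) * ε' := mul_le_mul_left le_self_add ε'
          _ = (ε : ℝ≥0∞) := ENNReal.mul_div_cancel (by simp) (by simp [hM_ne_top])

/-- Key lemma: if `K` is compact and `lam`-null, then almost every right translate `K x`
(for `x ∈ U`, w.r.t. `lam`) is `μ`-null. -/
lemma aux_key (lam : Measure G) [lam.IsHaarMeasure]
    (μ : Measure G) [IsFiniteMeasure μ]
    {U : Set G} (hUc : IsCompact U)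
    {K : Set G} (hK : IsCompact K) (hlamK : lam K = 0) :
    ∀ᵐ x ∂(lam.restrict U), μ ((fun y => y * x⁻¹) ⁻¹' K) = 0 := by
  haveI finU : IsFiniteMeasure (lam.restrict U) :=
    ⟨by rw [Measure.restrict_apply_univ]; exact hUc.measure_lt_top⟩
  set χ : Measure G := MeasureTheory.Measure.haar with hχ
  -- `χ K = 0`
  have hχK : χ K = 0 := by
    have h := measure_isMulInvariant_eq_smul_of_isCompact_closure χ lam (s := K) hK.closure
    rw [hlamK] at h
    simpa using h
  obtain ⟨M, hM_ne_top, hMle⟩ := aux_loc_inv_comparison χ hUc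
  set c : ℝ≥0 := lam.haarScalarFactor χ with hc
  -- cutoff function φ equal to 1 on U
  obtain ⟨K', K'_comp, hUK'⟩ := exists_compact_superset hUc
  obtain ⟨φ, φ_one, φ_zero, φ_comp, φ_mem⟩ :=
    exists_continuous_one_zero_of_isCompact hUc isOpen_interior.isClosed_compl
      (disjoint_compl_right_iff_subset.mpr hUK')
  set B : ℝ≥0∞ := (c : ℝ≥0∞) * M * μ univ with hB
  have hB_ne_top : B ≠ ∞ := by
    rw [hB]
    exact ENNReal.mul_ne_top (ENNReal.mul_ne_top ENNReal.coe_ne_top hM_ne_top)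
      (measure_ne_top μ _)
  -- for every n, construct a majorant
  have main : ∀ n : ℕ, ∃ h : G → ℝ≥0∞, Measurable h ∧
      (∀ x ∈ U, μ ((fun y => y * x⁻¹) ⁻¹' K) ≤ h x) ∧
      ∫⁻ x, h x ∂(lam.restrict U) ≤ B * ((n : ℝ≥0∞) + 1)⁻¹ := by
    intro n
    set δ : ℝ≥0∞ := ((n : ℝ≥0∞) + 1)⁻¹ with hδ
    have hδ0 : 0 < δ := ENNReal.inv_pos.2 (by simp)
    -- small open neighborhood of K
    obtain ⟨O, hKO, O_open, hOlt⟩ := K.exists_isOpen_lt_of_lt δ (by rw [hχK]; exact hδ0)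
    obtain ⟨k, k_comp, k_closed, hKk, hkO⟩ := exists_compact_closed_between hK O_open hKO
    obtain ⟨f, f_one, f_zero, f_comp, f_mem⟩ :=
      exists_continuous_one_zero_of_isCompact hK isOpen_interior.isClosed_compl
        (disjoint_compl_right_iff_subset.mpr hKk)
    set C : Set G := tsupport ⇑f with hC
    have C_comp : IsCompact C := f_comp
    have C_sub_O : C ⊆ O := by
      refine subset_trans ?_ hkO
      apply closure_minimal ?_ k_closed
      intro x hx
      rcases Classical.em (x ∈ interior k) with h | h
      · exact interior_subset h
      · exact absurd (f_zero h) (by simpa [Function.mem_support] using hx)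
    have hχC : χ C ≤ δ := (measure_mono C_sub_O).trans hOlt.le
    -- joint measurability
    have F_cont : Continuous (fun p : G × G => φ p.1 * f (p.2 * p.1⁻¹)) :=
      (φ.continuous.comp continuous_fst).mul
        (f.continuous.comp (continuous_snd.mul continuous_fst.inv))
    have F_supp : HasCompactSupport (fun p : G × G => φ p.1 * f (p.2 * p.1⁻¹)) := by
      apply HasCompactSupport.intro (φ_comp.prod (C_comp.mul φ_comp))
      rintro ⟨x, y⟩ hp
      rcases Classical.em (φ x = 0) with h | h
      · simp [h]
      rcases Classical.em (f (y * x⁻¹) = 0) with h' | h'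
      · simp [h']
      exfalso
      apply hp
      refine ⟨subset_tsupport _ h, ?_⟩
      have : y = (y * x⁻¹) * x := by simp
      rw [this]
      exact Set.mul_mem_mul (subset_tsupport _ h') (subset_tsupport _ h)
    have F_meas : Measurable (fun p : G × G => φ p.1 * f (p.2 * p.1⁻¹)) :=
      F_supp.measurable_of_prod F_cont
    have Fe_meas : Measurable (Function.uncurry
        (fun x y => ENNReal.ofReal (φ x * f (y * x⁻¹)))) :=
      ENNReal.measurable_ofReal.comp F_meas
    refine ⟨fun x => ∫⁻ y, ENNReal.ofReal (φ x * f (y * x⁻¹)) ∂μ,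
      Measurable.lintegral_prod_right Fe_meas, ?_, ?_⟩
    · -- pointwise domination on U
      intro x hxU
      have hmeas : MeasurableSet ((fun y => y * x⁻¹) ⁻¹' K) :=
        (measurable_mul_const x⁻¹) hK.isClosed.measurableSet
      rw [← lintegral_indicator_one hmeas]
      apply lintegral_mono
      intro y
      rcases Classical.em (y ∈ (fun y => y * x⁻¹) ⁻¹' K) with h | h
      · have h1 : f (y * x⁻¹) = 1 := by
          have := f_one (h : y * x⁻¹ ∈ K)
          simpa using this
        have h2 : φ x = 1 := φ_one hxU
        simp [indicator_of_mem h, h1, h2]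
      · simp [indicator_of_notMem h]
    · -- the integral bound
      have swap : ∫⁻ x, (∫⁻ y, ENNReal.ofReal (φ x * f (y * x⁻¹)) ∂μ) ∂(lam.restrict U)
          = ∫⁻ y, (∫⁻ x, ENNReal.ofReal (φ x * f (y * x⁻¹)) ∂(lam.restrict U)) ∂μ :=
        lintegral_lintegral_swap Fe_meas.aemeasurable
      rw [swap]
      have inner_bound : ∀ y : G,
          (∫⁻ x, ENNReal.ofReal (φ x * f (y * x⁻¹)) ∂(lam.restrict U)) ≤ (c : ℝ≥0∞) * (M * δ) := by
        intro y
        set S : Set G := (fun x => y * x⁻¹) ⁻¹' C with hS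
        have S_closed : IsClosed S :=
          (isClosed_tsupport _).preimage (continuous_const.mul continuous_inv)
        have SU_comp : IsCompact (S ∩ U) := hUc.inter_left S_closed
        have step_a : (∫⁻ x, ENNReal.ofReal (φ x * f (y * x⁻¹)) ∂(lam.restrict U))
            ≤ lam (S ∩ U) := by
          calc (∫⁻ x, ENNReal.ofReal (φ x * f (y * x⁻¹)) ∂(lam.restrict U))
              ≤ ∫⁻ x, S.indicator (fun _ => 1) x ∂(lam.restrict U) := by
                apply lintegral_mono
                intro x
                rcases Classical.em (x ∈ S) with h | h
                · rw [indicator_of_mem h]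
                  apply ENNReal.ofReal_le_one.2
                  have := (φ_mem x).2
                  have := (f_mem (y * x⁻¹)).2
                  have h1 := (φ_mem x).1
                  have h2 := (f_mem (y * x⁻¹)).1
                  nlinarith
                · rw [indicator_of_notMem h]
                  have : f (y * x⁻¹) = 0 := image_eq_zero_of_notMem_tsupport h
                  simp [this]
            _ = lam.restrict U S := by
                rw [lintegral_indicator S_closed.measurableSet]
                simp
            _ = lam (S ∩ U) := Measure.restrict_apply S_closed.measurableSet
        have step_b : lam (S ∩ U) = c • χ (S ∩ U) :=
          measure_isMulInvariant_eq_smul_of_isCompact_closure lam χ SU_comp.closure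
        have step_c : χ (S ∩ U) ≤ M * χ ((S ∩ U)⁻¹) :=
          hMle _ inter_subset_right SU_comp
        have step_d : χ ((S ∩ U)⁻¹) ≤ χ C := by
          calc χ ((S ∩ U)⁻¹) ≤ χ ((fun z => y * z) ⁻¹' C) := by
                apply measure_mono
                intro z hz
                have hz' : z⁻¹ ∈ S ∩ U := hz
                have : y * (z⁻¹)⁻¹ ∈ C := hz'.1
                simpa using this
            _ = χ C := measure_preimage_mul χ y C
        calc (∫⁻ x, ENNReal.ofReal (φ x * f (y * x⁻¹)) ∂(lam.restrict U)) ≤ lam (S ∩ U) := step_a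
          _ = c • χ (S ∩ U) := step_b
          _ ≤ c • (M * χ ((S ∩ U)⁻¹)) := smul_le_smul_of_nonneg_left step_c (zero_le : (0 : ℝ≥0) ≤ c)
          _ ≤ c • (M * δ) := by
              apply smul_le_smul_of_nonneg_left _ (zero_le : (0 : ℝ≥0) ≤ c)
              exact mul_le_mul_right (step_d.trans hχC) M
          _ = (c : ℝ≥0∞) * (M * δ) := by
              rw [ENNReal.smul_def, smul_eq_mul]
      calc ∫⁻ y, (∫⁻ x, ENNReal.ofReal (φ x * f (y * x⁻¹)) ∂(lam.restrict U)) ∂μ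
          ≤ ∫⁻ _, (c : ℝ≥0∞) * (M * δ) ∂μ := lintegral_mono inner_bound
        _ = (c : ℝ≥0∞) * (M * δ) * μ univ := lintegral_const _
        _ = B * δ := by rw [hB]; ring
  choose h h_meas h_dom h_int using main
  set H : G → ℝ≥0∞ := fun x => liminf (fun n => h n x) atTop with hH
  have H_meas : Measurable H := Measurable.liminf h_meas
  have H_int : ∫⁻ x, H x ∂(lam.restrict U) = 0 := by
    apply le_antisymm _ zero_le
    have h1 : ∫⁻ x, H x ∂(lam.restrict U) ≤ liminf (fun n => ∫⁻ x, h n x ∂(lam.restrict U)) atTop :=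
      lintegral_liminf_le h_meas
    have h2 : liminf (fun n => ∫⁻ x, h n x ∂(lam.restrict U)) atTop
        ≤ liminf (fun n : ℕ => B * ((n : ℝ≥0∞) + 1)⁻¹) atTop :=
      liminf_le_liminf (Eventually.of_forall h_int)
    have h3 : Tendsto (fun n : ℕ => B * ((n : ℝ≥0∞) + 1)⁻¹) atTop (𝓝 0) := by
      have t1 : Tendsto (fun n : ℕ => ((n : ℝ≥0∞) + 1)⁻¹) atTop (𝓝 0) := by
        have : (fun n : ℕ => ((n : ℝ≥0∞) + 1)⁻¹)
            = (fun m : ℕ => (m : ℝ≥0∞)⁻¹) ∘ (fun n : ℕ => n + 1) := by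
          funext n
          simp [Function.comp]
        rw [this]
        exact ENNReal.tendsto_inv_nat_nhds_zero.comp (tendsto_add_atTop_nat 1)
      have := ENNReal.Tendsto.const_mul t1 (Or.inr hB_ne_top)
      simpa using this
    have h4 : liminf (fun n : ℕ => B * ((n : ℝ≥0∞) + 1)⁻¹) atTop = 0 := h3.liminf_eq
    calc ∫⁻ x, H x ∂(lam.restrict U) ≤ _ := h1
      _ ≤ _ := h2
      _ = 0 := h4
  have H_ae : ∀ᵐ x ∂(lam.restrict U), H x = 0 := by
    have := (lintegral_eq_zero_iff H_meas).1 H_int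
    filter_upwards [this] with x hx using hx
  filter_upwards [H_ae, ae_restrict_mem hUc.measurableSet] with x hHx hxU
  have hle : μ ((fun y => y * x⁻¹) ⁻¹' K) ≤ H x :=
    le_liminf_of_le (by isBoundedDefault) (Eventually.of_forall fun n => h_dom n x hxU)
  rw [hHx] at hle
  exact le_antisymm hle zero_le

end Auxiliary

/-- If `μ` is a bounded regular Borel measure on a locally compact group `G`
that is singular with respect to a left Haar measure `lam`, and `U` is a compact neighbourhood
of the identity, then `μ ⟂ μ ∗ δ_x` for `lam`-almost every `x ∈ U`. Here the right translate
`μ ∗ δ_x` is the pushforward of `μ` under right multiplication by `x`. -/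
theorem stmt_0 {G : Type*} [Group G] [TopologicalSpace G] [IsTopologicalGroup G]
    [LocallyCompactSpace G] [T2Space G] [MeasurableSpace G] [BorelSpace G]
    (lam : Measure G) [lam.IsHaarMeasure]
    (μ : Measure G) [IsFiniteMeasure μ] [μ.Regular]
    (hsing : μ ⟂ₘ lam)
    (U : Set G) (hUc : IsCompact U) (hU : U ∈ 𝓝 (1 : G)) :
    ∀ᵐ x ∂(lam.restrict U), μ ⟂ₘ μ.map (· * x) := by
  classical
  obtain ⟨s, s_meas, hμs, hlams⟩ := hsing
  set E : Set G := sᶜ with hE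
  have hE_meas : MeasurableSet E := s_meas.compl
  have hlamE : lam E = 0 := hlams
  have hμEc : μ Eᶜ = 0 := by rwa [hE, compl_compl]
  -- choose compacts exhausting E in μ-measure
  have ex : ∀ n : ℕ, ∃ K ⊆ E, IsCompact K ∧ μ E < μ K + ((n : ℝ≥0∞) + 1)⁻¹ := by
    intro n
    exact hE_meas.exists_isCompact_lt_add (measure_ne_top μ E)
      (by simp : ((n : ℝ≥0∞) + 1)⁻¹ ≠ 0)
  choose Kn hKnE hKnc hKnlt using ex
  set F : Set G := ⋃ n, Kn n with hF
  have hFE : F ⊆ E := iUnion_subset hKnE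
  have hlamKn : ∀ n, lam (Kn n) = 0 := fun n => measure_mono_null (hKnE n) hlamE
  have hF_meas : MeasurableSet F :=
    MeasurableSet.iUnion fun n => (hKnc n).isClosed.measurableSet
  -- μ (Fᶜ) = 0
  have hμEF : μ (E \ F) = 0 := by
    have key : ∀ n : ℕ, μ (E \ F) ≤ ((n : ℝ≥0∞) + 1)⁻¹ := by
      intro n
      have h1 : μ (E \ F) ≤ μ (E \ Kn n) :=
        measure_mono (diff_subset_diff_right (subset_iUnion Kn n))
      have h2 : μ (E \ Kn n) = μ E - μ (Kn n) :=
        measure_diff (hKnE n) (hKnc n).isClosed.measurableSet.nullMeasurableSet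
          (measure_ne_top μ _)
      have h3 : μ E - μ (Kn n) ≤ ((n : ℝ≥0∞) + 1)⁻¹ := by
        apply tsub_le_iff_right.2
        rw [add_comm]
        exact (hKnlt n).le
      exact h1.trans (h2.le.trans h3)
    have t1 : Tendsto (fun n : ℕ => ((n : ℝ≥0∞) + 1)⁻¹) atTop (𝓝 0) := by
      have : (fun n : ℕ => ((n : ℝ≥0∞) + 1)⁻¹)
          = (fun m : ℕ => (m : ℝ≥0∞)⁻¹) ∘ (fun n : ℕ => n + 1) := by
        funext n
        simp [Function.comp]
      rw [this]
      exact ENNReal.tendsto_inv_nat_nhds_zero.comp (tendsto_add_atTop_nat 1)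
    have := ge_of_tendsto t1 (Eventually.of_forall key)
    exact le_antisymm this zero_le
  have hμFc : μ Fᶜ = 0 := by
    have sub : Fᶜ ⊆ (E \ F) ∪ Eᶜ := by
      intro z hz
      rcases Classical.em (z ∈ E) with h | h
      · exact Or.inl ⟨h, hz⟩
      · exact Or.inr h
    apply le_antisymm _ zero_le
    calc μ Fᶜ ≤ μ ((E \ F) ∪ Eᶜ) := measure_mono sub
      _ ≤ μ (E \ F) + μ Eᶜ := measure_union_le _ _
      _ = 0 := by rw [hμEF, hμEc, add_zero]
  -- apply the key lemma to each Kn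
  have key : ∀ᵐ x ∂(lam.restrict U), ∀ n : ℕ, μ ((fun y => y * x⁻¹) ⁻¹' Kn n) = 0 :=
    ae_all_iff.2 fun n => aux_key lam μ hUc (hKnc n) (hlamKn n)
  filter_upwards [key] with x hx
  refine ⟨(fun y => y * x⁻¹) ⁻¹' F, (measurable_mul_const x⁻¹) hF_meas, ?_, ?_⟩
  · -- μ of the translate of F is zero
    have : (fun y => y * x⁻¹) ⁻¹' F = ⋃ n, (fun y => y * x⁻¹) ⁻¹' Kn n := by
      rw [hF, preimage_iUnion]
    rw [this]
    exact measure_iUnion_null hx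
  · -- the pushforward gives no mass to the complement
    rw [Measure.map_apply (measurable_mul_const x)
      ((measurable_mul_const x⁻¹) hF_meas).compl]
    have : (fun z => z * x) ⁻¹' ((fun y => y * x⁻¹) ⁻¹' F)ᶜ = Fᶜ := by
      ext z
      simp [mul_inv_cancel_right]
    rw [this]
    exact hμFc
end

section
/- Let G be a locally compact group, μ a bounded Radon measure on G, ε > 0, and H ⊆ G a countable set such that the right translates μ ∗ δ_h are pairwise mutually singular for h ∈ H. Then there is a compact set C ⊆ G such that |μ|(G \ C) < ε and the sets C·h are pairwise disjoint for h ∈ H. -/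
open MeasureTheory Topology

/-- Let `μ` be a bounded (nonnegative) Radon measure on a locally compact
group `G`, `ε > 0`, and `H ⊆ G` countable such that the right translates `μ ∗ δ_h`, `h ∈ H`,
are pairwise mutually singular. Then there is a compact set `C ⊆ G` with `μ(G \ C) < ε`
such that the sets `C·h`, `h ∈ H`, are pairwise disjoint. -/
theorem stmt_1 {G : Type*} [Group G] [TopologicalSpace G] [IsTopologicalGroup G]
    [LocallyCompactSpace G] [T2Space G] [MeasurableSpace G] [BorelSpace G]
    (μ : Measure G) [IsFiniteMeasure μ] [μ.Regular]
    (ε : ENNReal) (hε : 0 < ε)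
    (H : Set G) (hHc : H.Countable)
    (hsing : H.Pairwise fun h h' => μ.map (· * h) ⟂ₘ μ.map (· * h')) :
    ∃ C : Set G, IsCompact C ∧ μ Cᶜ < ε ∧
      H.Pairwise fun h h' => Disjoint ((· * h) '' C) ((· * h') '' C) := by
  classical
  -- For each ordered pair of distinct elements of `H`, get a full-measure set with
  -- disjoint translates.
  have key : ∀ p : G × G, p.1 ∈ H → p.2 ∈ H → p.1 ≠ p.2 →
      ∃ A : Set G, MeasurableSet A ∧ μ Aᶜ = 0 ∧
        Disjoint ((· * p.1) '' A) ((· * p.2) '' A) := by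
    rintro ⟨h, h'⟩ hh hh' hne
    dsimp only at hh hh' hne ⊢
    obtain ⟨S, hSm, hS1, hS2⟩ := hsing hh hh' hne
    rw [Measure.map_apply (measurable_mul_const h) hSm] at hS1
    rw [Measure.map_apply (measurable_mul_const h') hSm.compl] at hS2
    refine ⟨(· * h) ⁻¹' Sᶜ ∩ (· * h') ⁻¹' S, ?_, ?_, ?_⟩
    · exact ((measurable_mul_const h) hSm.compl).inter ((measurable_mul_const h') hSm)
    · have hc : ((· * h) ⁻¹' Sᶜ ∩ (· * h') ⁻¹' S)ᶜ = (· * h) ⁻¹' S ∪ (· * h') ⁻¹' Sᶜ := by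
        rw [Set.compl_inter, ← Set.preimage_compl, ← Set.preimage_compl, compl_compl]
      rw [hc]
      exact measure_union_null hS1 hS2
    · rw [Set.disjoint_left]
      rintro x ⟨a, ha, rfl⟩ ⟨b, hb, hab⟩
      have h1 : a * h ∈ Sᶜ := ha.1
      have h2 : b * h' ∈ S := hb.2
      have hab' : b * h' = a * h := hab
      rw [hab'] at h2
      exact h1 h2
  set T : Set (G × G) := {p | p.1 ∈ H ∧ p.2 ∈ H ∧ p.1 ≠ p.2} with hT
  have hTsub : T ⊆ H ×ˢ H := fun p hp => Set.mem_prod.2 ⟨hp.1, hp.2.1⟩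
  have hTc : T.Countable := (hHc.prod hHc).mono hTsub
  have key' : ∀ p ∈ T, ∃ A : Set G, MeasurableSet A ∧ μ Aᶜ = 0 ∧
      Disjoint ((· * p.1) '' A) ((· * p.2) '' A) :=
    fun p hp => key p hp.1 hp.2.1 hp.2.2
  choose! A hAm hA0 hAd using key'
  set F : Set G := ⋂ p ∈ T, A p with hF
  have hFm : MeasurableSet F := MeasurableSet.biInter hTc fun p hp => hAm p hp
  have hF0 : μ Fᶜ = 0 := by
    rw [hF, Set.compl_iInter₂]
    exact (measure_biUnion_null_iff hTc).2 fun p hp => hA0 p hp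
  obtain ⟨K, hKF, hKc, hKlt⟩ := hFm.exists_isCompact_lt_add (measure_ne_top μ F) hε.ne'
  refine ⟨K, hKc, ?_, ?_⟩
  · have hsub : Kᶜ ⊆ Fᶜ ∪ (F \ K) := by
      intro x hx
      by_cases hxF : x ∈ F
      · exact Or.inr ⟨hxF, hx⟩
      · exact Or.inl hxF
    calc μ Kᶜ ≤ μ Fᶜ + μ (F \ K) := le_trans (measure_mono hsub) (measure_union_le _ _)
      _ = μ (F \ K) := by rw [hF0, zero_add]
      _ < ε := measure_diff_lt_of_lt_add hKc.measurableSet.nullMeasurableSet hKF (measure_ne_top μ K) hKlt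
  · intro h hh h' hh' hne
    have hpT : (h, h') ∈ T := ⟨hh, hh', hne⟩
    have hKA : K ⊆ A (h, h') := hKF.trans (Set.biInter_subset_of_mem hpT)
    exact (hAd (h, h') hpT).mono (Set.image_mono hKA) (Set.image_mono hKA)
end

section
/- Let G be a locally compact group with left Haar measure λ, and suppose μ is a nonzero bounded Radon measure on G whose orbit {μ ∗ δ_x : x ∈ G} under right translations is norm-separable in the space of bounded measures. Then μ is absolutely continuous with respect to λ. -/
open MeasureTheory Topology Pointwise

open Set in
/-- Core step: a compact `lam`-null set is `μ`-null, given the separability data. -/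
theorem stmt_3_core {G : Type*} [Group G] [TopologicalSpace G] [IsTopologicalGroup G]
    [LocallyCompactSpace G] [T2Space G] [MeasurableSpace G] [BorelSpace G]
    (lam : Measure G) [lam.IsHaarMeasure]
    (μ : Measure G) [IsFiniteMeasure μ]
    (hsep : ∃ T : Set G, T.Countable ∧ ∀ x : G, ∀ ε : ENNReal, 0 < ε →
      ∃ t ∈ T, ∀ s : Set G, MeasurableSet s →
        μ.map (· * x) s ≤ μ.map (· * t) s + ε ∧ μ.map (· * t) s ≤ μ.map (· * x) s + ε)
    {K : Set G} (hKcomp : IsCompact K) (hlamK : lam K = 0) : μ K = 0 := by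
  classical
  have hKmeas : MeasurableSet K := hKcomp.isClosed.measurableSet
  -- a fixed regular Haar measure, used for outer regularity purposes
  obtain ⟨K₀⟩ : Nonempty (TopologicalSpace.PositiveCompacts G) := inferInstance
  set χ : Measure G := Measure.haarMeasure K₀ with hχdef
  -- Main quantitative estimate
  have hcore : ∀ ε : ENNReal, 0 < ε → ε ≠ ⊤ → μ K ≤ 3 * ε := by
    intro ε hε hεtop
    obtain ⟨T, hTc, hT⟩ := hsep
    set A : G → Set G := fun t => {x | ∀ u : Set G, MeasurableSet u →
      μ.map (· * x) u ≤ μ.map (· * t) u + ε ∧ μ.map (· * t) u ≤ μ.map (· * x) u + ε}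
      with hAdef
    obtain ⟨k₀, k₀comp, k₀mem⟩ := exists_compact_mem_nhds (1 : G)
    set U : Set G := interior k₀ with hUdef
    have hUopen : IsOpen U := isOpen_interior
    have hUne : U.Nonempty := ⟨1, mem_interior_iff_mem_nhds.mpr k₀mem⟩
    have hU0 : lam U ≠ 0 := hUopen.measure_ne_zero lam hUne
    -- choose a translation parameter whose approximation class is not negligible
    obtain ⟨t, htT, hm⟩ : ∃ t ∈ T, lam (A t ∩ U) ≠ 0 := by
      by_contra h
      push_neg at h
      have hcov : U ⊆ ⋃ t ∈ T, (A t ∩ U) := by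
        intro x hx
        obtain ⟨t, htT, ht⟩ := hT x ε hε
        exact mem_biUnion htT ⟨ht, hx⟩
      exact hU0 (measure_mono_null hcov
        ((measure_biUnion_null_iff hTc).mpr fun t ht => h t ht))
    obtain ⟨y, hyA, hyU⟩ : ∃ y, y ∈ A t ∧ y ∈ U := by
      rcases Set.eq_empty_or_nonempty (A t ∩ U) with he | ⟨y, hy⟩
      · exact absurd (by rw [he]; exact measure_empty) hm
      · exact ⟨y, hy.1, hy.2⟩
    -- the right translate of K by y
    set s : Set G := (fun z => z * y⁻¹) ⁻¹' K with hsdef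
    have hs_eq : s = (fun z => z * y) '' K := by
      ext z
      constructor
      · intro hz
        exact ⟨z * y⁻¹, hz, by simp⟩
      · rintro ⟨w, hw, rfl⟩
        simpa [hsdef] using hw
    have hs_comp : IsCompact s := hs_eq ▸ hKcomp.image (continuous_mul_right y)
    have hs_meas : MeasurableSet s := hs_comp.isClosed.measurableSet
    have hs_closure : IsCompact (closure K) := by
      rw [hKcomp.isClosed.closure_eq]; exact hKcomp
    -- the translate is still lam-null (uniqueness of Haar measure on compact-closure sets)
    have h_lam_s : lam s = 0 := by
      have h1 := Measure.measure_isMulInvariant_eq_smul_of_isCompact_closure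
        (lam.map (· * y⁻¹)) lam hs_closure
      rw [hlamK, smul_zero] at h1
      rwa [Measure.map_apply (continuous_mul_right y⁻¹).measurable hKmeas] at h1
    have hχs : χ s = 0 := by
      have hs_closure' : IsCompact (closure s) := by
        rw [hs_comp.isClosed.closure_eq]; exact hs_comp
      have h1 := Measure.measure_isMulInvariant_eq_smul_of_isCompact_closure
        χ lam hs_closure'
      rw [h_lam_s, smul_zero] at h1
      exact h1
    -- quantities
    set η : ℝ := ε.toReal with hηdef
    have hη : 0 < η := ENNReal.toReal_pos hε.ne' hεtop
    set m : ENNReal := lam (A t ∩ U) with hmdef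
    set δ₀ : ENNReal := min m 1 with hδdef
    have hδ0 : 0 < δ₀ := lt_min (pos_iff_ne_zero.mpr hm) one_pos
    have hδtop : δ₀ ≠ ⊤ := ((min_le_right _ _).trans_lt ENNReal.one_lt_top).ne
    set target : ENNReal := ENNReal.ofReal η * δ₀ with htargetdef
    have htarget0 : target ≠ 0 :=
      mul_ne_zero (ENNReal.ofReal_pos.mpr hη).ne' hδ0.ne'
    have htargettop : target ≠ ⊤ := ENNReal.mul_ne_top ENNReal.ofReal_ne_top hδtop
    set c : NNReal := Measure.haarScalarFactor lam χ with hcdef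
    set D : ENNReal := ((c : ENNReal) + 1) * (μ Set.univ + 1) with hDdef
    have hDtop : D ≠ ⊤ :=
      ENNReal.mul_ne_top (by simp) (ENNReal.add_ne_top.mpr ⟨measure_ne_top μ _, by simp⟩)
    set ε₀ : ENNReal := target / 2 / D with hε₀def
    have hε₀pos : 0 < ε₀ :=
      ENNReal.div_pos (ENNReal.div_pos htarget0 (by norm_num)).ne' hDtop
    -- a small open neighborhood of s
    obtain ⟨V, hsV, hVopen, hχV⟩ : ∃ V ⊇ s, IsOpen V ∧ χ V < ε₀ :=
      Set.exists_isOpen_lt_of_lt s ε₀ (by rw [hχs]; exact hε₀pos)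
    have hlamV : lam V ≤ (c : ENNReal) * ε₀ := by
      have h := Measure.measure_isHaarMeasure_eq_smul_of_isOpen lam χ hVopen
      rw [h, ENNReal.smul_def, smul_eq_mul]
      exact mul_le_mul_right hχV.le _
    -- Urysohn functions
    obtain ⟨φ, hφs, hφV, hφcomp, hφrange⟩ :=
      exists_continuous_one_zero_of_isCompact hs_comp hVopen.isClosed_compl
        (Set.disjoint_compl_right_iff_subset.mpr hsV)
    have hUclos_comp : IsCompact (closure U) :=
      k₀comp.closure_of_subset interior_subset
    obtain ⟨ψ, hψ1, -, hψcomp, hψrange⟩ :=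
      exists_continuous_one_zero_of_isCompact hUclos_comp isClosed_empty
        (Set.disjoint_empty _)
    -- the convolution-type function
    set F : G → ℝ := fun x => ∫ z, φ (z * x) ∂μ with hFdef
    have hφz_comp : ∀ x : G, HasCompactSupport fun z : G => φ (z * x) := by
      intro x
      exact hφcomp.comp_homeomorph (Homeomorph.mulRight x)
    have hφz_int : ∀ x : G, Integrable (fun z : G => φ (z * x)) μ :=
      fun x => (φ.continuous.comp (continuous_mul_right x)).integrable_of_hasCompactSupport
        (hφz_comp x)
    have hFnonneg : ∀ x, 0 ≤ F x := fun x => integral_nonneg fun z => (hφrange _).1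
    have hFle : ∀ x, F x ≤ (μ Set.univ).toReal := by
      intro x
      calc F x ≤ ∫ _, (1 : ℝ) ∂μ := by
            apply integral_mono_of_nonneg (Filter.Eventually.of_forall fun z => (hφrange _).1)
              (integrable_const _) (Filter.Eventually.of_forall fun z => (hφrange _).2)
        _ = (μ Set.univ).toReal := by simp; rfl
    -- continuity of F
    have hFcont : Continuous F := by
      haveI : IsFiniteMeasure μ.inv := by
        constructor
        rw [Measure.inv_apply, Set.inv_univ]
        exact measure_lt_top μ _
      have h1 : Continuous fun x => ∫ w, φ (w⁻¹ * x) ∂μ.inv :=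
        continuous_integral_apply_inv_mul φ.continuous hφcomp
      have h2 : ∀ x, (∫ w, φ (w⁻¹ * x) ∂μ.inv) = F x := by
        intro x
        have hcg : Continuous fun w : G => φ (w⁻¹ * x) :=
          φ.continuous.comp ((continuous_inv).mul continuous_const)
        have hμinv : μ.inv = Measure.map (fun z : G => z⁻¹) μ := rfl
        rw [hμinv, integral_map measurable_inv.aemeasurable hcg.aestronglyMeasurable]
        simp [hFdef]
      simpa only [h2] using h1
    -- the restricted measure
    set ρ : Measure G := lam.restrict U with hρdef
    have hρ_apply : ∀ W : Set G, ρ W = lam (W ∩ U) := fun W =>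
      Measure.restrict_apply' hUopen.measurableSet
    haveI : IsFiniteMeasure ρ := by
      constructor
      rw [hρdef, Measure.restrict_apply_univ]
      exact (measure_mono interior_subset).trans_lt k₀comp.measure_lt_top
    have hF_int_ρ : Integrable F ρ := by
      have h1 : IntegrableOn F k₀ lam :=
        hFcont.continuousOn.integrableOn_compact k₀comp
      exact h1.mono_set interior_subset
    -- Fubini bound : ∫ F dρ ≤ (∫ φ dlam) * (μ univ).toReal
    set Iφ : ℝ := ∫ x, φ x ∂lam with hIφdef
    have hIφ_nonneg : 0 ≤ Iφ := integral_nonneg fun x => (hφrange _).1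
    have hψF_int : Integrable (fun x => ψ x * F x) lam :=
      (ψ.continuous.mul hFcont).integrable_of_hasCompactSupport hψcomp.mul_right
    -- Fubini swap
    have hswap_cont : Continuous (Function.uncurry fun x z : G => ψ x * φ (z * x)) :=
      (ψ.continuous.comp continuous_fst).mul
        (φ.continuous.comp (continuous_snd.mul continuous_fst))
    have hswap_supp : HasCompactSupport (Function.uncurry fun x z : G => ψ x * φ (z * x)) := by
      apply HasCompactSupport.intro
        (K := tsupport ψ ×ˢ (tsupport φ * (tsupport ψ)⁻¹))
        (IsCompact.prod hψcomp (IsCompact.mul hφcomp hψcomp.inv))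
      rintro ⟨x, z⟩ hp
      show ψ x * φ (z * x) = 0
      by_cases h1 : x ∈ tsupport ψ
      · have h2 : z ∉ tsupport φ * (tsupport ψ)⁻¹ := fun h2 =>
          hp (Set.mk_mem_prod h1 h2)
        have h3 : z * x ∉ tsupport φ := by
          intro h3
          exact h2 (by simpa using Set.mul_mem_mul h3 (Set.inv_mem_inv.mpr h1))
        rw [image_eq_zero_of_notMem_tsupport h3, mul_zero]
      · rw [image_eq_zero_of_notMem_tsupport h1, zero_mul]
    have hswap : (∫ x, ψ x * F x ∂lam) = ∫ z, ∫ x, ψ x * φ (z * x) ∂lam ∂μ := by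
      have heq : (fun x => ψ x * F x) = fun x => ∫ z, ψ x * φ (z * x) ∂μ := by
        funext x
        exact (integral_const_mul _ _).symm
      rw [heq]
      exact integral_integral_swap_of_hasCompactSupport hswap_cont hswap_supp
    have hinner_le : ∀ z : G, (∫ x, ψ x * φ (z * x) ∂lam) ≤ Iφ := by
      intro z
      have hφzx_int : Integrable (fun x : G => φ (z * x)) lam :=
        (φ.continuous.comp (continuous_mul_left z)).integrable_of_hasCompactSupport
          (hφcomp.comp_homeomorph (Homeomorph.mulLeft z))
      calc (∫ x, ψ x * φ (z * x) ∂lam) ≤ ∫ x, φ (z * x) ∂lam := by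
            apply integral_mono_of_nonneg
              (Filter.Eventually.of_forall fun x => mul_nonneg (hψrange _).1 (hφrange _).1)
              hφzx_int
              (Filter.Eventually.of_forall fun x =>
                mul_le_of_le_one_left (hφrange _).1 (hψrange _).2)
        _ = Iφ := integral_mul_left_eq_self _ z
    have houter : (∫ x, ψ x * F x ∂lam) ≤ Iφ * (μ Set.univ).toReal := by
      rw [hswap]
      calc (∫ z, ∫ x, ψ x * φ (z * x) ∂lam ∂μ) ≤ ∫ _z, Iφ ∂μ := by
            apply integral_mono_of_nonneg
              (Filter.Eventually.of_forall fun z => integral_nonneg fun x =>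
                mul_nonneg (hψrange _).1 (hφrange _).1)
              (integrable_const _) (Filter.Eventually.of_forall hinner_le)
        _ = Iφ * (μ Set.univ).toReal := by
            rw [integral_const, smul_eq_mul, mul_comm]; rfl
    have hρint_le : (∫ x, F x ∂ρ) ≤ Iφ * (μ Set.univ).toReal := by
      have h3 : (∫ x in U, F x ∂lam) = ∫ x in U, ψ x * F x ∂lam := by
        apply setIntegral_congr_fun hUopen.measurableSet
        intro x hx
        simp [hψ1 (subset_closure hx)]
      have h4 : (∫ x in U, ψ x * F x ∂lam) ≤ ∫ x, ψ x * F x ∂lam :=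
        setIntegral_le_integral hψF_int
          (Filter.Eventually.of_forall fun x => mul_nonneg (hψrange _).1 (hFnonneg x))
      calc (∫ x, F x ∂ρ) = ∫ x in U, F x ∂lam := rfl
        _ = ∫ x in U, ψ x * F x ∂lam := h3
        _ ≤ ∫ x, ψ x * F x ∂lam := h4
        _ ≤ Iφ * (μ Set.univ).toReal := houter
    -- find a good x in A t ∩ U via a Markov inequality argument
    obtain ⟨x, hxA, hxU, hFx⟩ : ∃ x, x ∈ A t ∧ x ∈ U ∧ F x < η := by
      by_contra hcon
      push_neg at hcon
      set W : Set G := {x | ENNReal.ofReal η ≤ ENNReal.ofReal (F x)} with hW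
      have hsub : A t ∩ U ⊆ W := by
        rintro x ⟨hx1, hx2⟩
        exact ENNReal.ofReal_le_ofReal (hcon x hx1 hx2)
      have hchain : target ≤ target / 2 := by
        calc target = ENNReal.ofReal η * δ₀ := rfl
          _ ≤ ENNReal.ofReal η * ρ W := by
              apply mul_le_mul_right
              calc δ₀ ≤ m := min_le_left _ _
                _ ≤ lam (W ∩ U) := measure_mono fun x hx => ⟨hsub hx, hx.2⟩
                _ = ρ W := (hρ_apply W).symm
          _ ≤ ∫⁻ x, ENNReal.ofReal (F x) ∂ρ :=
              mul_meas_ge_le_lintegral₀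
                ((ENNReal.continuous_ofReal.comp hFcont).measurable.aemeasurable) _
          _ = ENNReal.ofReal (∫ x, F x ∂ρ) :=
              (ofReal_integral_eq_lintegral_ofReal hF_int_ρ
                (Filter.Eventually.of_forall hFnonneg)).symm
          _ ≤ ENNReal.ofReal (Iφ * (μ Set.univ).toReal) :=
              ENNReal.ofReal_le_ofReal hρint_le
          _ = ENNReal.ofReal Iφ * ENNReal.ofReal (μ Set.univ).toReal :=
              ENNReal.ofReal_mul hIφ_nonneg
          _ ≤ lam V * μ Set.univ := by
              apply mul_le_mul'
              · exact integral_le_measure (fun x _ => (hφrange _).2)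
                  (fun x hx => (hφV hx).le)
              · rw [ENNReal.ofReal_toReal (measure_ne_top μ _)]
          _ ≤ ((c : ENNReal) * ε₀) * μ Set.univ := mul_le_mul_left hlamV _
          _ ≤ D * ε₀ := by
              rw [hDdef]
              calc (c : ENNReal) * ε₀ * μ Set.univ
                  = ((c : ENNReal) * μ Set.univ) * ε₀ := by ring
                _ ≤ (((c : ENNReal) + 1) * (μ Set.univ + 1)) * ε₀ :=
                    mul_le_mul_left (mul_le_mul' le_self_add le_self_add) _
          _ ≤ target / 2 := by
              rw [hε₀def]
              exact ENNReal.mul_div_le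
      exact (ENNReal.half_lt_self htarget0 htargettop).not_ge hchain
    -- final chain of inequalities
    have h1 := (hyA s hs_meas).1
    have h2 := (hxA s hs_meas).2
    have hy_eval : μ.map (· * y) s = μ K := by
      rw [Measure.map_apply (continuous_mul_right y).measurable hs_meas]
      congr 1
      ext z
      simp [hsdef]
    have hx_eval : μ.map (· * x) s ≤ ε := by
      rw [Measure.map_apply (continuous_mul_right x).measurable hs_meas]
      calc μ ((· * x) ⁻¹' s) ≤ ENNReal.ofReal (F x) := by
            apply (hφz_int x).measure_le_integral
              (Filter.Eventually.of_forall fun z => (hφrange _).1)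
            intro z hz
            have := hφs hz
            simp only [Pi.one_apply] at this
            rw [this]
        _ ≤ ENNReal.ofReal η := ENNReal.ofReal_le_ofReal hFx.le
        _ = ε := by rw [hηdef, ENNReal.ofReal_toReal hεtop]
    calc μ K = μ.map (· * y) s := hy_eval.symm
      _ ≤ μ.map (· * t) s + ε := h1
      _ ≤ (μ.map (· * x) s + ε) + ε := add_le_add_left h2 ε
      _ ≤ (ε + ε) + ε := add_le_add_left (add_le_add_left hx_eval ε) ε
      _ = 3 * ε := by ring
  -- conclude that μ K = 0
  by_contra hμK
  have h4 : μ K / 4 ≠ ⊤ := (ENNReal.div_lt_top (measure_ne_top μ K) (by norm_num)).ne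
  have hpos : 0 < μ K / 4 := ENNReal.div_pos hμK (by norm_num)
  have hbound := hcore (μ K / 4) hpos h4
  have heq : 4 * (μ K / 4) = μ K := ENNReal.mul_div_cancel' (by norm_num) (by norm_num)
  have hlt : 3 * (μ K / 4) < 4 * (μ K / 4) := by
    rw [ENNReal.mul_lt_mul_iff_left hpos.ne' h4]
    norm_num
  rw [heq] at hlt
  exact absurd hbound (not_le.mpr hlt)

/-- If `μ` is a nonzero bounded Radon measure on a locally compact group `G`
whose orbit `{μ ∗ δ_x : x ∈ G}` under right translation is norm-separable (in total variation),
then `μ` is absolutely continuous with respect to a left Haar measure `lam`.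
Norm-separability of the orbit is expressed by a countable set `T ⊆ G` of translation
parameters approximating every translate uniformly over measurable sets (this is the total
variation distance for nonnegative measures). -/
theorem stmt_3 {G : Type*} [Group G] [TopologicalSpace G] [IsTopologicalGroup G]
    [LocallyCompactSpace G] [T2Space G] [MeasurableSpace G] [BorelSpace G]
    (lam : Measure G) [lam.IsHaarMeasure]
    (μ : Measure G) [IsFiniteMeasure μ] [μ.Regular] (hμ : μ ≠ 0)
    (hsep : ∃ T : Set G, T.Countable ∧ ∀ x : G, ∀ ε : ENNReal, 0 < ε →
      ∃ t ∈ T, ∀ s : Set G, MeasurableSet s →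
        μ.map (· * x) s ≤ μ.map (· * t) s + ε ∧ μ.map (· * t) s ≤ μ.map (· * x) s + ε) :
    μ ≪ lam := by
  refine Measure.AbsolutelyContinuous.mk fun B hB hlamB => ?_
  by_contra hμB
  obtain ⟨K, hKB, hKcomp, hKlt⟩ :=
    hB.exists_isCompact_lt_add (μ := μ) (measure_ne_top μ B) hμB
  have hμK : μ K ≠ 0 := by
    intro h
    rw [h, zero_add] at hKlt
    exact absurd hKlt (lt_irrefl _)
  exact hμK (stmt_3_core lam μ hsep hKcomp (measure_mono_null hKB hlamB))
end

section
/- Let M be a normed space (of measures) and {D_γ : γ ∈ Γ} a family of subspaces of the space of bounded Radon measures on a locally compact group G such that any two measures from distinct D_γ are mutually singular. If for each γ a functional h_γ in the closed unit ball of D_γ* is given, then there exists a functional h in the closed unit ball of M(G)* that agrees with h_γ on D_γ for every γ ∈ Γ. -/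
open MeasureTheory Measure VectorMeasure

namespace Stmt4Aux

variable {α : Type*} [MeasurableSpace α]

/-- Hahn-type representation of the total variation. -/
lemma hahn (μ : SignedMeasure α) :
    ∃ i, MeasurableSet i ∧ (∀ t, MeasurableSet t → t ⊆ i → 0 ≤ μ t) ∧
      (∀ t, MeasurableSet t → t ⊆ iᶜ → μ t ≤ 0) ∧
      ∀ k, MeasurableSet k →
        μ.totalVariation k = ENNReal.ofReal (μ (i ∩ k)) + ENNReal.ofReal (-(μ (iᶜ ∩ k))) := by
  obtain ⟨i, hi₁, hi₂, hi₃, hpos, hneg⟩ := μ.toJordanDecomposition_spec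
  have hposval : ∀ t, MeasurableSet t → t ⊆ i → 0 ≤ μ t := fun t ht hts =>
    nonneg_of_zero_le_restrict μ (zero_le_restrict_subset μ hi₁ hts hi₂)
  have hnegval : ∀ t, MeasurableSet t → t ⊆ iᶜ → μ t ≤ 0 := fun t ht hts =>
    nonpos_of_restrict_le_zero μ (restrict_le_zero_subset μ hi₁.compl hts hi₃)
  refine ⟨i, hi₁, hposval, hnegval, fun k hk => ?_⟩
  rw [SignedMeasure.totalVariation, Measure.add_apply, hpos, hneg,
    SignedMeasure.toMeasureOfZeroLE_apply _ hi₂ hi₁ hk,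
    SignedMeasure.toMeasureOfLEZero_apply _ hi₃ hi₁.compl hk,
    ENNReal.ofReal_eq_coe_nnreal (hposval _ (hi₁.inter hk) Set.inter_subset_left),
    ENNReal.ofReal_eq_coe_nnreal
      (neg_nonneg.mpr (hnegval _ (hi₁.compl.inter hk) Set.inter_subset_left))]

lemma tv_zero_of (μ : SignedMeasure α) {s : Set α} (hs : MeasurableSet s)
    (h : ∀ t, MeasurableSet t → t ⊆ s → μ t = 0) : μ.totalVariation s = 0 := by
  obtain ⟨i, hi, _, _, hrep⟩ := hahn μ
  rw [hrep s hs, h _ (hi.inter hs) Set.inter_subset_right,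
    h _ (hi.compl.inter hs) Set.inter_subset_right]
  simp

lemma tv_abscont (a b : SignedMeasure α) :
    (a + b).totalVariation ≪ a.totalVariation + b.totalVariation := by
  refine Measure.AbsolutelyContinuous.mk fun s hs h0 => ?_
  rw [Measure.add_apply, add_eq_zero] at h0
  refine tv_zero_of _ hs fun t ht hts => ?_
  have ha : a t = 0 := a.null_of_totalVariation_zero (measure_mono_null hts h0.1)
  have hb : b t = 0 := b.null_of_totalVariation_zero (measure_mono_null hts h0.2)
  rw [VectorMeasure.add_apply, ha, hb, add_zero]

lemma sing_add {a b : SignedMeasure α} {m : Measure α}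
    (ha : a.totalVariation ⟂ₘ m) (hb : b.totalVariation ⟂ₘ m) :
    (a + b).totalVariation ⟂ₘ m :=
  (ha.add_left hb).mono_ac (tv_abscont a b) .rfl

lemma eq_zero_of_self_sing {μ : SignedMeasure α}
    (h : μ.totalVariation ⟂ₘ μ.totalVariation) : μ = 0 := by
  obtain ⟨s, hs, h1, h2⟩ := h
  ext k hk
  have hk1 : μ (k ∩ s) = 0 :=
    μ.null_of_totalVariation_zero (measure_mono_null Set.inter_subset_right h1)
  have hk2 : μ (k ∩ sᶜ) = 0 :=
    μ.null_of_totalVariation_zero (measure_mono_null Set.inter_subset_right h2)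
  have : μ k = μ (k ∩ s) + μ (k ∩ sᶜ) := by
    rw [← μ.of_union (Disjoint.mono Set.inter_subset_right Set.inter_subset_right
      disjoint_compl_right) (hk.inter hs) (hk.inter hs.compl),
      Set.inter_union_compl]
  simp [this, hk1, hk2]

lemma tv_ne_top (μ : SignedMeasure α) (s : Set α) : μ.totalVariation s ≠ ⊤ := by
  have : IsFiniteMeasure μ.totalVariation := by
    rw [SignedMeasure.totalVariation]; infer_instance
  exact measure_ne_top _ s

/-- abbreviation for the total variation norm -/
noncomputable def qv (μ : SignedMeasure α) : ℝ := (μ.totalVariation Set.univ).toReal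

lemma apply_compl (μ : SignedMeasure α) {A : Set α} (hA : MeasurableSet A) :
    μ Aᶜ = μ Set.univ - μ A := by
  have := μ.of_union (disjoint_compl_right (a := A)) hA hA.compl
  rw [Set.union_compl_self] at this
  linarith

lemma qv_repr (μ : SignedMeasure α) :
    ∃ i, MeasurableSet i ∧ (∀ t, MeasurableSet t → t ⊆ i → 0 ≤ μ t) ∧
      (∀ t, MeasurableSet t → t ⊆ iᶜ → μ t ≤ 0) ∧ qv μ = μ i - μ iᶜ := by
  obtain ⟨i, hi, hpos, hneg, hrep⟩ := hahn μ
  refine ⟨i, hi, hpos, hneg, ?_⟩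
  rw [qv, hrep _ MeasurableSet.univ, Set.inter_univ, Set.inter_univ,
    ENNReal.toReal_add ENNReal.ofReal_ne_top ENNReal.ofReal_ne_top,
    ENNReal.toReal_ofReal (hpos _ hi subset_rfl),
    ENNReal.toReal_ofReal (neg_nonneg.mpr (hneg _ hi.compl subset_rfl))]
  ring

lemma le_qv (μ : SignedMeasure α) {A : Set α} (hA : MeasurableSet A) :
    μ A - μ Aᶜ ≤ qv μ := by
  obtain ⟨i, hi, hpos, hneg, hval⟩ := qv_repr μ
  have split : ∀ B : Set α, MeasurableSet B → μ B = μ (i ∩ B) + μ (iᶜ ∩ B) := by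
    intro B hB
    rw [← μ.of_union (Disjoint.mono Set.inter_subset_left Set.inter_subset_left
      disjoint_compl_right) (hi.inter hB) (hi.compl.inter hB), ← Set.union_inter_distrib_right,
      Set.union_compl_self, Set.univ_inter]
  have e1 := split A hA
  have e2 := split Aᶜ hA.compl
  have e3 := split i hi
  have e4 := split iᶜ hi.compl
  have p1 : 0 ≤ μ (i ∩ Aᶜ) := hpos _ (hi.inter hA.compl) Set.inter_subset_left
  have p2 : μ (iᶜ ∩ A) ≤ 0 := hneg _ (hi.compl.inter hA) Set.inter_subset_left
  have q1 : μ (i ∩ i) = μ i := by rw [Set.inter_self]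
  have q2 : μ (iᶜ ∩ i) = 0 := by
    have := hpos _ (hi.compl.inter hi) Set.inter_subset_right
    have := hneg _ (hi.compl.inter hi) Set.inter_subset_left
    linarith
  have q3 : μ (i ∩ iᶜ) = 0 := by
    have := hpos _ (hi.inter hi.compl) Set.inter_subset_left
    have := hneg _ (hi.inter hi.compl) Set.inter_subset_right
    linarith
  have q4 : μ (iᶜ ∩ iᶜ) = μ iᶜ := by rw [Set.inter_self]
  have c1 : μ (i ∩ Aᶜ) = μ i - μ (i ∩ A) := by
    have : μ i = μ (i ∩ A) + μ (i ∩ Aᶜ) := by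
      rw [← μ.of_union (Disjoint.mono Set.inter_subset_right Set.inter_subset_right
        disjoint_compl_right) (hi.inter hA) (hi.inter hA.compl), ← Set.inter_union_distrib_left,
        Set.union_compl_self, Set.inter_univ]
    linarith
  have c2 : μ (iᶜ ∩ Aᶜ) = μ iᶜ - μ (iᶜ ∩ A) := by
    have : μ iᶜ = μ (iᶜ ∩ A) + μ (iᶜ ∩ Aᶜ) := by
      rw [← μ.of_union (Disjoint.mono Set.inter_subset_right Set.inter_subset_right
        disjoint_compl_right) (hi.compl.inter hA) (hi.compl.inter hA.compl),
        ← Set.inter_union_distrib_left, Set.union_compl_self, Set.inter_univ]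
    linarith
  linarith

lemma qv_add_le (μ ν : SignedMeasure α) : qv (μ + ν) ≤ qv μ + qv ν := by
  obtain ⟨i, hi, _, _, hval⟩ := qv_repr (μ + ν)
  have h1 := le_qv μ hi
  have h2 := le_qv ν hi
  have e1 : (μ + ν) i = μ i + ν i := rfl
  have e2 : (μ + ν) iᶜ = μ iᶜ + ν iᶜ := rfl
  linarith

lemma qv_superadd {μ ν : SignedMeasure α}
    (hsing : μ.totalVariation ⟂ₘ ν.totalVariation) : qv μ + qv ν ≤ qv (μ + ν) := by
  obtain ⟨A, hA, hμA, hνA⟩ := hsing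
  obtain ⟨P, hP, _, _, hPval⟩ := qv_repr μ
  obtain ⟨Q, hQ, _, _, hQval⟩ := qv_repr ν
  have hμ0 : ∀ t, MeasurableSet t → t ⊆ A → μ t = 0 := fun t _ hts =>
    μ.null_of_totalVariation_zero (measure_mono_null hts hμA)
  have hν0 : ∀ t, MeasurableSet t → t ⊆ Aᶜ → ν t = 0 := fun t _ hts =>
    ν.null_of_totalVariation_zero (measure_mono_null hts hνA)
  set R : Set α := P ∩ Aᶜ ∪ Q ∩ A with hR
  have hRm : MeasurableSet R := (hP.inter hA.compl).union (hQ.inter hA)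
  have hdisj : Disjoint (P ∩ Aᶜ) (Q ∩ A) :=
    Disjoint.mono Set.inter_subset_right Set.inter_subset_right disjoint_compl_left
  have hμR : μ R = μ P := by
    rw [hR, μ.of_union hdisj (hP.inter hA.compl) (hQ.inter hA),
      hμ0 _ (hQ.inter hA) Set.inter_subset_right, add_zero]
    have : μ P = μ (P ∩ A) + μ (P ∩ Aᶜ) := by
      rw [← μ.of_union (Disjoint.mono Set.inter_subset_right Set.inter_subset_right
        disjoint_compl_right) (hP.inter hA) (hP.inter hA.compl), ← Set.inter_union_distrib_left,
        Set.union_compl_self, Set.inter_univ]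
    rw [hμ0 _ (hP.inter hA) Set.inter_subset_right, zero_add] at this
    exact this.symm
  have hνR : ν R = ν Q := by
    rw [hR, ν.of_union hdisj (hP.inter hA.compl) (hQ.inter hA),
      hν0 _ (hP.inter hA.compl) Set.inter_subset_right, zero_add]
    have : ν Q = ν (Q ∩ A) + ν (Q ∩ Aᶜ) := by
      rw [← ν.of_union (Disjoint.mono Set.inter_subset_right Set.inter_subset_right
        disjoint_compl_right) (hQ.inter hA) (hQ.inter hA.compl), ← Set.inter_union_distrib_left,
        Set.union_compl_self, Set.inter_univ]
    rw [hν0 _ (hQ.inter hA.compl) Set.inter_subset_right, add_zero] at this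
    exact this.symm
  have hμRc := apply_compl μ hRm
  have hμPc := apply_compl μ hP
  have hνRc := apply_compl ν hRm
  have hνQc := apply_compl ν hQ
  have key := le_qv (μ + ν) hRm
  have e1 : (μ + ν) R = μ R + ν R := rfl
  have e2 : (μ + ν) Rᶜ = μ Rᶜ + ν Rᶜ := rfl
  linarith

lemma qv_eq_of_sing {μ ν : SignedMeasure α}
    (hsing : μ.totalVariation ⟂ₘ ν.totalVariation) : qv (μ + ν) = qv μ + qv ν :=
  le_antisymm (qv_add_le μ ν) (qv_superadd hsing)

lemma qv_smul (μ : SignedMeasure α) {c : ℝ} (hc : 0 < c) : qv (c • μ) = c * qv μ := by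
  refine le_antisymm ?_ ?_
  · obtain ⟨A, hA, _, _, hval⟩ := qv_repr (c • μ)
    have h1 := le_qv μ hA
    have e1 : (c • μ) A = c * μ A := rfl
    have e2 : (c • μ) Aᶜ = c * μ Aᶜ := rfl
    nlinarith
  · obtain ⟨B, hB, _, _, hval⟩ := qv_repr μ
    have h1 := le_qv (c • μ) hB
    have e1 : (c • μ) B = c * μ B := rfl
    have e2 : (c • μ) Bᶜ = c * μ Bᶜ := rfl
    nlinarith

lemma qv_neg (μ : SignedMeasure α) : qv (-μ) = qv μ := by
  rw [qv, qv, μ.totalVariation_neg]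

lemma qv_zero : qv (0 : SignedMeasure α) = 0 := by
  rw [qv, SignedMeasure.totalVariation_zero]; simp

end Stmt4Aux
set_option maxHeartbeats 1000000 in
set_option synthInstance.maxHeartbeats 1000000 in
open DirectSum in
open Stmt4Aux in
/-- Let `{D γ}` be a family of subspaces of the space `M(G)` of bounded
(signed) Radon measures on a locally compact group `G` such that measures from distinct
subspaces are mutually singular. Given for each `γ` a functional `h γ` in the closed unit
ball of `(D γ)*` (i.e. a linear functional bounded by the total variation norm), there is a
functional `H` in the closed unit ball of `M(G)*` agreeing with `h γ` on `D γ` for all `γ`. -/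
theorem stmt_4 {G : Type*} [Group G] [TopologicalSpace G] [IsTopologicalGroup G]
    [LocallyCompactSpace G] [T2Space G] [MeasurableSpace G] [BorelSpace G]
    {Γ : Type*} (D : Γ → Submodule ℝ (SignedMeasure G))
    (hperp : ∀ γ γ', γ ≠ γ' → ∀ μ ∈ D γ, ∀ ν ∈ D γ',
      μ.totalVariation ⟂ₘ ν.totalVariation)
    (h : ∀ γ, D γ →ₗ[ℝ] ℝ)
    (hb : ∀ γ (μ : D γ),
      |h γ μ| ≤ ((μ : SignedMeasure G).totalVariation Set.univ).toReal) :
    ∃ H : SignedMeasure G →ₗ[ℝ] ℝ,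
      (∀ μ : SignedMeasure G, |H μ| ≤ (μ.totalVariation Set.univ).toReal) ∧
      ∀ γ (μ : D γ), H μ = h γ μ := by
  classical
  set S : Submodule ℝ (SignedMeasure G) := ⨆ γ, D γ with hSdef
  set D' : Γ → Submodule ℝ S := fun γ => (D γ).comap S.subtype with hD'def
  -- singularity over suprema
  have sing_iSup : ∀ (E : Γ → Submodule ℝ (SignedMeasure G)) (m : Measure G),
      (∀ i, ∀ ν ∈ E i, SignedMeasure.totalVariation ν ⟂ₘ m) →
      ∀ x ∈ ⨆ i, E i, SignedMeasure.totalVariation x ⟂ₘ m := by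
    intro E m hm x hx
    refine Submodule.iSup_induction E (motive := fun y => SignedMeasure.totalVariation y ⟂ₘ m)
      hx hm ?_ ?_
    · show SignedMeasure.totalVariation 0 ⟂ₘ m
      rw [SignedMeasure.totalVariation_zero]; exact Measure.MutuallySingular.zero_left
    · intro a b ha hb'; exact sing_add ha hb'
  -- independence of the family `D'`
  have hindep : iSupIndep D' := by
    intro γ
    rw [disjoint_iff_inf_le]
    intro x hx
    obtain ⟨hx1, hx2⟩ := Submodule.mem_inf.mp hx
    have hx1' : (x : SignedMeasure G) ∈ D γ := hx1
    have hx2' : (x : SignedMeasure G) ∈ ⨆ (j) (_ : j ≠ γ), D j := by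
      have : (x : SignedMeasure G) ∈ Submodule.map S.subtype (⨆ (j) (_ : j ≠ γ), D' j) :=
        Submodule.mem_map_of_mem hx2
      rw [Submodule.map_iSup] at this
      have hle : (⨆ j, Submodule.map S.subtype (⨆ (_ : j ≠ γ), D' j)) ≤
          ⨆ (j) (_ : j ≠ γ), D j := by
        refine iSup_mono fun j => ?_
        rw [Submodule.map_iSup]
        refine iSup_mono fun hj => ?_
        rw [hD'def, Submodule.map_comap_subtype]
        exact inf_le_right
      exact hle this
    have hsing : SignedMeasure.totalVariation (x : SignedMeasure G) ⟂ₘ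
        SignedMeasure.totalVariation (x : SignedMeasure G) := by
      refine sing_iSup (fun j => ⨆ (_ : j ≠ γ), D j) _ ?_ _ hx2'
      intro j ν hν
      replace hν : ν ∈ ⨆ (_ : j ≠ γ), D j := hν
      by_cases hj : j ≠ γ
      · have hb' : (⨆ (_ : j ≠ γ), D j) = D j := by simp [hj]
        rw [hb'] at hν
        exact hperp j γ hj ν hν _ hx1'
      · have hb' : (⨆ (_ : j ≠ γ), D j) = ⊥ := by simp [hj]
        rw [hb'] at hν
        rw [(Submodule.mem_bot _).mp hν, SignedMeasure.totalVariation_zero]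
        exact Measure.MutuallySingular.zero_left
    have : (x : SignedMeasure G) = 0 := eq_zero_of_self_sing hsing
    exact (Submodule.mem_bot _).mpr (Subtype.ext this)
  -- the `D'` span `S`
  have hsup : ⨆ γ, D' γ = ⊤ := by
    rw [eq_top_iff]
    rintro ⟨x, hx⟩ -
    refine Submodule.iSup_induction' (p := D)
      (motive := fun y hy => (⟨y, hy⟩ : S) ∈ ⨆ γ, D' γ) ?_ ?_ ?_ hx
    · intro γ y hy
      exact Submodule.mem_iSup_of_mem γ (by exact hy)
    · exact Submodule.zero_mem _
    · intro a b ha' hb' iha ihb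
      exact Submodule.add_mem _ iha ihb
  have hinternal : DirectSum.IsInternal D' :=
    (@DirectSum.isInternal_submodule_of_iSupIndep_of_iSup_eq_top ℝ _ Γ _ S _ _ D' · hsup) hindep
  set e : (⨁ γ, D' γ) ≃ₗ[ℝ] S := LinearEquiv.ofBijective (DirectSum.coeLinearMap D') hinternal
    with hedef
  -- the functionals on `D' γ`
  set g : ∀ γ, D' γ →ₗ[ℝ] ℝ := fun γ => (h γ).comp
    (LinearMap.codRestrict (D γ) (S.subtype.comp (D' γ).subtype) (fun x => x.2)) with hgdef
  set T : (⨁ γ, D' γ) →ₗ[ℝ] ℝ := DirectSum.toModule ℝ Γ ℝ g with hTdef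
  -- key estimate by induction on the direct sum
  have key : ∀ y : ⨁ γ, D' γ,
      |T y| ≤ qv ((DirectSum.coeLinearMap D' y : S) : SignedMeasure G) ∧
      ∀ γ₀, y γ₀ = 0 → ∀ μ ∈ D γ₀, SignedMeasure.totalVariation μ ⟂ₘ
        SignedMeasure.totalVariation ((DirectSum.coeLinearMap D' y : S) : SignedMeasure G) := by
    intro y
    induction y using DFinsupp.induction with
    | h0 =>
      constructor
      · simp [qv_zero]
      · intro γ₀ _ μ _
        have h0' : (DirectSum.coeLinearMap D') (0 : ⨁ γ, D' γ) = 0 := map_zero _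
        rw [h0', show ((0 : S) : SignedMeasure G) = 0 from rfl,
          SignedMeasure.totalVariation_zero]
        exact Measure.MutuallySingular.zero_right
    | ha i b rest hri hb0 ih =>
      have hsingle : (DFinsupp.single i b : ⨁ γ, D' γ) = DirectSum.of (fun γ => D' γ) i b := rfl
      have hC : ((DirectSum.coeLinearMap D' (DFinsupp.single i b + rest) : S) : SignedMeasure G)
          = ((b : S) : SignedMeasure G)
            + ((DirectSum.coeLinearMap D' rest : S) : SignedMeasure G) := by
        rw [_root_.map_add, hsingle, DirectSum.coeLinearMap_of]
        rfl
      have hbD : ((b : S) : SignedMeasure G) ∈ D i := b.2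
      have hsing_b : SignedMeasure.totalVariation ((b : S) : SignedMeasure G) ⟂ₘ
          SignedMeasure.totalVariation ((DirectSum.coeLinearMap D' rest : S) : SignedMeasure G) :=
        ih.2 i hri _ hbD
      have hT : T (DFinsupp.single i b + rest) = g i b + T rest := by
        rw [_root_.map_add, hsingle, ← DirectSum.lof_eq_of ℝ, DirectSum.toModule_lof]
      constructor
      · rw [hT, hC, qv_eq_of_sing hsing_b]
        have h1 : |g i b| ≤ qv ((b : S) : SignedMeasure G) := by
          have := hb i ⟨((b : S) : SignedMeasure G), hbD⟩
          exact this
        calc |g i b + T rest| ≤ |g i b| + |T rest| := abs_add_le _ _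
          _ ≤ _ := add_le_add h1 ih.1
      · intro γ₀ h0 μ hμ
        have hγ₀i : γ₀ ≠ i := by
          rintro rfl
          rw [DFinsupp.add_apply, DFinsupp.single_eq_same, hri, add_zero] at h0
          exact hb0 h0
        have hrest0 : rest γ₀ = 0 := by
          rwa [DFinsupp.add_apply, DFinsupp.single_eq_of_ne hγ₀i, zero_add] at h0
        rw [hC]
        refine (sing_add ?_ ?_).symm
        · exact (hperp γ₀ i hγ₀i μ hμ _ hbD).symm.symm |>.symm.symm |>.symm
        · exact (ih.2 γ₀ hrest0 μ hμ).symm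
  -- the combined functional on `S`
  set f : S →ₗ[ℝ] ℝ := T ∘ₗ (e.symm : S →ₗ[ℝ] ⨁ γ, D' γ) with hfdef
  have hCe : ∀ x : S, (DirectSum.coeLinearMap D') (e.symm x) = x := fun x => by
    have : e (e.symm x) = x := e.apply_symm_apply x
    exact this
  have f_bound : ∀ x : S, |f x| ≤ qv (x : SignedMeasure G) := by
    intro x
    have := (key (e.symm x)).1
    rwa [hCe x] at this
  have f_agree : ∀ γ (μ : D γ) (hxS : (μ : SignedMeasure G) ∈ S),
      f ⟨(μ : SignedMeasure G), hxS⟩ = h γ μ := by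
    intro γ μ hxS
    set v : D' γ := ⟨⟨(μ : SignedMeasure G), hxS⟩, μ.2⟩ with hvdef
    have he : e (DirectSum.lof ℝ Γ (fun γ => D' γ) γ v) = ⟨(μ : SignedMeasure G), hxS⟩ := by
      change DirectSum.coeLinearMap D' _ = _
      rw [DirectSum.lof_eq_of, DirectSum.coeLinearMap_of]
    have hsymm : e.symm ⟨(μ : SignedMeasure G), hxS⟩ = DirectSum.lof ℝ Γ (fun γ => D' γ) γ v :=
      by rw [← he, e.symm_apply_apply]
    have : f ⟨(μ : SignedMeasure G), hxS⟩ = g γ v := by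
      rw [hfdef, LinearMap.comp_apply]
      erw [hsymm]
      rw [hTdef, DirectSum.toModule_lof]
    rw [this]
    exact congrArg (h γ) (Subtype.ext rfl)
  -- extend by Hahn–Banach
  obtain ⟨H, hH1, hH2⟩ := exists_extension_of_le_sublinear ⟨S, f⟩
    (fun μ => (μ.totalVariation Set.univ).toReal)
    (fun c hc x => qv_smul x hc)
    (fun x y => qv_add_le x y)
    (fun x => le_trans (le_abs_self _) (f_bound x))
  refine ⟨H, ?_, ?_⟩
  · intro μ
    refine abs_le.mpr ⟨?_, hH2 μ⟩
    have : H (-μ) ≤ qv (-μ) := hH2 (-μ)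
    rw [map_neg, qv_neg] at this
    simp only [qv] at this
    linarith
  · intro γ μ
    have hxS : (μ : SignedMeasure G) ∈ S := le_iSup D γ μ.2
    have := hH1 ⟨(μ : SignedMeasure G), hxS⟩
    rw [this]
    exact f_agree γ μ hxS
end

section
/- Let G be a locally compact group and τ an uncountable cardinal. Suppose M₀ is a subspace of M(G) such that for every μ ∈ M₀, |μ| ∈ M₀ and μ is τ-thin. If F ⊆ M₀ is finite, D ⊆ M(G) and |D| < τ, then there exists x ∈ G such that every measure in D is mutually singular to every measure in F ∗ δ_x. -/
open MeasureTheory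
open scoped ENNReal

/-- A (signed) measure `μ` on a group `G` is `τ`-thin if there is a set `P ⊆ G` of
cardinality `τ` whose right translates of `μ` are pairwise mutually singular. -/
def IsThinMeasure {G : Type u} [Group G] [MeasurableSpace G]
    (μ : SignedMeasure G) (τ : Cardinal.{u}) : Prop :=
  ∃ P : Set G, Cardinal.mk P = τ ∧
    P.Pairwise fun p p' =>
      SignedMeasure.totalVariation (μ.map (· * p)) ⟂ₘ
        SignedMeasure.totalVariation (μ.map (· * p'))

section Aux

variable {α : Type*} {β : Type*} [MeasurableSpace α] [MeasurableSpace β]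

lemma aux_totalVariation_finite (s : SignedMeasure α) :
    IsFiniteMeasure s.totalVariation := by
  rw [SignedMeasure.totalVariation]
  infer_instance

lemma aux_totalVariation_eq_zero_iff (s : SignedMeasure α) {A : Set α}
    (hA : MeasurableSet A) :
    s.totalVariation A = 0 ↔ ∀ t ⊆ A, MeasurableSet t → s t = 0 := by
  constructor
  · intro h t ht _
    exact s.null_of_totalVariation_zero (measure_mono_null ht h)
  · intro h
    obtain ⟨i, hi₁, hi₂, hi₃, hpos, hneg⟩ := s.toJordanDecomposition_spec
    rw [SignedMeasure.totalVariation, Measure.add_apply, hpos, hneg,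
      SignedMeasure.toMeasureOfZeroLE_apply _ _ _ hA,
      SignedMeasure.toMeasureOfLEZero_apply _ _ _ hA]
    have h1 : s (i ∩ A) = 0 := h _ Set.inter_subset_right (hi₁.inter hA)
    have h2 : s (iᶜ ∩ A) = 0 := h _ Set.inter_subset_right (hi₁.compl.inter hA)
    simp [h1, h2]

lemma aux_totalVariation_map_ac {ξ σ : SignedMeasure α}
    (h : ξ.totalVariation ≪ σ.totalVariation) (e : α ≃ᵐ β) :
    SignedMeasure.totalVariation (ξ.map e) ≪ SignedMeasure.totalVariation (σ.map e) := by
  refine Measure.AbsolutelyContinuous.mk fun A hA hσA => ?_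
  rw [aux_totalVariation_eq_zero_iff _ hA] at hσA ⊢
  have hpreA : MeasurableSet (⇑e ⁻¹' A) := hA.preimage e.measurable
  have hσpre : σ.totalVariation (⇑e ⁻¹' A) = 0 := by
    rw [aux_totalVariation_eq_zero_iff _ hpreA]
    intro t ht hmt
    have himg : MeasurableSet (⇑e '' t) := e.measurableEmbedding.measurableSet_image.2 hmt
    have hsub : ⇑e '' t ⊆ A := by
      rintro x ⟨y, hy, rfl⟩
      exact ht hy
    have := hσA _ hsub himg
    rwa [VectorMeasure.map_apply _ e.measurable himg,
      Set.preimage_image_eq t e.injective] at this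
  have hξpre : ξ.totalVariation (⇑e ⁻¹' A) = 0 := h hσpre
  intro t ht hmt
  rw [VectorMeasure.map_apply _ e.measurable hmt]
  exact ξ.null_of_totalVariation_zero
    (measure_mono_null (Set.preimage_mono ht) hξpre)

lemma aux_vm_sum_apply {ι : Type*} (T : Finset ι) (f : ι → SignedMeasure α) (s : Set α) :
    (∑ i ∈ T, f i) s = ∑ i ∈ T, f i s := by
  classical
  induction T using Finset.induction_on with
  | empty => simp
  | @insert a t hx ih =>
    rw [Finset.sum_insert hx, Finset.sum_insert hx, VectorMeasure.add_apply, ih]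

lemma aux_add_le_of_mutuallySingular {m ν₁ ν₂ : Measure α}
    (h : ν₁ ⟂ₘ ν₂) (h₁ : ν₁ ≤ m) (h₂ : ν₂ ≤ m) : ν₁ + ν₂ ≤ m := by
  obtain ⟨u, hu, hu₁, hu₂⟩ := h
  rw [Measure.le_iff]
  intro s hs
  have e1 : ν₁ s = ν₁ (s \ u) := by
    have : ν₁ s = ν₁ (s ∩ u) + ν₁ (s \ u) := (measure_inter_add_diff s hu).symm
    have h0 : ν₁ (s ∩ u) = 0 := measure_mono_null Set.inter_subset_right hu₁
    rw [this, h0, zero_add]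
  have e2 : ν₂ s = ν₂ (s ∩ u) := by
    have : ν₂ s = ν₂ (s ∩ u) + ν₂ (s \ u) := (measure_inter_add_diff s hu).symm
    have h0 : ν₂ (s \ u) = 0 := measure_mono_null (Set.diff_subset_diff_left (Set.subset_univ s)
      |>.trans (by simp [Set.diff_eq, Set.inter_comm])) hu₂
    rw [this, h0, add_zero]
  calc (ν₁ + ν₂) s = ν₁ (s \ u) + ν₂ (s ∩ u) := by
        rw [Measure.add_apply, ← e1, ← e2]
    _ ≤ m (s \ u) + m (s ∩ u) := add_le_add (h₁ _) (h₂ _)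
    _ = m s := by rw [add_comm, measure_inter_add_diff s hu]

lemma aux_finset_sum_mutuallySingular {ι : Type*} {f : ι → Measure α} {ν : Measure α}
    (T : Finset ι) (h : ∀ i ∈ T, f i ⟂ₘ ν) : (∑ i ∈ T, f i) ⟂ₘ ν := by
  classical
  induction T using Finset.induction_on with
  | empty => simp only [Finset.sum_empty]; exact Measure.MutuallySingular.zero_left
  | @insert a s hx ih =>
    rw [Finset.sum_insert hx]
    exact (h a (Finset.mem_insert_self a s)).add_left
      (ih fun i hi => h i (Finset.mem_insert_of_mem hi))

lemma aux_finset_sum_le {ι : Type*} {m : Measure α} {f : ι → Measure α}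
    (T : Finset ι) (hp : (T : Set ι).Pairwise fun i j => f i ⟂ₘ f j)
    (hle : ∀ i ∈ T, f i ≤ m) : (∑ i ∈ T, f i) ≤ m := by
  classical
  induction T using Finset.induction_on with
  | empty => simpa using m.zero_le
  | @insert a s hx ih =>
    rw [Finset.sum_insert hx]
    have hsing : f a ⟂ₘ ∑ i ∈ s, f i := by
      refine (aux_finset_sum_mutuallySingular s fun i hi => ?_).symm
      have hai : a ≠ i := fun h => hx (h ▸ hi)
      have ha' : a ∈ (↑(insert a s) : Set ι) := by simp
      have hi' : i ∈ (↑(insert a s) : Set ι) := by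
        simp only [Finset.coe_insert, Set.mem_insert_iff, Finset.mem_coe]
        exact Or.inr hi
      exact (hp ha' hi' hai).symm
    refine aux_add_le_of_mutuallySingular hsing (hle a (Finset.mem_insert_self a s)) ?_
    exact ih (hp.mono (by exact_mod_cast Finset.subset_insert a s))
      fun i hi => hle i (Finset.mem_insert_of_mem hi)

lemma aux_countable_nonzero {ι : Type*} {m : Measure α} [IsFiniteMeasure m]
    {f : ι → Measure α} {P : Set ι}
    (hle : ∀ i ∈ P, f i ≤ m)
    (hp : P.Pairwise fun i j => f i ⟂ₘ f j) :
    {i | i ∈ P ∧ f i ≠ 0}.Countable := by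
  classical
  have hsub : {i | i ∈ P ∧ f i ≠ 0} ⊆
      ⋃ n : ℕ, {i | i ∈ P ∧ (n : ℝ≥0∞)⁻¹ < f i Set.univ} := by
    rintro i ⟨hiP, hi⟩
    have h0 : f i Set.univ ≠ 0 := Measure.measure_univ_ne_zero.2 hi
    obtain ⟨n, hn⟩ := ENNReal.exists_inv_nat_lt h0
    exact Set.mem_iUnion.2 ⟨n, hiP, hn⟩
  refine Set.Countable.mono hsub (Set.countable_iUnion fun n => Set.Finite.countable ?_)
  by_contra hinf
  have hinf' : Set.Infinite {i | i ∈ P ∧ (n : ℝ≥0∞)⁻¹ < f i Set.univ} := hinf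
  have hεne : ((n : ℝ≥0∞)⁻¹ : ℝ≥0∞) ≠ 0 := by
    simp [ENNReal.inv_ne_zero]
  obtain ⟨k, hk⟩ := ENNReal.exists_nat_mul_gt hεne (measure_ne_top m Set.univ)
  obtain ⟨T, hTsub, hTcard⟩ := hinf'.exists_subset_card_eq k
  have hTP : (T : Set ι) ⊆ P := fun i hi => (hTsub hi).1
  have hsum_le : (∑ i ∈ T, f i) ≤ m :=
    aux_finset_sum_le T (hp.mono hTP) fun i hi => hle i (hTP hi)
  have h1 : (k : ℝ≥0∞) * (n : ℝ≥0∞)⁻¹ ≤ ∑ i ∈ T, f i Set.univ := by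
    have := Finset.card_nsmul_le_sum T (fun i => f i Set.univ) ((n : ℝ≥0∞)⁻¹)
      (fun i hi => (hTsub hi).2.le)
    rwa [hTcard, nsmul_eq_mul] at this
  have h2 : (∑ i ∈ T, f i Set.univ) ≤ m Set.univ := by
    have := hsum_le Set.univ
    rwa [Measure.finset_sum_apply] at this
  exact absurd ((h1.trans h2)) (not_le.2 hk)

lemma aux_countable_not_mutuallySingular {ι : Type*} (m : Measure α)
    [IsFiniteMeasure m] (f : ι → Measure α) (hf : ∀ i, IsFiniteMeasure (f i)) (P : Set ι)
    (hp : P.Pairwise fun i j => f i ⟂ₘ f j) :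
    {i | i ∈ P ∧ ¬ m ⟂ₘ f i}.Countable := by
  haveI := hf
  set g : ι → Measure α := fun i => (f i).withDensity (m.rnDeriv (f i)) with hg
  have hdec : ∀ i, m = m.singularPart (f i) + g i := fun i =>
    (m.haveLebesgueDecomposition_add (f i))
  have hle : ∀ i ∈ P, g i ≤ m := by
    intro i _
    conv_rhs => rw [hdec i]
    exact Measure.le_add_left le_rfl
  have hgp : P.Pairwise fun i j => g i ⟂ₘ g j := fun i hi j hj hij =>
    (hp hi hj hij).mono_ac (withDensity_absolutelyContinuous _ _)
      (withDensity_absolutelyContinuous _ _)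
  refine Set.Countable.mono ?_ (aux_countable_nonzero hle hgp)
  rintro i ⟨hiP, hi⟩
  refine ⟨hiP, fun h0 => hi ?_⟩
  have heq : m = m.singularPart (f i) := by conv_lhs => rw [hdec i, h0, add_zero]
  have hms := m.mutuallySingular_singularPart (f i)
  conv_lhs => rw [heq]
  exact hms

end Aux

/-- Let `G` be a locally compact group, `τ` an uncountable cardinal, and
`M₀` a subspace of `M(G)` such that every `μ ∈ M₀` has `|μ| ∈ M₀` and is `τ`-thin. If
`F ⊆ M₀` is finite and `D ⊆ M(G)` has cardinality `< τ`, then there is `x ∈ G` such that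
every measure in `D` is mutually singular to every measure in `F ∗ δ_x`. -/
theorem stmt_6 {G : Type u} [Group G] [TopologicalSpace G] [IsTopologicalGroup G]
    [LocallyCompactSpace G] [T2Space G] [MeasurableSpace G] [BorelSpace G]
    (τ : Cardinal.{u}) (hτ : Cardinal.aleph0 < τ)
    (M₀ : Submodule ℝ (SignedMeasure G))
    (habs : ∀ μ ∈ M₀, ∃ ν ∈ M₀, ∀ s : Set G, MeasurableSet s →
      ν s = (SignedMeasure.totalVariation μ s).toReal)
    (hthin : ∀ μ ∈ M₀, IsThinMeasure μ τ)
    (F : Set (SignedMeasure G)) (hF : F.Finite) (hFM : F ⊆ (M₀ : Set (SignedMeasure G)))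
    (D : Set (SignedMeasure G)) (hD : Cardinal.mk D < τ) :
    ∃ x : G, ∀ ν ∈ D, ∀ ξ ∈ F,
      SignedMeasure.totalVariation ν ⟂ₘ
        SignedMeasure.totalVariation (ξ.map (· * x)) := by
  classical
  -- choose absolute values
  choose! νf hνfM0 hνfval0 using habs
  have hνfM : ∀ ξ ∈ F, νf ξ ∈ M₀ := fun ξ hξ => hνfM0 ξ (hFM hξ)
  have hνfval : ∀ ξ ∈ F, ∀ s : Set G, MeasurableSet s →
      νf ξ s = (SignedMeasure.totalVariation ξ s).toReal := fun ξ hξ => hνfval0 ξ (hFM hξ)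
  set T : Finset (SignedMeasure G) := hF.toFinset with hT
  set σ : SignedMeasure G := ∑ ξ ∈ T, νf ξ with hσ
  have hσM : σ ∈ M₀ := Submodule.sum_mem _ fun ξ hξ => hνfM ξ (by
    rwa [hT, Set.Finite.mem_toFinset] at hξ)
  -- absolute continuity of total variations
  have hac0 : ∀ ξ ∈ F, SignedMeasure.totalVariation ξ ≪ SignedMeasure.totalVariation σ := by
    intro ξ hξ
    refine Measure.AbsolutelyContinuous.mk fun s hs hσs => ?_
    have hσ0 : σ s = 0 := σ.null_of_totalVariation_zero hσs
    have hsum : σ s = ∑ ξ' ∈ T, νf ξ' s := by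
      rw [hσ, aux_vm_sum_apply]
    have hnonneg : ∀ ξ' ∈ T, 0 ≤ νf ξ' s := by
      intro ξ' hξ'
      rw [hT, Set.Finite.mem_toFinset] at hξ'
      rw [hνfval ξ' hξ' s hs]
      exact ENNReal.toReal_nonneg
    have hterm : ∀ ξ' ∈ T, νf ξ' s = 0 := by
      have := (Finset.sum_eq_zero_iff_of_nonneg hnonneg).1 (by rw [← hsum, hσ0])
      exact this
    have hξT : ξ ∈ T := by rw [hT, Set.Finite.mem_toFinset]; exact hξ
    haveI := aux_totalVariation_finite ξ
    have hξ0 := hterm ξ hξT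
    rw [hνfval ξ hξ s hs] at hξ0
    exact ((ENNReal.toReal_eq_zero_iff _).1 hξ0).resolve_right (measure_ne_top _ _)
  -- thinness of σ
  obtain ⟨P, hPcard, hPpair⟩ := hthin σ hσM
  set μT : G → Measure G := fun p => SignedMeasure.totalVariation (σ.map (· * p)) with hμT
  have hμTfin : ∀ p, IsFiniteMeasure (μT p) := fun p => aux_totalVariation_finite _
  have hac : ∀ ξ ∈ F, ∀ p : G,
      SignedMeasure.totalVariation (ξ.map (· * p)) ≪ μT p := by
    intro ξ hξ p
    have he : (· * p) = ⇑(MeasurableEquiv.mulRight p) := rfl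
    rw [hμT]
    simp only [he]
    exact aux_totalVariation_map_ac (hac0 ξ hξ) (MeasurableEquiv.mulRight p)
  -- bad sets
  set B : SignedMeasure G → Set G := fun ν =>
    {p | p ∈ P ∧ ¬ SignedMeasure.totalVariation ν ⟂ₘ μT p} with hB
  have hBc : ∀ ν : SignedMeasure G, (B ν).Countable := by
    intro ν
    haveI := aux_totalVariation_finite ν
    exact aux_countable_not_mutuallySingular (SignedMeasure.totalVariation ν) μT hμTfin P hPpair
  -- cardinality of the union of bad sets
  set bad : Set G := ⋃ ν : D, B ν with hbad
  have hbadlt : Cardinal.mk bad < τ := by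
    have h1 : Cardinal.mk bad ≤ Cardinal.mk D * Cardinal.aleph0 := by
      refine (Cardinal.mk_iUnion_le _).trans ?_
      refine mul_le_mul_right ?_ _
      refine ciSup_le' fun ν => ?_
      rw [Cardinal.mk_le_aleph0_iff, Set.countable_coe_iff]
      exact hBc ν
    refine h1.trans_lt ?_
    refine (Cardinal.mul_le_max _ _).trans_lt ?_
    simp only [max_lt_iff]
    exact ⟨⟨hD, hτ⟩, hτ⟩
  -- pick a good point
  have hPsub : ¬ P ⊆ bad := by
    intro hsub
    exact absurd (hPcard ▸ Cardinal.mk_le_mk_of_subset hsub) (not_le.2 hbadlt)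
  obtain ⟨p, hpP, hpbad⟩ : ∃ p, p ∈ P ∧ p ∉ bad := by
    by_contra h
    push_neg at h
    exact hPsub h
  refine ⟨p, fun ν hν ξ hξ => ?_⟩
  have h1 : SignedMeasure.totalVariation ν ⟂ₘ μT p := by
    by_contra h
    exact hpbad (Set.mem_iUnion.2 ⟨⟨ν, hν⟩, hpP, h⟩)
  exact h1.mono_ac Measure.AbsolutelyContinuous.rfl (hac ξ hξ p)
end

section
/- Let G be a locally compact group and H₀ ⊇ H₁ closed subgroups. Then the local weight (character) of the quotient space G/H₁ satisfies χ(G/H₁) = max(χ(G/H₀), χ(H₀/H₁)). -/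
open Topology Set Filter

noncomputable def localWeight (X : Type u) [TopologicalSpace X] (x : X) : Cardinal.{u} :=
  ⨅ B : {S : Set (Set X) // (𝓝 x).HasBasis (· ∈ S) id}, Cardinal.mk B.1

variable {X Y : Type u} [TopologicalSpace X] [TopologicalSpace Y]

lemma localWeight_le_mk {x : X} {B : Set (Set X)} (hB : (𝓝 x).HasBasis (· ∈ B) id) :
    localWeight X x ≤ Cardinal.mk B :=
  ciInf_le' (fun B : {S : Set (Set X) // (𝓝 x).HasBasis (· ∈ S) id} => Cardinal.mk B.1)
    ⟨B, hB⟩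

lemma exists_basis_mk_eq (x : X) :
    ∃ B : Set (Set X), (𝓝 x).HasBasis (· ∈ B) id ∧ Cardinal.mk B = localWeight X x := by
  have hne : (Set.range (fun B : {S : Set (Set X) // (𝓝 x).HasBasis (· ∈ S) id} =>
      Cardinal.mk B.1)).Nonempty := ⟨_, ⟨⟨{s | s ∈ 𝓝 x}, (𝓝 x).basis_sets⟩, rfl⟩⟩
  have := csInf_mem hne
  rw [← iInf, ← localWeight] at this  -- maybe not; handle below
  obtain ⟨⟨B, hB⟩, h⟩ := this
  exact ⟨B, hB, h⟩

lemma one_le_localWeight (x : X) : 1 ≤ localWeight X x := by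
  obtain ⟨B, hB, h⟩ := exists_basis_mk_eq x
  rw [← h, Cardinal.one_le_iff_ne_zero, Cardinal.mk_ne_zero_iff]
  obtain ⟨U, hU, -⟩ := hB.mem_iff.mp (univ_mem : univ ∈ 𝓝 x)
  exact ⟨U, hU⟩

lemma localWeight_le_one_of_isolated {x : X} (h : {x} ∈ 𝓝 x) : localWeight X x ≤ 1 := by
  have hB : (𝓝 x).HasBasis (· ∈ ({{x}} : Set (Set X))) id := by
    constructor
    intro t
    constructor
    · intro ht
      exact ⟨{x}, rfl, singleton_subset_iff.mpr (mem_of_mem_nhds ht)⟩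
    · rintro ⟨i, rfl, hit⟩
      exact mem_of_superset h hit
  exact (localWeight_le_mk hB).trans (by simp)

lemma singleton_mem_nhds_of_localWeight_lt_aleph0 {x : X}
    (h : localWeight X x < Cardinal.aleph0)
    (hsep : ∀ y : X, y ≠ x → ∃ V ∈ 𝓝 x, y ∉ V) : {x} ∈ 𝓝 x := by
  obtain ⟨B, hB, hmk⟩ := exists_basis_mk_eq x
  rw [← hmk, Cardinal.lt_aleph0_iff_set_finite] at h
  have hmem : ⋂₀ B ∈ 𝓝 x := (Filter.sInter_mem h).mpr fun U hU => hB.mem_of_mem hU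
  refine mem_of_superset hmem ?_
  intro y hy
  by_contra hyx
  obtain ⟨V, hV, hyV⟩ := hsep y hyx
  obtain ⟨U, hU, hUV⟩ := hB.mem_iff.mp hV
  exact hyV (hUV (hy U hU))

variable {X Y : Type u} [TopologicalSpace X] [TopologicalSpace Y]

lemma localWeight_image_le {f : X → Y} (hc : Continuous f) (ho : IsOpenMap f) (x : X) :
    localWeight Y (f x) ≤ localWeight X x := by
  obtain ⟨B, hB, hmk⟩ := exists_basis_mk_eq x
  have hB' : (𝓝 (f x)).HasBasis (· ∈ (fun U => f '' U) '' B) id := by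
    constructor
    intro t
    constructor
    · intro ht
      obtain ⟨U, hU, hUt⟩ := hB.mem_iff.mp (hc.continuousAt.preimage_mem_nhds ht)
      exact ⟨f '' U, mem_image_of_mem _ hU, (image_subset_iff.mpr hUt)⟩
    · rintro ⟨i, ⟨U, hU, rfl⟩, hit⟩
      exact mem_of_superset (ho.image_mem_nhds (hB.mem_of_mem hU)) hit
  exact (localWeight_le_mk hB').trans (by rw [← hmk]; exact Cardinal.mk_image_le)

lemma localWeight_comap_le {e : Y → X} {y : Y} (h : 𝓝 y = Filter.comap e (𝓝 (e y))) :
    localWeight Y y ≤ localWeight X (e y) := by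
  obtain ⟨B, hB, hmk⟩ := exists_basis_mk_eq (e y)
  have hB' : (𝓝 y).HasBasis (· ∈ (fun U => e ⁻¹' U) '' B) id := by
    constructor
    intro t
    rw [h, mem_comap]
    constructor
    · rintro ⟨V, hV, hVt⟩
      obtain ⟨U, hU, hUV⟩ := hB.mem_iff.mp hV
      exact ⟨e ⁻¹' U, mem_image_of_mem _ hU, (preimage_mono hUV).trans hVt⟩
    · rintro ⟨i, ⟨U, hU, rfl⟩, hit⟩
      exact ⟨U, hB.mem_of_mem hU, hit⟩
  exact (localWeight_le_mk hB').trans (by rw [← hmk]; exact Cardinal.mk_image_le)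

lemma localWeight_le_of_pseudobase {x : X} {S : Set (Set X)} (hne : S.Nonempty)
    (hWD : ∀ U ∈ S, ∃ W D : Set X, IsOpen W ∧ x ∈ W ∧ IsCompact D ∧ IsClosed D ∧
      W ⊆ D ∧ D ⊆ U)
    (hS : ⋂₀ S = {x}) :
    localWeight X x ≤ max (Cardinal.mk S) Cardinal.aleph0 := by
  choose W D hWo hWx hDc hDcl hWD' hDU using fun U : S => hWD U U.2
  set B : Set (Set X) := Set.range (fun t : Finset S => ⋂ U ∈ t, W U) with hBdef
  have hB : (𝓝 x).HasBasis (· ∈ B) id := by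
    constructor
    intro V
    constructor
    · intro hV
      classical
      obtain ⟨U₀, hU₀⟩ := hne
      set u₀ : S := ⟨U₀, hU₀⟩
      have hC : IsCompact (D u₀ \ interior V) := (hDc u₀).diff isOpen_interior
      have hcov : (D u₀ \ interior V) ⊆ ⋃ U : S, (D U)ᶜ := by
        intro y hy
        have hyx : y ≠ x := fun hxy => hy.2 (hxy ▸ mem_interior_iff_mem_nhds.mpr hV)
        have h2 : y ∉ ⋂₀ S := by rw [hS]; exact hyx
        rw [mem_sInter] at h2
        push_neg at h2
        obtain ⟨U, hU, hyU⟩ := h2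
        exact mem_iUnion.mpr ⟨⟨U, hU⟩, fun hyD => hyU (hDU _ hyD)⟩
      obtain ⟨t, ht⟩ := hC.elim_finite_subcover (fun U : S => (D U)ᶜ)
        (fun U => (hDcl U).isOpen_compl) hcov
      refine ⟨⋂ U ∈ insert u₀ t, W U, ⟨insert u₀ t, rfl⟩, ?_⟩
      intro z hz
      simp only [id_eq, mem_iInter] at hz
      have hz0 : z ∈ D u₀ := hWD' u₀ (hz u₀ (Finset.mem_insert_self _ _))
      by_contra hzV
      have hzC : z ∈ D u₀ \ interior V := ⟨hz0, fun h => hzV (interior_subset h)⟩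
      obtain ⟨U, hUS, hUt, hzU⟩ := by simpa using ht hzC
      exact hzU (hWD' _ (hz ⟨U, hUS⟩ (Finset.mem_insert_of_mem hUt)))
    · rintro ⟨i, ⟨t, rfl⟩, hit⟩
      refine mem_of_superset ?_ hit
      exact (isOpen_biInter_finset fun U _ => hWo U).mem_nhds
        (mem_iInter₂.mpr fun U _ => hWx U)
  refine (localWeight_le_mk hB).trans ?_
  refine le_trans Cardinal.mk_range_le ?_
  rcases finite_or_infinite S with hfin | hinf
  · exact le_max_of_le_right (Cardinal.mk_le_aleph0)
  · rw [Cardinal.mk_finset_of_infinite]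
    exact le_max_left _ _

section grp
variable {G : Type u} [Group G] [TopologicalSpace G] [IsTopologicalGroup G]

lemma isClosed_singleton_coset {H : Subgroup G} (hH : IsClosed (H : Set G)) (y : G ⧸ H) :
    IsClosed ({y} : Set (G ⧸ H)) := by
  obtain ⟨g, rfl⟩ := QuotientGroup.mk_surjective y
  rw [← (QuotientGroup.isQuotientMap_mk H).isClosed_preimage]
  have h2 : (QuotientGroup.mk ⁻¹' {((g : G) : G ⧸ H)} : Set G)
      = (fun x => x⁻¹ * g) ⁻¹' (H : Set G) := by
    ext x
    simp only [mem_preimage, mem_singleton_iff, SetLike.mem_coe]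
    exact QuotientGroup.eq
  rw [h2]
  exact hH.preimage (continuous_inv.mul continuous_const)

lemma coset_sep {H : Subgroup G} (hH : IsClosed (H : Set G)) {x : G ⧸ H} :
    ∀ y : G ⧸ H, y ≠ x → ∃ V ∈ 𝓝 x, y ∉ V := fun y hy =>
  ⟨{y}ᶜ, (isClosed_singleton_coset hH y).isOpen_compl.mem_nhds hy.symm, by simp⟩

variable (H₀ H₁ : Subgroup G)

def qmap (hle : H₁ ≤ H₀) : G ⧸ H₁ → G ⧸ H₀ :=
  Quotient.map' id fun a b h => by
    rw [QuotientGroup.leftRel_apply] at h ⊢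
    exact hle h

def emap : (H₀ ⧸ H₁.subgroupOf H₀) → G ⧸ H₁ :=
  Quotient.map' Subtype.val fun a b h => by
    rw [QuotientGroup.leftRel_apply] at h ⊢
    rw [Subgroup.mem_subgroupOf] at h
    simpa using h

variable {H₀ H₁}

lemma qmap_mk (hle : H₁ ≤ H₀) (g : G) :
    qmap H₀ H₁ hle (QuotientGroup.mk g) = QuotientGroup.mk g := rfl

lemma emap_mk (h : H₀) :
    emap H₀ H₁ (QuotientGroup.mk h) = QuotientGroup.mk (h : G) := rfl

lemma continuous_qmap (hle : H₁ ≤ H₀) : Continuous (qmap H₀ H₁ hle) :=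
  (QuotientGroup.isQuotientMap_mk H₁).continuous_iff.mpr QuotientGroup.continuous_mk

lemma continuous_emap : Continuous (emap H₀ H₁) :=
  (QuotientGroup.isQuotientMap_mk _).continuous_iff.mpr
    (QuotientGroup.continuous_mk.comp continuous_subtype_val)

lemma isOpenMap_qmap (hle : H₁ ≤ H₀) : IsOpenMap (qmap H₀ H₁ hle) := by
  intro U hU
  have h2 : qmap H₀ H₁ hle '' U = QuotientGroup.mk '' (QuotientGroup.mk ⁻¹' U : Set G) := by
    conv_lhs => rw [← Set.image_preimage_eq U QuotientGroup.mk_surjective]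
    rw [← Set.image_comp]
    rfl
  rw [h2]
  exact QuotientGroup.isOpenMap_coe _ (hU.preimage QuotientGroup.continuous_mk)

lemma emap_injective : Function.Injective (emap H₀ H₁) := by
  intro a b
  obtain ⟨a, rfl⟩ := QuotientGroup.mk_surjective a
  obtain ⟨b, rfl⟩ := QuotientGroup.mk_surjective b
  rw [emap_mk, emap_mk]
  intro h
  rw [QuotientGroup.eq] at h ⊢
  rw [Subgroup.mem_subgroupOf]
  simpa using h

lemma range_emap (hle : H₁ ≤ H₀) :
    Set.range (emap H₀ H₁) = qmap H₀ H₁ hle ⁻¹' {QuotientGroup.mk 1} := by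
  ext z
  obtain ⟨g, rfl⟩ := QuotientGroup.mk_surjective z
  simp only [mem_range, mem_preimage, qmap_mk, mem_singleton_iff]
  constructor
  · rintro ⟨w, hw⟩
    obtain ⟨h, rfl⟩ := QuotientGroup.mk_surjective w
    rw [emap_mk] at hw
    rw [QuotientGroup.eq] at hw
    rw [QuotientGroup.eq]
    have hg : g ∈ H₀ := by
      have hg2 : g = (h : G) * ((h : G)⁻¹ * g) := by group
      rw [hg2]
      exact H₀.mul_mem h.2 (hle hw)
    simpa using H₀.inv_mem hg
  · intro hg
    rw [QuotientGroup.eq] at hg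
    simp only [mul_one] at hg
    exact ⟨QuotientGroup.mk ⟨g, (inv_mem_iff).mp hg⟩, rfl⟩

lemma nhds_comap_emap (hle : H₁ ≤ H₀) :
    𝓝 (QuotientGroup.mk 1 : H₀ ⧸ H₁.subgroupOf H₀)
      = Filter.comap (emap H₀ H₁) (𝓝 (QuotientGroup.mk 1 : G ⧸ H₁)) := by
  have hpt : emap H₀ H₁ (QuotientGroup.mk 1 : H₀ ⧸ H₁.subgroupOf H₀)
      = (QuotientGroup.mk 1 : G ⧸ H₁) := by rw [emap_mk]; norm_num
  refine le_antisymm ?_ ?_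
  · have := (continuous_emap (H₀ := H₀) (H₁ := H₁)).tendsto (QuotientGroup.mk 1)
    rw [hpt] at this
    exact this.le_comap
  · intro T hT
    rw [mem_comap]
    rw [QuotientGroup.nhds_eq] at hT
    have hT' : QuotientGroup.mk ⁻¹' T ∈ 𝓝 (1 : H₀) := hT
    rw [nhds_induced (Subtype.val) (1 : H₀)] at hT'
    obtain ⟨W, hW, hWT⟩ := mem_comap.mp hT'
    have hone : ((1 : H₀) : G) = (1 : G) := rfl
    rw [hone] at hW
    refine ⟨QuotientGroup.mk '' W, ?_, ?_⟩
    · have := QuotientGroup.isOpenMap_coe (N := H₁).image_mem_nhds hW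
      simpa using this
    · intro z hz
      obtain ⟨h, rfl⟩ := QuotientGroup.mk_surjective z
      simp only [mem_preimage, emap_mk] at hz
      obtain ⟨w, hwW, hw⟩ := hz
      rw [QuotientGroup.eq] at hw
      have hwH₀ : w ∈ H₀ := by
        have : w = (h : G) * (w⁻¹ * (h:G))⁻¹ := by group
        rw [this]
        exact H₀.mul_mem h.2 (H₀.inv_mem (hle hw))
      have : QuotientGroup.mk (⟨w, hwH₀⟩ : H₀)
          = (QuotientGroup.mk h : H₀ ⧸ H₁.subgroupOf H₀) := by
        rw [QuotientGroup.eq, Subgroup.mem_subgroupOf]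
        simpa using hw
      rw [← this]
      exact hWT hwW
end grp


set_option maxHeartbeats 1000000 in
/-- For closed subgroups `H₁ ≤ H₀` of a locally compact group `G`,
`χ(G/H₁) = max (χ(G/H₀), χ(H₀/H₁))`, where `χ` is the character of the quotient space
at the base point. -/
theorem stmt_7 {G : Type u} [Group G] [TopologicalSpace G] [IsTopologicalGroup G]
    [LocallyCompactSpace G] [T2Space G]
    (H₀ H₁ : Subgroup G) (h0 : IsClosed (H₀ : Set G)) (h1 : IsClosed (H₁ : Set G))
    (hle : H₁ ≤ H₀) :
    localWeight (G ⧸ H₁) (QuotientGroup.mk 1) =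
      max (localWeight (G ⧸ H₀) (QuotientGroup.mk 1))
        (localWeight (H₀ ⧸ H₁.subgroupOf H₀) (QuotientGroup.mk 1)) := by
  classical
  have h1' : IsClosed ((H₁.subgroupOf H₀ : Subgroup H₀) : Set H₀) := by
    have : ((H₁.subgroupOf H₀ : Subgroup H₀) : Set H₀) = (Subtype.val : H₀ → G) ⁻¹' H₁ := by
      rw [Subgroup.subgroupOf, Subgroup.coe_comap, Subgroup.coe_subtype]
    rw [this]
    exact h1.preimage continuous_subtype_val
  have hpt : emap H₀ H₁ (QuotientGroup.mk 1) = (QuotientGroup.mk 1 : G ⧸ H₁) := by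
    rw [emap_mk]; norm_num
  refine le_antisymm ?_ (max_le ?_ ?_)
  · -- hard direction
    by_cases hinf : Cardinal.aleph0 ≤ max (localWeight (G ⧸ H₀) (QuotientGroup.mk 1))
        (localWeight (H₀ ⧸ H₁.subgroupOf H₀) (QuotientGroup.mk 1))
    · -- infinite case
      obtain ⟨B₀, hB₀, hmk₀⟩ := exists_basis_mk_eq (QuotientGroup.mk 1 : G ⧸ H₀)
      obtain ⟨B₁, hB₁, hmk₁⟩ := exists_basis_mk_eq
        (QuotientGroup.mk 1 : H₀ ⧸ H₁.subgroupOf H₀)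
      have hchoice : ∀ V : B₁, ∃ T ∈ 𝓝 (QuotientGroup.mk 1 : G ⧸ H₁),
          emap H₀ H₁ ⁻¹' T ⊆ (V : Set (H₀ ⧸ H₁.subgroupOf H₀)) := by
        intro V
        have : (V : Set (H₀ ⧸ H₁.subgroupOf H₀)) ∈
            Filter.comap (emap H₀ H₁) (𝓝 (QuotientGroup.mk 1 : G ⧸ H₁)) := by
          rw [← nhds_comap_emap hle]
          exact hB₁.mem_of_mem V.2
        exact mem_comap.mp this
      choose T hT hTV using hchoice
      have hFcl : IsClosed (qmap H₀ H₁ hle ⁻¹' {QuotientGroup.mk 1}) :=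
        (isClosed_singleton_coset h0 _).preimage (continuous_qmap hle)
      set F : Set (G ⧸ H₁) := qmap H₀ H₁ hle ⁻¹' {QuotientGroup.mk 1} with hFdef
      set S : Set (Set (G ⧸ H₁)) :=
        Set.range (fun U : B₀ => qmap H₀ H₁ hle ⁻¹' interior (U : Set (G ⧸ H₀)))
          ∪ Set.range (fun V : B₁ => interior (T V) ∪ Fᶜ) with hSdef
      have hmemS : ∀ A ∈ S, IsOpen A ∧ (QuotientGroup.mk 1 : G ⧸ H₁) ∈ A := by
        rintro A (⟨U, rfl⟩ | ⟨V, rfl⟩)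
        · refine ⟨isOpen_interior.preimage (continuous_qmap hle), ?_⟩
          rw [mem_preimage, qmap_mk, mem_interior_iff_mem_nhds]
          exact hB₀.mem_of_mem U.2
        · exact ⟨(isOpen_interior.union hFcl.isOpen_compl),
            Or.inl (mem_interior_iff_mem_nhds.mpr (hT V))⟩
      have hsand : ∀ A ∈ S, ∃ W D : Set (G ⧸ H₁), IsOpen W ∧
          (QuotientGroup.mk 1 : G ⧸ H₁) ∈ W ∧ IsCompact D ∧ IsClosed D ∧ W ⊆ D ∧ D ⊆ A := by
        intro A hA
        obtain ⟨hAo, hbA⟩ := hmemS A hA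
        have h1A : QuotientGroup.mk ⁻¹' A ∈ 𝓝 (1 : G) :=
          (hAo.preimage QuotientGroup.continuous_mk).mem_nhds hbA
        obtain ⟨K, hK1, hKA, hKc⟩ := local_compact_nhds h1A
        refine ⟨interior (QuotientGroup.mk '' K), QuotientGroup.mk '' K, isOpen_interior,
          ?_, hKc.image QuotientGroup.continuous_mk, ?_, interior_subset, ?_⟩
        · exact mem_interior_iff_mem_nhds.mpr
            ((QuotientGroup.isOpenMap_coe (N := H₁)).image_mem_nhds hK1)
        · rw [← (QuotientGroup.isQuotientMap_mk H₁).isClosed_preimage,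
            QuotientGroup.preimage_image_mk_eq_mul]
          exact h1.mul_left_of_isCompact hKc
        · rintro z ⟨g, hgK, rfl⟩
          exact hKA hgK
      have hne : S.Nonempty := by
        obtain ⟨U, hU, -⟩ := hB₀.mem_iff.mp (univ_mem : univ ∈ 𝓝 _)
        exact ⟨_, Or.inl ⟨⟨U, hU⟩, rfl⟩⟩
      have hS : ⋂₀ S = {(QuotientGroup.mk 1 : G ⧸ H₁)} := by
        apply Subset.antisymm
        · intro z hz
          rw [mem_sInter] at hz
          have hz0 : qmap H₀ H₁ hle z = QuotientGroup.mk 1 := by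
            by_contra hne'
            obtain ⟨V', hV', hzV'⟩ := coset_sep h0 _ hne'
            obtain ⟨U, hU, hUV'⟩ := hB₀.mem_iff.mp hV'
            exact hzV' (hUV' (interior_subset (hz _ (Or.inl ⟨⟨U, hU⟩, rfl⟩))))
          have hzF : z ∈ F := hz0
          obtain ⟨w, rfl⟩ : z ∈ Set.range (emap H₀ H₁) := by
            rw [range_emap hle]; exact hzF
          have hw : w = QuotientGroup.mk 1 := by
            by_contra hne'
            obtain ⟨V', hV', hwV'⟩ := coset_sep h1' _ hne'
            obtain ⟨V, hV, hVV'⟩ := hB₁.mem_iff.mp hV'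
            refine hwV' (hVV' (hTV ⟨V, hV⟩ ?_))
            have := hz _ (Or.inr ⟨⟨V, hV⟩, rfl⟩)
            rcases this with h' | h'
            · exact mem_preimage.mpr (interior_subset h')
            · exact absurd hzF h'
          rw [hw, hpt]
          rfl
        · intro z hz
          rw [mem_singleton_iff] at hz
          subst hz
          intro A hA
          exact (hmemS A hA).2
      have hcard : Cardinal.mk S ≤ max (localWeight (G ⧸ H₀) (QuotientGroup.mk 1))
          (localWeight (H₀ ⧸ H₁.subgroupOf H₀) (QuotientGroup.mk 1)) := by
        refine le_trans (Cardinal.mk_union_le _ _) ?_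
        refine le_trans (add_le_add Cardinal.mk_range_le Cardinal.mk_range_le) ?_
        rw [hmk₀, hmk₁]
        refine le_trans (add_le_add
          (le_max_left _ (localWeight (H₀ ⧸ H₁.subgroupOf H₀) (QuotientGroup.mk 1)))
          (le_max_right (localWeight (G ⧸ H₀) (QuotientGroup.mk 1)) _)) ?_
        rw [Cardinal.add_eq_self hinf]
      refine le_trans (localWeight_le_of_pseudobase hne hsand hS) ?_
      exact max_le hcard hinf
    · -- finite case: the base point is isolated everywhere
      push_neg at hinf
      have hκ₀ : localWeight (G ⧸ H₀) (QuotientGroup.mk 1) < Cardinal.aleph0 :=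
        lt_of_le_of_lt (le_max_left _ _) hinf
      have hκ₁ : localWeight (H₀ ⧸ H₁.subgroupOf H₀) (QuotientGroup.mk 1)
          < Cardinal.aleph0 := lt_of_le_of_lt (le_max_right _ _) hinf
      have hb₀ : {(QuotientGroup.mk 1 : G ⧸ H₀)} ∈ 𝓝 (QuotientGroup.mk 1 : G ⧸ H₀) :=
        singleton_mem_nhds_of_localWeight_lt_aleph0 hκ₀ (coset_sep h0)
      have hp : {(QuotientGroup.mk 1 : H₀ ⧸ H₁.subgroupOf H₀)}
          ∈ 𝓝 (QuotientGroup.mk 1 : H₀ ⧸ H₁.subgroupOf H₀) :=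
        singleton_mem_nhds_of_localWeight_lt_aleph0 hκ₁ (coset_sep h1')
      have hF : qmap H₀ H₁ hle ⁻¹' {QuotientGroup.mk 1} ∈
          𝓝 (QuotientGroup.mk 1 : G ⧸ H₁) := by
        refine (continuous_qmap hle).continuousAt.preimage_mem_nhds ?_
        rw [qmap_mk]
        exact hb₀
      obtain ⟨V, hV, hVp⟩ : ∃ V ∈ 𝓝 (QuotientGroup.mk 1 : G ⧸ H₁),
          emap H₀ H₁ ⁻¹' V ⊆ {(QuotientGroup.mk 1 : H₀ ⧸ H₁.subgroupOf H₀)} := by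
        refine mem_comap.mp ?_
        rw [← nhds_comap_emap hle]
        exact hp
      have hsub : V ∩ (qmap H₀ H₁ hle ⁻¹' {QuotientGroup.mk 1})
          ⊆ {(QuotientGroup.mk 1 : G ⧸ H₁)} := by
        rintro z ⟨hzV, hzF⟩
        obtain ⟨w, rfl⟩ : z ∈ Set.range (emap H₀ H₁) := by
          rw [range_emap hle]; exact hzF
        have hw := hVp hzV
        rw [mem_singleton_iff] at hw
        rw [hw, hpt]
        rfl
      have hb : {(QuotientGroup.mk 1 : G ⧸ H₁)} ∈ 𝓝 (QuotientGroup.mk 1 : G ⧸ H₁) :=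
        mem_of_superset (inter_mem hV hF) hsub
      exact le_trans (localWeight_le_one_of_isolated hb)
        (le_trans (one_le_localWeight _) (le_max_left _ _))
  · -- χ(G/H₀) ≤ χ(G/H₁)
    have := localWeight_image_le (continuous_qmap hle) (isOpenMap_qmap hle)
      (QuotientGroup.mk 1 : G ⧸ H₁)
    rwa [qmap_mk] at this
  · -- χ(H₀/H₁) ≤ χ(G/H₁)
    have h := nhds_comap_emap hle (G := G) (H₀ := H₀) (H₁ := H₁)
    rw [← hpt] at h
    exact localWeight_comap_le h
end

section
/- Let G be a σ-compact locally compact group, H a closed subgroup, and N = ⋂_{x∈G} xHx⁻¹ the normal core of H. Then χ(G/N) ≤ χ(G/H) + ℵ₀. -/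
open Topology

open Set Pointwise

section Aux

variable {G : Type*} [Group G] [TopologicalSpace G] [IsTopologicalGroup G]

theorem closure_subset_mulnhds (V B : Set G) (hV : V ∈ 𝓝 (1:G)) : closure B ⊆ V * B := by
  intro y hy
  have hφ : Filter.map (fun v : G => v⁻¹ * y) (𝓝 1) = 𝓝 y := by
    rw [show (fun v : G => v⁻¹ * y) = ⇑((Homeomorph.inv G).trans (Homeomorph.mulRight y)) from rfl,
      Homeomorph.map_nhds_eq]
    simp
  have ht : (fun v : G => v⁻¹ * y) '' V ∈ 𝓝 y := by
    rw [← hφ]; exact Filter.image_mem_map hV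
  obtain ⟨z, hzt, hzB⟩ := mem_closure_iff_nhds.1 hy _ ht
  obtain ⟨v, hv, rfl⟩ := hzt
  exact ⟨v, hv, v⁻¹ * y, hzB, by group⟩

theorem iInter_closure_preimage_subset (H : Subgroup G) (hcl : IsClosed (H : Set G))
    (S : Set (Set (G ⧸ H)))
    (hS : (𝓝 (QuotientGroup.mk 1 : G ⧸ H)).HasBasis (· ∈ S) id) :
    ⋂ s ∈ S, closure ((QuotientGroup.mk : G → G ⧸ H) ⁻¹' s) ⊆ (H : Set G) := by
  intro y hy
  by_contra hyH
  set π : G → G ⧸ H := QuotientGroup.mk with hπ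
  have hclπy : IsClosed {(π y : G ⧸ H)} := by
    rw [← (QuotientGroup.isQuotientMap_mk H).isClosed_preimage]
    have heq : π ⁻¹' {π y} = (fun g => y⁻¹ * g) ⁻¹' (H : Set G) := by
      ext g
      simp only [mem_preimage, mem_singleton_iff, SetLike.mem_coe]
      rw [show π g = π y ↔ π y = π g from eq_comm, hπ, QuotientGroup.eq]
    rw [heq]
    exact hcl.preimage (continuous_const.mul continuous_id)
  set Ω : Set (G ⧸ H) := {π y}ᶜ with hΩ
  have h1Ω : π 1 ∈ Ω := by
    simp only [hΩ, mem_compl_iff, mem_singleton_iff]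
    intro h
    exact hyH (by simpa using QuotientGroup.eq.1 h)
  have hopen : IsOpen (π ⁻¹' Ω) := hclπy.isOpen_compl.preimage continuous_quot_mk
  obtain ⟨V, hVopen, hV1, hVV⟩ :=
    exists_open_nhds_one_mul_subset (hopen.mem_nhds h1Ω)
  have hπV : π '' V ∈ 𝓝 (π 1) :=
    QuotientGroup.isOpenMap_coe.image_mem_nhds (hVopen.mem_nhds hV1)
  obtain ⟨s, hsS, hssub⟩ := hS.mem_iff.1 hπV
  have hys : y ∈ closure (π ⁻¹' s) := mem_iInter₂.1 hy s hsS
  have hsub1 : π ⁻¹' s ⊆ V * (H : Set G) := by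
    calc π ⁻¹' s ⊆ π ⁻¹' (π '' V) := preimage_mono hssub
      _ = V * (H : Set G) := QuotientGroup.preimage_image_mk_eq_mul H V
  have hy2 : y ∈ (V * V) * (H : Set G) := by
    have := (closure_mono hsub1).trans (closure_subset_mulnhds V _ (hVopen.mem_nhds hV1)) hys
    rwa [mul_assoc]
  obtain ⟨w, hw, h, hh, rfl⟩ := hy2
  have : π (w * h) ∈ Ω := by
    rw [hπ, QuotientGroup.mk_mul_of_mem w hh]
    exact hVV hw
  exact this rfl

end Aux

/-- If `G` is a σ-compact locally compact group, `H` a closed subgroup,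
and `N = ⋂_{x ∈ G} x H x⁻¹` the normal core of `H`, then `χ(G/N) ≤ χ(G/H) + ℵ₀`. -/
theorem stmt_9 {G : Type u} [Group G] [TopologicalSpace G] [IsTopologicalGroup G]
    [LocallyCompactSpace G] [T2Space G] [SigmaCompactSpace G]
    (H : Subgroup G) (hcl : IsClosed (H : Set G)) :
    localWeight (G ⧸ H.normalCore) (QuotientGroup.mk 1) ≤
      localWeight (G ⧸ H) (QuotientGroup.mk 1) + Cardinal.aleph0 := by
  classical
  set N : Subgroup G := H.normalCore with hNdef
  -- the infimum defining `localWeight (G ⧸ H)` is attained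
  obtain ⟨B, hB⟩ : ∃ B : {S : Set (Set (G ⧸ H)) //
      (𝓝 (QuotientGroup.mk 1 : G ⧸ H)).HasBasis (· ∈ S) id},
      Cardinal.mk B.1 = localWeight (G ⧸ H) (QuotientGroup.mk 1) := by
    have hne : Nonempty {S : Set (Set (G ⧸ H)) //
        (𝓝 (QuotientGroup.mk 1 : G ⧸ H)).HasBasis (· ∈ S) id} :=
      ⟨⟨(𝓝 (QuotientGroup.mk 1 : G ⧸ H)).sets, Filter.basis_sets _⟩⟩
    have := csInf_mem (Set.range_nonempty
      (fun B : {S : Set (Set (G ⧸ H)) //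
        (𝓝 (QuotientGroup.mk 1 : G ⧸ H)).HasBasis (· ∈ S) id} => Cardinal.mk B.1))
    obtain ⟨B, hB⟩ := this
    exact ⟨B, by rw [localWeight, ← sInf_range]; exact hB⟩
  set S := B.1 with hSdef
  have hS := B.2
  set πH : G → G ⧸ H := QuotientGroup.mk with hπH
  set πN : G → G ⧸ N := QuotientGroup.mk with hπN
  obtain ⟨Q, hQc, hQmem⟩ := exists_compact_mem_nhds (1 : G)
  -- the sets V s, W n s, T p
  set V : S → Set G := fun s => πH ⁻¹' (interior s.1) with hVdef
  have hVopen : ∀ s, IsOpen (V s) := fun s => isOpen_interior.preimage continuous_quot_mk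
  have hV1 : ∀ s, (1 : G) ∈ V s := fun s =>
    mem_interior_iff_mem_nhds.2 (hS.mem_of_mem s.2)
  set W : ℕ → S → Set G :=
    fun n s => {g | ∀ x ∈ compactCovering G n, x * g * x⁻¹ ∈ V s} with hWdef
  have hW : ∀ n s, W n s ∈ 𝓝 (1 : G) := by
    intro n s
    have := (isCompact_compactCovering G n).eventually_forall_of_forall_eventually
      (x₀ := (1 : G)) (P := fun g x => x * g * x⁻¹ ∈ V s) ?_
    · exact this
    · intro x hx
      have hc : Continuous (fun z : G × G => z.2 * z.1 * z.2⁻¹) := by fun_prop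
      have : (fun z : G × G => z.2 * z.1 * z.2⁻¹) ⁻¹' (V s) ∈ 𝓝 ((1 : G), x) := by
        apply hc.continuousAt.preimage_mem_nhds
        simpa using (hVopen s).mem_nhds (hV1 s)
      exact this
  set T : ULift.{u} ℕ × S → Set (G ⧸ N) :=
    fun p => πN '' (Q ∩ W p.1.down p.2) with hTdef
  have hTmem : ∀ p, T p ∈ 𝓝 (QuotientGroup.mk 1 : G ⧸ N) := by
    intro p
    exact QuotientGroup.isOpenMap_coe.image_mem_nhds
      (Filter.inter_mem hQmem (hW p.1.down p.2))
  -- every neighbourhood contains some `T p`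
  have hTsub : ∀ t ∈ 𝓝 (QuotientGroup.mk 1 : G ⧸ N), ∃ p, T p ⊆ t := by
    intro t ht
    set O : Set G := πN ⁻¹' (interior t) with hOdef
    have hOopen : IsOpen O := isOpen_interior.preimage continuous_quot_mk
    have hNO : (N : Set G) ⊆ O := by
      intro g hg
      show πN g ∈ interior t
      have : πN g = QuotientGroup.mk 1 := by
        rw [hπN, QuotientGroup.mk_one, QuotientGroup.eq_one_iff]; exact hg
      rw [this]
      exact mem_interior_iff_mem_nhds.2 ht
    have hQOc : IsCompact (Q \ O) := hQc.diff hOopen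
    -- first compactness argument
    have hempty : (Q \ O) ∩ ⋂ x : G, {g | x * g * x⁻¹ ∈ H} = ∅ := by
      rw [eq_empty_iff_forall_notMem]
      rintro g ⟨hg1, hg2⟩
      have hgN : g ∈ N := by
        have : ∀ b : G, b * g * b⁻¹ ∈ H := fun b => mem_iInter.1 hg2 b
        exact this
      exact hg1.2 (hNO hgN)
    obtain ⟨u, hu⟩ := hQOc.elim_finite_subfamily_closed _
      (fun x => hcl.preimage (by fun_prop : Continuous fun g : G => x * g * x⁻¹)) hempty
    -- choose n with u ⊆ compactCovering G n
    choose f hf using fun x : G => exists_mem_compactCovering x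
    set n : ℕ := u.sup f with hndef
    have hun : ∀ x ∈ u, x ∈ compactCovering G n :=
      fun x hx => compactCovering_subset G (Finset.le_sup hx) (hf x)
    -- second compactness argument
    have hkey := iInter_closure_preimage_subset H hcl S hS
    have hempty2 : (Q \ O) ∩
        ⋂ s : S, (⋂ x ∈ u, {g | x * g * x⁻¹ ∈ closure (πH ⁻¹' s.1)}) = ∅ := by
      rw [eq_empty_iff_forall_notMem]
      rintro g ⟨hg1, hg2⟩
      have : g ∈ ⋂ x ∈ u, {g | x * g * x⁻¹ ∈ H} := by
        rw [mem_iInter₂]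
        intro x hx
        have : x * g * x⁻¹ ∈ ⋂ s ∈ S, closure (πH ⁻¹' s) := by
          rw [mem_iInter₂]
          intro s hsS
          exact mem_iInter₂.1 (mem_iInter.1 hg2 ⟨s, hsS⟩) x hx
        exact hkey this
      rw [eq_empty_iff_forall_notMem] at hu
      exact hu g ⟨hg1, this⟩
    obtain ⟨u₂, hu₂⟩ := hQOc.elim_finite_subfamily_closed _
      (fun s => isClosed_biInter fun x _ =>
        isClosed_closure.preimage (by fun_prop : Continuous fun g : G => x * g * x⁻¹)) hempty2
    -- choose s* below the finite intersection
    have hmem2 : (⋂ s ∈ u₂, (s : S).1) ∈ 𝓝 (QuotientGroup.mk 1 : G ⧸ H) :=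
      (Filter.biInter_finset_mem u₂).2 fun s _ => hS.mem_of_mem s.2
    obtain ⟨sstar, hsstarS, hsstarsub⟩ := hS.mem_iff.1 hmem2
    refine ⟨⟨ULift.up n, ⟨sstar, hsstarS⟩⟩, ?_⟩
    rintro _ ⟨g, ⟨hgQ, hgW⟩, rfl⟩
    suffices hgO : g ∈ O by exact interior_subset hgO
    by_contra hgO
    rw [eq_empty_iff_forall_notMem] at hu₂
    refine hu₂ g ⟨⟨hgQ, hgO⟩, ?_⟩
    rw [mem_iInter₂]
    intro s hs
    rw [mem_iInter₂]
    intro x hx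
    have h1 : x * g * x⁻¹ ∈ V ⟨sstar, hsstarS⟩ := hgW x (hun x hx)
    have h2 : interior sstar ⊆ s.1 := by
      refine interior_subset.trans (hsstarsub.trans ?_)
      exact fun z hz => mem_iInter₂.1 hz s hs
    exact subset_closure (preimage_mono h2 h1)
  -- assemble the basis and count
  have hbasis : (𝓝 (QuotientGroup.mk 1 : G ⧸ N)).HasBasis (· ∈ Set.range T) id := by
    rw [Filter.hasBasis_iff]
    intro t
    constructor
    · intro ht
      obtain ⟨p, hp⟩ := hTsub t ht
      exact ⟨T p, ⟨p, rfl⟩, hp⟩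
    · rintro ⟨r, ⟨p, rfl⟩, hrt⟩
      exact Filter.mem_of_superset (hTmem p) hrt
  have h1 : localWeight (G ⧸ N) (QuotientGroup.mk 1) ≤ Cardinal.mk (Set.range T) :=
    ciInf_le' _ (⟨Set.range T, hbasis⟩ :
      {S : Set (Set (G ⧸ N)) // (𝓝 (QuotientGroup.mk 1 : G ⧸ N)).HasBasis (· ∈ S) id})
  have h2 : Cardinal.mk (Set.range T) ≤ Cardinal.mk (ULift.{u} ℕ × S) :=
    Cardinal.mk_range_le
  have h3 : Cardinal.mk (ULift.{u} ℕ × S) = Cardinal.aleph0 * Cardinal.mk S := by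
    simp [Cardinal.mk_prod]
  have h4 : Cardinal.aleph0 * Cardinal.mk S ≤
      Cardinal.mk S + Cardinal.aleph0 := by
    refine (Cardinal.mul_le_max _ _).trans ?_
    simp only [max_le_iff]
    refine ⟨⟨le_add_self, self_le_add_right _ _⟩, le_add_self⟩
  calc localWeight (G ⧸ N) (QuotientGroup.mk 1) ≤ Cardinal.mk (Set.range T) := h1
    _ ≤ Cardinal.mk (ULift.{u} ℕ × S) := h2
    _ = Cardinal.aleph0 * Cardinal.mk S := h3
    _ ≤ Cardinal.mk S + Cardinal.aleph0 := h4
    _ = localWeight (G ⧸ H) (QuotientGroup.mk 1) + Cardinal.aleph0 := by rw [hB]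
end

section
/- Let G be a locally compact group and γ > 0 an ordinal. Suppose (K_α)_{α≤γ} is a decreasing family of compact subgroups of G with χ(K_α/K_{α+1}) = ℵ₀ for all α < γ, and K_β = ⋂_{α<β} K_α for all limit ordinals β ≤ γ. Then χ(G/K_γ) = |γ| + χ(G/K₀) + ℵ₀ (cardinal sum, equivalently maximum). -/
open Topology

open Filter Set Pointwise

universe u

noncomputable def fChar {X : Type u} (f : Filter X) : Cardinal.{u} :=
  ⨅ B : {S : Set (Set X) // f.HasBasis (· ∈ S) id}, Cardinal.mk B.1

variable {X Y : Type u} {f : Filter X}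

instance fChar.nonempty (f : Filter X) : Nonempty {S : Set (Set X) // f.HasBasis (· ∈ S) id} :=
  ⟨⟨f.sets, f.basis_sets⟩⟩

theorem fChar_le {S : Set (Set X)} (h : f.HasBasis (· ∈ S) id) : fChar f ≤ Cardinal.mk S :=
  ciInf_le' _ (⟨S, h⟩ : {S : Set (Set X) // f.HasBasis (· ∈ S) id})

theorem fChar_le_of_basis {ι : Sort*} {p : ι → Prop} {s : ι → Set X} (h : f.HasBasis p s)
    (S : Set (Set X)) (hS : ∀ i, p i → s i ∈ S) (hS' : ∀ U ∈ S, U ∈ f) :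
    fChar f ≤ Cardinal.mk S := by
  refine fChar_le ⟨fun t => ?_⟩
  constructor
  · intro ht
    obtain ⟨i, hi, hit⟩ := h.mem_iff.1 ht
    exact ⟨s i, ⟨hS i hi, hit⟩⟩
  · rintro ⟨U, hU, hUt⟩
    exact mem_of_superset (hS' U hU) hUt

theorem exists_basis_card_eq_fChar (f : Filter X) :
    ∃ S : Set (Set X), f.HasBasis (· ∈ S) id ∧ Cardinal.mk S = fChar f := by
  have h : fChar f ∈ Set.range fun B : {S : Set (Set X) // f.HasBasis (· ∈ S) id} =>
      Cardinal.mk B.1 := by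
    rw [fChar, iInf]
    exact csInf_mem (Set.range_nonempty _)
  obtain ⟨⟨S, hS⟩, h⟩ := h
  exact ⟨S, hS, h⟩

/-- Pushing forward a filter does not raise its character. -/
theorem fChar_map_le (q : X → Y) (f : Filter X) : fChar (Filter.map q f) ≤ fChar f := by
  obtain ⟨S, hS, hcard⟩ := exists_basis_card_eq_fChar f
  rw [← hcard]
  have : (Filter.map q f).HasBasis (· ∈ S) (fun U => q '' U) := by
    constructor
    intro t
    rw [Filter.mem_map]
    constructor
    · intro ht
      obtain ⟨U, hU, hUt⟩ := hS.mem_iff.1 ht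
      exact ⟨U, hU, by rwa [Set.image_subset_iff]⟩
    · rintro ⟨U, hU, hUt⟩
      exact mem_of_superset (hS.mem_of_mem hU) (Set.image_subset_iff.1 hUt)
  calc fChar (Filter.map q f) ≤ Cardinal.mk ((fun U => q '' U) '' S) := by
        refine fChar_le_of_basis this _ (fun U hU => Set.mem_image_of_mem _ hU) ?_
        rintro _ ⟨U, hU, rfl⟩
        exact this.mem_of_mem hU
    _ ≤ Cardinal.mk S := Cardinal.mk_image_le

theorem fChar_comap_le (q : Y → X) (f : Filter X) : fChar (Filter.comap q f) ≤ fChar f := by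
  obtain ⟨S, hS, hcard⟩ := exists_basis_card_eq_fChar f
  rw [← hcard]
  have h2 := hS.comap q
  calc fChar (Filter.comap q f) ≤ Cardinal.mk ((fun U => q ⁻¹' U) '' S) := by
        refine fChar_le_of_basis h2 _ (fun U hU => Set.mem_image_of_mem _ hU) ?_
        rintro _ ⟨U, hU, rfl⟩
        exact h2.mem_of_mem hU
    _ ≤ Cardinal.mk S := Cardinal.mk_image_le

open Pointwise

section GroupBridge

variable {H : Type u} [Group H] [TopologicalSpace H] [IsTopologicalGroup H]

theorem map_nhdsSet_subgroup_eq (N : Subgroup H) :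
    Filter.map (QuotientGroup.mk : H → H ⧸ N) (𝓝ˢ (N : Set H)) =
      𝓝 ((QuotientGroup.mk 1 : H ⧸ N)) := by
  apply le_antisymm
  · intro t ht
    rw [Filter.mem_map, mem_nhdsSet_iff_forall]
    intro x hx
    have hqx : (QuotientGroup.mk x : H ⧸ N) = QuotientGroup.mk 1 := by
      rw [QuotientGroup.eq]
      simpa using N.inv_mem hx
    exact QuotientGroup.continuous_mk.continuousAt.preimage_mem_nhds (hqx ▸ ht)
  · intro t ht
    rw [Filter.mem_map] at ht
    obtain ⟨U, hUo, hNU, hUt⟩ := mem_nhdsSet_iff_exists.1 ht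
    refine Filter.mem_of_superset ((QuotientGroup.isOpenMap_coe U hUo).mem_nhds
      ⟨1, hNU N.one_mem, rfl⟩) (Set.image_subset_iff.2 hUt)

theorem comap_nhds_subgroup_eq (N : Subgroup H) (hN : IsCompact (N : Set H)) :
    Filter.comap (QuotientGroup.mk : H → H ⧸ N) (𝓝 ((QuotientGroup.mk 1 : H ⧸ N))) =
      𝓝ˢ (N : Set H) := by
  apply le_antisymm
  · intro t ht
    obtain ⟨U, hUo, hNU, hUt⟩ := mem_nhdsSet_iff_exists.1 ht
    obtain ⟨P, hP, hPN⟩ := compact_open_separated_mul_left hN hUo hNU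
    have h1P : (1 : H) ∈ interior P := mem_interior_iff_mem_nhds.2 hP
    set V : Set H := interior P * (N : Set H) with hV
    have hVo : IsOpen V := isOpen_interior.mul_right
    have hNV : (N : Set H) ⊆ V := fun x hx => ⟨1, h1P, x, hx, one_mul x⟩
    refine ⟨QuotientGroup.mk '' V, ?_, ?_⟩
    · refine ((QuotientGroup.isOpenMap_coe V hVo).mem_nhds ?_)
      exact ⟨1, hNV N.one_mem, rfl⟩
    · rw [QuotientGroup.preimage_image_mk_eq_mul, hV, mul_assoc, coe_mul_coe]
      exact (Set.mul_subset_mul_right interior_subset).trans (hPN.trans hUt)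
  · rw [← map_nhdsSet_subgroup_eq]
    exact Filter.le_comap_map

theorem localWeight_quotient_eq (N : Subgroup H) (hN : IsCompact (N : Set H)) :
    localWeight (H ⧸ N) (QuotientGroup.mk 1) = fChar (𝓝ˢ (N : Set H)) := by
  have h1 : localWeight (H ⧸ N) (QuotientGroup.mk 1) =
      fChar (𝓝 ((QuotientGroup.mk 1 : H ⧸ N))) := rfl
  rw [h1]
  apply le_antisymm
  · rw [← map_nhdsSet_subgroup_eq]
    exact fChar_map_le _ _
  · rw [← comap_nhds_subgroup_eq N hN]
    exact fChar_comap_le _ _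

end GroupBridge

section GGroup

variable {G : Type u} [Group G] [TopologicalSpace G] [IsTopologicalGroup G]

theorem closure_subset_mul_of_nhds {s P : Set G} (hP : P ∈ 𝓝 (1 : G)) :
    closure s ⊆ s * P := by
  intro x hx
  have hPinv : P⁻¹ ∈ 𝓝 (1 : G) := by
    simpa using inv_mem_nhds_one G hP
  have ht : (fun p => x * p) '' P⁻¹ ∈ 𝓝 x := by
    have := (Homeomorph.mulLeft x).isOpenMap.image_mem_nhds (x := (1 : G)) hPinv
    simpa using this
  obtain ⟨y, hy, hys⟩ := mem_closure_iff_nhds.1 hx _ ht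
  obtain ⟨p, hp, rfl⟩ := hy
  rw [Set.mem_inv] at hp
  exact ⟨x * p, hys, p⁻¹, hp, by group⟩

/-- A smaller compact subgroup has a larger neighbourhood-filter character. -/
theorem fChar_nhdsSet_antitone (A B : Subgroup G) (hB : IsCompact (B : Set G))
    (hAB : A ≤ B) : fChar (𝓝ˢ (B : Set G)) ≤ fChar (𝓝ˢ (A : Set G)) := by
  obtain ⟨S, hS, hcard⟩ := exists_basis_card_eq_fChar (𝓝ˢ (A : Set G))
  have hbasis : (𝓝ˢ (B : Set G)).HasBasis (· ∈ S) (fun U => U * (B : Set G)) := by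
    constructor
    intro t
    constructor
    · intro ht
      obtain ⟨W, hWo, hBW, hWt⟩ := mem_nhdsSet_iff_exists.1 ht
      obtain ⟨P, hP, hPB⟩ := compact_open_separated_mul_left hB hWo hBW
      have h1P : (1 : G) ∈ interior P := mem_interior_iff_mem_nhds.2 hP
      have hmem : interior P * (A : Set G) ∈ 𝓝ˢ (A : Set G) := by
        refine mem_nhdsSet_iff_exists.2 ⟨_, isOpen_interior.mul_right, ?_, Set.Subset.rfl⟩
        exact fun a ha => ⟨1, h1P, a, ha, one_mul a⟩
      obtain ⟨U, hU, hUsub⟩ := hS.mem_iff.1 hmem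
      refine ⟨U, hU, ?_⟩
      calc U * (B : Set G) ⊆ interior P * (A : Set G) * (B : Set G) :=
            Set.mul_subset_mul_right hUsub
        _ ⊆ P * ((B : Set G) * (B : Set G)) := by
            rw [mul_assoc]
            exact Set.mul_subset_mul interior_subset
              (Set.mul_subset_mul_right (fun a ha => hAB ha))
        _ = P * (B : Set G) := by rw [coe_mul_coe]
        _ ⊆ t := hPB.trans hWt
    · rintro ⟨U, hU, hUt⟩
      obtain ⟨W, hWo, hAW, hWU⟩ := mem_nhdsSet_iff_exists.1 (hS.mem_of_mem hU)
      refine mem_nhdsSet_iff_exists.2 ⟨W * (B : Set G), hWo.mul_right, ?_, ?_⟩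
      · exact fun b hb => ⟨1, hAW A.one_mem, b, hb, one_mul b⟩
      · exact (Set.mul_subset_mul_right hWU).trans hUt
  rw [← hcard]
  calc fChar (𝓝ˢ (B : Set G)) ≤ Cardinal.mk ((fun U => U * (B : Set G)) '' S) := by
        refine fChar_le_of_basis hbasis _ (fun U hU => Set.mem_image_of_mem _ hU) ?_
        rintro _ ⟨U, hU, rfl⟩
        exact hbasis.mem_of_mem hU
    _ ≤ Cardinal.mk S := Cardinal.mk_image_le

end GGroup

theorem one_le_fChar {X : Type u} (f : Filter X) : 1 ≤ fChar f := by
  refine le_ciInf fun B => ?_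
  rw [Cardinal.one_le_iff_ne_zero, Cardinal.mk_ne_zero_iff]
  obtain ⟨U, hU, -⟩ := B.2.mem_iff.1 (Filter.univ_mem)
  exact ⟨⟨U, hU⟩⟩

theorem fChar_le_mk_index {X : Type u} {f : Filter X} {ι : Type u} {s : ι → Set X}
    (h : f.HasBasis (fun _ => True) s) : fChar f ≤ Cardinal.mk ι := by
  calc fChar f ≤ Cardinal.mk (Set.range s) := by
        refine fChar_le_of_basis h _ (fun i _ => Set.mem_range_self i) ?_
        rintro _ ⟨i, rfl⟩
        exact h.mem_of_mem trivial
    _ ≤ Cardinal.mk ι := Cardinal.mk_range_le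

theorem localWeight_le_one_of_subsingleton {X : Type u} [TopologicalSpace X] [Subsingleton X]
    (x : X) : localWeight X x ≤ 1 := by
  have h : (𝓝 x).HasBasis (· ∈ ({Set.univ} : Set (Set X))) id := by
    constructor
    intro t
    constructor
    · intro ht
      refine ⟨Set.univ, rfl, fun y _ => ?_⟩
      exact Subsingleton.elim x y ▸ mem_of_mem_nhds ht
    · rintro ⟨U, rfl, hUt⟩
      exact Filter.mem_of_superset Filter.univ_mem hUt
  calc localWeight X x ≤ Cardinal.mk ({Set.univ} : Set (Set X)) := fChar_le h
    _ = 1 := Cardinal.mk_singleton _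

section GGroup2

variable {G : Type u} [Group G] [TopologicalSpace G] [IsTopologicalGroup G]

theorem nhdsSet_subgroupOf_eq_comap (N L : Subgroup G) (hNL : N ≤ L)
    (hL : IsClosed (L : Set G)) :
    𝓝ˢ ((N.subgroupOf L : Subgroup ↥L) : Set ↥L) =
      Filter.comap (Subtype.val : ↥L → G) (𝓝ˢ (N : Set G)) := by
  have hcoe : ((N.subgroupOf L : Subgroup ↥L) : Set ↥L) =
      (Subtype.val : ↥L → G) ⁻¹' (N : Set G) := by
    ext x
    simp [Subgroup.mem_subgroupOf]
  ext t
  constructor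
  · intro ht
    obtain ⟨O, hOo, hsub, hOt⟩ := mem_nhdsSet_iff_exists.1 ht
    obtain ⟨O', hO'o, hpre⟩ := isOpen_induced_iff.1 hOo
    refine Filter.mem_comap.2 ⟨O' ∪ (↑L)ᶜ, ?_, ?_⟩
    · refine mem_nhdsSet_iff_exists.2 ⟨O' ∪ (↑L)ᶜ, hO'o.union hL.isOpen_compl, ?_, le_refl _⟩
      intro x hx
      have : (⟨x, hNL hx⟩ : ↥L) ∈ O := hsub (by rw [hcoe]; exact hx)
      rw [← hpre] at this
      exact Set.mem_union_left _ this
    · intro y hy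
      rcases hy with hy | hy
      · exact hOt (by rw [← hpre]; exact hy)
      · exact absurd y.2 hy
  · intro ht
    obtain ⟨W, hW, hsub⟩ := Filter.mem_comap.1 ht
    obtain ⟨U, hUo, hNU, hUW⟩ := mem_nhdsSet_iff_exists.1 hW
    refine mem_nhdsSet_iff_exists.2 ⟨Subtype.val ⁻¹' U, hUo.preimage continuous_subtype_val,
      ?_, (Set.preimage_mono hUW).trans hsub⟩
    rw [hcoe]
    exact Set.preimage_mono hNU

theorem localWeight_subgroup_quotient_eq (L N : Subgroup G) (hN : IsCompact (N : Set G))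
    (hNL : N ≤ L) (hL : IsCompact (L : Set G)) [T2Space G] :
    localWeight (↥L ⧸ N.subgroupOf L) (QuotientGroup.mk 1) =
      fChar (Filter.comap (Subtype.val : ↥L → G) (𝓝ˢ (N : Set G))) := by
  have hcoe : ((N.subgroupOf L : Subgroup ↥L) : Set ↥L) =
      (Subtype.val : ↥L → G) ⁻¹' (N : Set G) := by
    ext x
    simp [Subgroup.mem_subgroupOf]
  have hcomp : IsCompact ((N.subgroupOf L : Subgroup ↥L) : Set ↥L) := by
    have himg : (Subtype.val : ↥L → G) '' ((Subtype.val : ↥L → G) ⁻¹' (N : Set G)) =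
        (N : Set G) := by
      ext y
      constructor
      · rintro ⟨x, hx, rfl⟩
        exact hx
      · intro hy
        exact ⟨⟨y, hNL hy⟩, hy, rfl⟩
    rw [Subtype.isCompact_iff, hcoe, himg]
    exact hN
  rw [localWeight_quotient_eq _ hcomp, nhdsSet_subgroupOf_eq_comap N L hNL hL.isClosed]

end GGroup2

section SuccUpper

variable {G : Type u} [Group G] [TopologicalSpace G] [IsTopologicalGroup G]
  [LocallyCompactSpace G] [T2Space G]

theorem fChar_nhdsSet_le_mul (N L : Subgroup G) (hN : IsCompact (N : Set G))
    (hL : IsCompact (L : Set G)) (hNL : N ≤ L) :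
    fChar (𝓝ˢ (N : Set G)) ≤ fChar (𝓝ˢ (L : Set G)) *
      fChar (Filter.comap (Subtype.val : ↥L → G) (𝓝ˢ (N : Set G))) := by
  obtain ⟨B, hB, hBcard⟩ := exists_basis_card_eq_fChar (𝓝ˢ (L : Set G))
  obtain ⟨C, hC, hCcard⟩ :=
    exists_basis_card_eq_fChar (Filter.comap (Subtype.val : ↥L → G) (𝓝ˢ (N : Set G)))
  obtain ⟨Q, hQc, hQm⟩ := exists_compact_mem_nhds (1 : G)
  -- for each `V ∈ C` construct a small open neighbourhood `T V` of `N`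
  have key : ∀ V : ↥C, ∃ T : Set G, IsOpen T ∧ (N : Set G) ⊆ T ∧ IsCompact (closure T) ∧
      closure T ∩ (L : Set G) ⊆ Subtype.val '' V.1 := by
    rintro ⟨V, hVC⟩
    obtain ⟨W, hW, hWV⟩ := Filter.mem_comap.1 (hC.mem_of_mem hVC)
    obtain ⟨O, hOo, hNO, hOW⟩ := mem_nhdsSet_iff_exists.1 hW
    obtain ⟨R, hR, hNR⟩ := compact_open_separated_mul_right hN hOo hNO
    obtain ⟨P₀, hP₀o, hP₀1, hP₀sq⟩ := exists_open_nhds_one_mul_subset hR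
    set P : Set G := P₀ ∩ interior Q with hP
    have hPo : IsOpen P := hP₀o.inter isOpen_interior
    have h1P : (1 : G) ∈ P := ⟨hP₀1, mem_interior_iff_mem_nhds.2 hQm⟩
    refine ⟨(N : Set G) * P, hPo.mul_left, fun x hx => ⟨x, hx, 1, h1P, mul_one x⟩,
      ?_, ?_⟩
    · refine IsCompact.of_isClosed_subset (hN.mul hQc) isClosed_closure
        (closure_minimal ?_ ((hN.mul hQc).isClosed))
      exact Set.mul_subset_mul_left (Set.inter_subset_right.trans interior_subset)
    · have hcl : closure ((N : Set G) * P) ⊆ O := by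
        refine (closure_subset_mul_of_nhds (hPo.mem_nhds h1P)).trans ?_
        rw [mul_assoc]
        refine (Set.mul_subset_mul_left ?_).trans hNR
        exact (Set.mul_subset_mul Set.inter_subset_left Set.inter_subset_left).trans hP₀sq
      intro x hx
      have hxL : x ∈ (L : Set G) := hx.2
      have : (⟨x, hxL⟩ : ↥L) ∈ V := hWV (hOW (hcl hx.1))
      exact ⟨⟨x, hxL⟩, this, rfl⟩
  choose T hTo hTN hTc hTsub using key
  -- the combined family is a basis of `𝓝ˢ N`
  have hbasis : (𝓝ˢ (N : Set G)).HasBasis (fun _ : ↥B × ↥C => True)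
      (fun p => p.1.1 ∩ T p.2) := by
    constructor
    intro t
    constructor
    · intro ht
      obtain ⟨W, hWo, hNW, hWt⟩ := mem_nhdsSet_iff_exists.1 ht
      have hWmem : W ∈ 𝓝ˢ (N : Set G) := mem_nhdsSet_iff_exists.2 ⟨W, hWo, hNW, le_refl _⟩
      obtain ⟨V, hVC, hVsub⟩ := hC.mem_iff.1 (Filter.preimage_mem_comap hWmem)
      set Vv : ↥C := ⟨V, hVC⟩
      have hclL : closure (T Vv) ∩ (L : Set G) ⊆ W := by
        refine (hTsub Vv).trans ?_
        rintro _ ⟨y, hy, rfl⟩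
        exact hVsub hy
      set D : Set G := closure (T Vv) \ W with hD
      have hDc : IsCompact D := (hTc Vv).diff hWo
      have hDL : D ∩ (L : Set G) = ∅ := by
        rw [Set.eq_empty_iff_forall_notMem]
        rintro x ⟨⟨hx1, hx2⟩, hxL⟩
        exact hx2 (hclL ⟨hx1, hxL⟩)
      have hBne : Nonempty ↥B := by
        obtain ⟨U, hU, -⟩ := hB.mem_iff.1 Filter.univ_mem
        exact ⟨⟨U, hU⟩⟩
      have hex : ∃ U : ↥B, closure U.1 ∩ D = ∅ := by
        by_contra hcon
        push_neg at hcon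
        set Z : ↥B → Set G := fun U => closure U.1 ∩ D with hZ
        have hne : ∀ U, (Z U).Nonempty := hcon
        have hdir : Directed (· ⊇ ·) Z := by
          intro U U'
          obtain ⟨U'', hU'', hsub''⟩ := hB.mem_iff.1
            (Filter.inter_mem (hB.mem_of_mem U.2) (hB.mem_of_mem U'.2))
          refine ⟨⟨U'', hU''⟩, ?_, ?_⟩
          · exact Set.inter_subset_inter_left _
              (closure_mono (hsub''.trans Set.inter_subset_left))
          · exact Set.inter_subset_inter_left _
              (closure_mono (hsub''.trans Set.inter_subset_right))
        obtain ⟨x, hx⟩ := IsCompact.nonempty_iInter_of_directed_nonempty_isCompact_isClosed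
          Z hdir hne (fun U => hDc.of_isClosed_subset (isClosed_closure.inter hDc.isClosed)
            Set.inter_subset_right)
          (fun U => isClosed_closure.inter hDc.isClosed)
        have hxD : x ∈ D := (Set.mem_iInter.1 hx hBne.some).2
        have hxL : x ∈ (L : Set G) := by
          by_contra hxL
          obtain ⟨A, Nx, hAo, hNxo, hLA, hxNx, hdisj⟩ :=
            SeparatedNhds.of_isCompact_isCompact hL isCompact_singleton
              (Set.disjoint_singleton_right.2 hxL)
          have hAmem : A ∈ 𝓝ˢ (L : Set G) := mem_nhdsSet_iff_exists.2 ⟨A, hAo, hLA, le_refl _⟩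
          obtain ⟨U, hU, hUA⟩ := hB.mem_iff.1 hAmem
          have hxU : x ∈ closure U := (Set.mem_iInter.1 hx ⟨U, hU⟩).1
          have : x ∈ closure A := closure_mono hUA hxU
          exact Set.disjoint_left.1 (hdisj.closure_left hNxo) this (hxNx rfl)
        rw [Set.eq_empty_iff_forall_notMem] at hDL
        exact hDL x ⟨hxD, hxL⟩
      obtain ⟨U, hUD⟩ := hex
      refine ⟨(U, Vv), trivial, ?_⟩
      intro x hx
      refine hWt ?_
      by_contra hxW
      have hxD : x ∈ D := ⟨subset_closure hx.2, hxW⟩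
      rw [Set.eq_empty_iff_forall_notMem] at hUD
      exact hUD x ⟨subset_closure hx.1, hxD⟩
    · rintro ⟨⟨U, V⟩, -, hsub⟩
      refine mem_nhdsSet_iff_exists.2 ⟨interior U.1 ∩ T V, isOpen_interior.inter (hTo V),
        ?_, ?_⟩
      · intro x hx
        exact ⟨subset_interior_iff_mem_nhdsSet.2 (hB.mem_of_mem U.2) (hNL hx), hTN V hx⟩
      · exact (Set.inter_subset_inter_left _ interior_subset).trans hsub
  calc fChar (𝓝ˢ (N : Set G)) ≤ Cardinal.mk (↥B × ↥C) := fChar_le_mk_index hbasis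
    _ = Cardinal.mk ↥B * Cardinal.mk ↥C := by
        rw [Cardinal.mk_prod, Cardinal.lift_id, Cardinal.lift_id]
    _ = _ := by rw [hBcard, hCcard]

end SuccUpper

private theorem card_absorb (x y : Cardinal.{u}) : x + 1 + y + Cardinal.aleph0 =
    x + y + Cardinal.aleph0 := by
  have h : x + 1 + y + Cardinal.aleph0 = (x + y + Cardinal.aleph0) + 1 := by ring
  rw [h, Cardinal.add_one_of_aleph0_le le_add_self]

/-- Let `γ > 0` be an ordinal and `(K α)_{α ≤ γ}` a decreasing family of
compact subgroups of a locally compact group `G` with `χ(K α / K (α+1)) = ℵ₀` for `α < γ`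
and `K β = ⋂_{α < β} K α` at limit ordinals `β ≤ γ`. Then
`χ(G / K γ) = |γ| + χ(G / K 0) + ℵ₀` (cardinal sum). -/
theorem stmt_10 {G : Type u} [Group G] [TopologicalSpace G] [IsTopologicalGroup G]
    [LocallyCompactSpace G] [T2Space G]
    (γ : Ordinal.{u}) (hγ : 0 < γ) (K : Ordinal.{u} → Subgroup G)
    (hcomp : ∀ α ≤ γ, IsCompact (K α : Set G))
    (hmono : ∀ α < γ, K (α + 1) ≤ K α)
    (hchi : ∀ α < γ,
      localWeight (↥(K α) ⧸ (K (α + 1)).subgroupOf (K α)) (QuotientGroup.mk 1) =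
        Cardinal.aleph0)
    (hlim : ∀ β ≤ γ, Order.IsSuccLimit β → K β = ⨅ (α : Ordinal) (_ : α < β), K α) :
    localWeight (G ⧸ K γ) (QuotientGroup.mk 1) =
      γ.card + localWeight (G ⧸ K 0) (QuotientGroup.mk 1) + Cardinal.aleph0 := by
  -- monotonicity of the family
  have hKmono : ∀ b ≤ γ, ∀ a ≤ b, K b ≤ K a := by
    intro b
    induction b using Ordinal.induction with
    | _ b IH =>
      intro hbγ a hab
      rcases Ordinal.zero_or_succ_or_isSuccLimit b with h0 | ⟨c, hc⟩ | hblim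
      · subst h0
        rw [nonpos_iff_eq_zero.1 hab]
      · subst hc
        rcases eq_or_lt_of_le hab with rfl | hlt
        · exact le_refl _
        · have hac : a ≤ c := Order.lt_succ_iff.1 hlt
          have hcγ : c < γ := lt_of_lt_of_le (Order.lt_succ c) hbγ
          have h1 : K (Order.succ c) ≤ K c := by
            rw [← Ordinal.add_one_eq_succ]
            exact hmono c hcγ
          exact h1.trans (IH c (Order.lt_succ c) hcγ.le a hac)
      · rcases eq_or_lt_of_le hab with rfl | hlt
        · exact le_refl _
        · rw [hlim b hbγ hblim]
          exact (iInf_le _ a).trans (iInf_le _ hlt)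
  -- the relative character is ℵ₀
  have hrel : ∀ α < γ, fChar (Filter.comap (Subtype.val : ↥(K α) → G)
      (𝓝ˢ (K (α + 1) : Set G))) = Cardinal.aleph0 := by
    intro α hαγ
    have hα1γ : α + 1 ≤ γ := by
      rw [Ordinal.add_one_eq_succ, Order.succ_le_iff]
      exact hαγ
    rw [← localWeight_subgroup_quotient_eq (K α) (K (α + 1)) (hcomp _ hα1γ)
      (hmono α hαγ) (hcomp α hαγ.le)]
    exact hchi α hαγ
  -- strictness
  have hstrict : ∀ α < γ, ¬(K α ≤ K (α + 1)) := by
    intro α hαγ hle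
    have htop : (K (α + 1)).subgroupOf (K α) = ⊤ := Subgroup.subgroupOf_eq_top.2 hle
    have h := hchi α hαγ
    rw [htop] at h
    haveI : Subsingleton (↥(K α) ⧸ (⊤ : Subgroup ↥(K α))) :=
      QuotientGroup.subsingleton_quotient_top
    have hle1 := localWeight_le_one_of_subsingleton
      (X := ↥(K α) ⧸ (⊤ : Subgroup ↥(K α))) (QuotientGroup.mk 1)
    rw [h] at hle1
    exact Cardinal.one_lt_aleph0.not_ge hle1
  -- separation of a point from a compact subgroup
  have hsep : ∀ a ≤ γ, ∀ x : G, x ∉ K a →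
      ∃ W ∈ 𝓝ˢ (K a : Set G), x ∉ W := by
    intro a ha x hx
    obtain ⟨A, Nx, hAo, hNxo, hLA, hxNx, hdisj⟩ :=
      SeparatedNhds.of_isCompact_isCompact (hcomp a ha) isCompact_singleton
        (Set.disjoint_singleton_right.2 hx)
    exact ⟨A, mem_nhdsSet_iff_exists.2 ⟨A, hAo, hLA, le_refl _⟩,
      fun hxA => Set.disjoint_left.1 hdisj hxA (hxNx rfl)⟩
  -- at a limit, any open neighbourhood of `K b` contains some `K a`, `a < b`
  have hlimsub : ∀ b ≤ γ, Order.IsSuccLimit b → ∀ W : Set G, IsOpen W → (K b : Set G) ⊆ W →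
      ∃ a < b, (K a : Set G) ⊆ W := by
    intro b hbγ hblim W hWo hKW
    by_contra hcon
    push_neg at hcon
    set g : b.ToType → Ordinal := fun i => ((Ordinal.ToType.mk (o := b)).symm i : Ordinal)
      with hgdef
    have hg : ∀ i, g i < b := fun i => ((Ordinal.ToType.mk (o := b)).symm i).2
    have hgsurj : ∀ a < b, ∃ i, g i = a := by
      intro a ha
      refine ⟨Ordinal.ToType.mk (o := b) ⟨a, ha⟩, ?_⟩
      simp [hgdef]
    set Z : b.ToType → Set G := fun i => (K (g i) : Set G) \ W with hZ
    have hZne : ∀ i, (Z i).Nonempty := by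
      intro i
      obtain ⟨x, hx1, hx2⟩ := Set.not_subset.1 (hcon (g i) (hg i))
      exact ⟨x, hx1, hx2⟩
    have hZc : ∀ i, IsCompact (Z i) := fun i => (hcomp _ ((hg i).le.trans hbγ)).diff hWo
    have hZcl : ∀ i, IsClosed (Z i) := fun i => (hZc i).isClosed
    have hZdir : Directed (· ⊇ ·) Z := by
      intro i j
      obtain ⟨k, hk⟩ := hgsurj (max (g i) (g j)) (max_lt (hg i) (hg j))
      refine ⟨k, ?_, ?_⟩
      · refine Set.diff_subset_diff_left ?_
        rw [hk]
        exact SetLike.coe_subset_coe.2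
          (hKmono _ ((max_lt (hg i) (hg j)).le.trans hbγ) _ (le_max_left _ _))
      · refine Set.diff_subset_diff_left ?_
        rw [hk]
        exact SetLike.coe_subset_coe.2
          (hKmono _ ((max_lt (hg i) (hg j)).le.trans hbγ) _ (le_max_right _ _))
    haveI : Nonempty b.ToType := by
      obtain ⟨i, -⟩ := hgsurj 0 hblim.pos
      exact ⟨i⟩
    obtain ⟨x, hx⟩ := IsCompact.nonempty_iInter_of_directed_nonempty_isCompact_isClosed
      Z hZdir hZne hZc hZcl
    have hxW : x ∉ W := ((Set.mem_iInter.1 hx (Classical.arbitrary _))).2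
    have hxKb : x ∈ K b := by
      rw [hlim b hbγ hblim]
      rw [Subgroup.mem_iInf]
      intro a
      rw [Subgroup.mem_iInf]
      intro ha
      obtain ⟨i, rfl⟩ := hgsurj a ha
      exact ((Set.mem_iInter.1 hx i)).1
    exact hxW (hKW hxKb)
  set t0 : Cardinal.{u} := fChar (𝓝ˢ (K 0 : Set G)) with ht0
  have main : ∀ b, b ≤ γ → 0 < b →
      fChar (𝓝ˢ (K b : Set G)) = b.card + t0 + Cardinal.aleph0 := by
    intro b
    induction b using Ordinal.induction with
    | _ b IH =>
      intro hbγ hbpos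
      rcases Ordinal.zero_or_succ_or_isSuccLimit b with h0 | ⟨c, hc⟩ | hblim
      · exact absurd h0 hbpos.ne'
      · subst hc
        rw [← Ordinal.add_one_eq_succ] at hbγ ⊢
        have hcγ : c < γ := by
          rw [Ordinal.add_one_eq_succ, Order.succ_le_iff] at hbγ
          exact hbγ
        set c' := fChar (𝓝ˢ (K c : Set G)) with hc'
        have hrelc := hrel c hcγ
        have hup : fChar (𝓝ˢ (K (c + 1) : Set G)) ≤ c' * Cardinal.aleph0 := by
          have := fChar_nhdsSet_le_mul (K (c + 1)) (K c) (hcomp _ hbγ)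
            (hcomp c hcγ.le) (hmono c hcγ)
          rwa [hrelc] at this
        have hlow1 : c' ≤ fChar (𝓝ˢ (K (c + 1) : Set G)) :=
          fChar_nhdsSet_antitone _ _ (hcomp c hcγ.le) (hmono c hcγ)
        have hlow2 : Cardinal.aleph0 ≤ fChar (𝓝ˢ (K (c + 1) : Set G)) := by
          rw [← hrelc]
          exact fChar_comap_le _ _
        have hcard : (c + 1).card = c.card + 1 := by
          rw [Ordinal.add_one_eq_succ, Ordinal.card_succ]
        have hval : (c + 1).card + t0 + Cardinal.aleph0 = c' + Cardinal.aleph0 := by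
          rcases eq_or_lt_of_le (zero_le : (0 : Ordinal) ≤ c) with h0 | hcpos
          · have hc0 : c' = t0 := by rw [hc', ht0, ← h0]
            rw [hcard, ← h0, Ordinal.card_zero, zero_add, hc0]
            simpa using card_absorb 0 t0
          · have hIH := IH c (Order.lt_succ c) hcγ.le hcpos
            rw [hcard, ← hc'] at *
            rw [hIH]
            have : c.card + t0 + Cardinal.aleph0 + Cardinal.aleph0 =
                c.card + t0 + Cardinal.aleph0 := by
              have h2 : c.card + t0 + Cardinal.aleph0 + Cardinal.aleph0 =
                  c.card + t0 + (Cardinal.aleph0 + Cardinal.aleph0) := by ring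
              rw [h2, Cardinal.aleph0_add_aleph0]
            rw [this, card_absorb]
        rw [hval]
        apply le_antisymm
        · refine hup.trans ?_
          calc c' * Cardinal.aleph0 ≤ max (max c' Cardinal.aleph0) Cardinal.aleph0 :=
                Cardinal.mul_le_max _ _
            _ = max c' Cardinal.aleph0 := by rw [max_assoc, max_self]
            _ = c' + Cardinal.aleph0 := (Cardinal.add_eq_max' le_rfl).symm
        · rw [Cardinal.add_eq_max' le_rfl]
          exact max_le hlow1 hlow2
      · -- limit case
        set c := fChar (𝓝ˢ (K b : Set G)) with hcdef
        set tb : Cardinal.{u} := b.card + t0 + Cardinal.aleph0 with htb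
        have h1b : 1 < b := by
          have := hblim.succ_lt hblim.pos
          rwa [Ordinal.succ_zero] at this
        -- lower bounds
        have hlowt0 : t0 ≤ c :=
          fChar_nhdsSet_antitone (K b) (K 0) (hcomp 0 (zero_le : (0 : Ordinal) ≤ γ))
            (hKmono b hbγ 0 (zero_le : (0 : Ordinal) ≤ b))
        have hval1 := IH 1 h1b (h1b.le.trans hbγ) zero_lt_one
        have hlowℵ : Cardinal.aleph0 ≤ c := by
          have h1 : Cardinal.aleph0 ≤ fChar (𝓝ˢ (K 1 : Set G)) := by
            rw [hval1]
            exact le_add_self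
          exact h1.trans (fChar_nhdsSet_antitone (K b) (K 1) (hcomp 1 (h1b.le.trans hbγ))
            (hKmono b hbγ 1 h1b.le))
        -- counting lower bound : b.card ≤ c
        have hlowcard : b.card ≤ c := by
          obtain ⟨S, hS, hScard⟩ := exists_basis_card_eq_fChar (𝓝ˢ (K b : Set G))
          have hmemS : ∀ U : ↥S, ∃ a, a < b ∧ (K a : Set G) ⊆ U.1 := by
            intro U
            have hUm : U.1 ∈ 𝓝ˢ (K b : Set G) := hS.mem_of_mem U.2
            obtain ⟨a, hab, hKa⟩ := hlimsub b hbγ hblim (interior U.1) isOpen_interior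
              (subset_interior_iff_mem_nhdsSet.2 hUm)
            exact ⟨a, hab, hKa.trans interior_subset⟩
          choose aU haU hKsub using hmemS
          have hxex : ∀ α, α < b → ∃ x : G, x ∈ K α ∧ x ∉ K (α + 1) := by
            intro α hα
            obtain ⟨x, hx1, hx2⟩ := SetLike.not_le_iff_exists.1
              (hstrict α (hα.trans_le hbγ))
            exact ⟨x, hx1, hx2⟩
          choose xα hxK hxnK using hxex
          have claim : ∀ α (hα : α < b), ∃ U : ↥S, α < aU U := by
            intro α hα
            have hα1b : α + 1 ≤ b := by
              rw [Ordinal.add_one_eq_succ, Order.succ_le_iff]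
              exact hα
            have hxb : xα α hα ∉ K b := by
              intro hmem
              exact hxnK α hα (hKmono b hbγ (α + 1) hα1b hmem)
            obtain ⟨W, hWm, hxW⟩ := hsep b hbγ _ hxb
            obtain ⟨U, hUS, hUW⟩ := hS.mem_iff.1 hWm
            refine ⟨⟨U, hUS⟩, ?_⟩
            by_contra hnot
            push_neg at hnot
            have : (xα α hα) ∈ U := hKsub ⟨U, hUS⟩
              (hKmono α ((hα.trans_le hbγ)).le (aU ⟨U, hUS⟩) hnot (hxK α hα))
            exact hxW (hUW this)
          haveI hSne : Nonempty ↥S := by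
            obtain ⟨U, hU, -⟩ := hS.mem_iff.1 Filter.univ_mem
            exact ⟨⟨U, hU⟩⟩
          set f : ↥S → Ordinal := fun U => aU U + 1 with hf
          have hb_le : b ≤ ⨆ U, f U := by
            by_contra hlt
            push_neg at hlt
            obtain ⟨U, hU⟩ := claim _ hlt
            have h1 : f U ≤ ⨆ V, f V := le_ciSup (Ordinal.bddAbove_range f) U
            have h2 : aU U < f U := by
              show aU U < aU U + 1
              rw [Ordinal.add_one_eq_succ]
              exact Order.lt_succ _
            exact absurd ((hU.trans h2).trans_le h1) (lt_irrefl _)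
          have haUcard : ∀ U : ↥S, (aU U).card ≤ c := by
            intro U
            rcases eq_or_lt_of_le (zero_le : (0 : Ordinal) ≤ (aU U)) with h0 | hpos
            · rw [← h0, Ordinal.card_zero]
              exact zero_le
            · have hIH := IH (aU U) (haU U) ((haU U).le.trans hbγ) hpos
              have hle2 : fChar (𝓝ˢ (K (aU U) : Set G)) ≤ c :=
                fChar_nhdsSet_antitone (K b) (K (aU U)) (hcomp _ ((haU U).le.trans hbγ))
                  (hKmono b hbγ _ (haU U).le)
              calc (aU U).card ≤ (aU U).card + t0 + Cardinal.aleph0 := by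
                    exact (self_le_add_right _ _).trans (self_le_add_right _ _)
                _ = fChar (𝓝ˢ (K (aU U) : Set G)) := hIH.symm
                _ ≤ c := hle2
          have hfcard : ∀ U : ↥S, (f U).card ≤ c := by
            intro U
            rw [hf]
            simp only []
            rw [Ordinal.add_one_eq_succ, Ordinal.card_succ]
            calc (aU U).card + 1 ≤ c + 1 := add_le_add_left (haUcard U) 1
              _ = c := Cardinal.add_one_of_aleph0_le hlowℵ
          have hreg := Cardinal.isRegular_succ hlowℵ
          have hsup_lt : (⨆ U, f U) < (Order.succ c).ord := by
            refine Ordinal.iSup_lt_ord ?_ ?_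
            · rw [hreg.cof_eq, hScard]
              exact Order.lt_succ c
            · intro U
              rw [Cardinal.lt_ord]
              exact Order.lt_succ_iff.2 (hfcard U)
          have hblt : b < (Order.succ c).ord := hb_le.trans_lt hsup_lt
          rw [Cardinal.lt_ord] at hblt
          exact Order.lt_succ_iff.1 hblt
        -- upper bound
        have hupper : c ≤ tb := by
          set g : b.ToType → Ordinal := fun i => ((Ordinal.ToType.mk (o := b)).symm i : Ordinal)
            with hgdef
          have hg : ∀ i, g i < b := fun i => ((Ordinal.ToType.mk (o := b)).symm i).2
          have hgsurj : ∀ a, a < b → ∃ i, g i = a := by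
            intro a ha
            refine ⟨Ordinal.ToType.mk (o := b) ⟨a, ha⟩, ?_⟩
            simp [hgdef]
          haveI : Nonempty b.ToType := by
            obtain ⟨i, -⟩ := hgsurj 0 hblim.pos
            exact ⟨i⟩
          have hex := fun i : b.ToType =>
            exists_basis_card_eq_fChar (𝓝ˢ (K (g i) : Set G))
          choose S hS hScard using hex
          set TT : Set (Set G) := ⋃ i, S i with hTT
          have hbasis : (𝓝ˢ (K b : Set G)).HasBasis (· ∈ TT) id := by
            constructor
            intro t
            constructor
            · intro ht
              obtain ⟨W, hWo, hsub, hWt⟩ := mem_nhdsSet_iff_exists.1 ht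
              obtain ⟨a, hab, hKaW⟩ := hlimsub b hbγ hblim W hWo hsub
              obtain ⟨i, rfl⟩ := hgsurj a hab
              have hWm : W ∈ 𝓝ˢ (K (g i) : Set G) :=
                mem_nhdsSet_iff_exists.2 ⟨W, hWo, hKaW, le_refl _⟩
              obtain ⟨U, hU, hUW⟩ := (hS i).mem_iff.1 hWm
              exact ⟨U, Set.mem_iUnion.2 ⟨i, hU⟩, hUW.trans hWt⟩
            · rintro ⟨U, hUT, hUt⟩
              obtain ⟨i, hUi⟩ := Set.mem_iUnion.1 hUT
              have hle : 𝓝ˢ (K b : Set G) ≤ 𝓝ˢ (K (g i) : Set G) :=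
                nhdsSet_mono (SetLike.coe_subset_coe.2 (hKmono b hbγ _ (hg i).le))
              exact Filter.mem_of_superset (hle ((hS i).mem_of_mem hUi)) hUt
          have hcle : c ≤ Cardinal.mk TT := fChar_le hbasis
          have hTTle : Cardinal.mk TT ≤ Cardinal.mk b.ToType * ⨆ i, Cardinal.mk (S i) :=
            Cardinal.mk_iUnion_le _
          have hSi_le : ∀ i, Cardinal.mk (S i) ≤ tb := by
            intro i
            rw [hScard i]
            rcases eq_or_lt_of_le (zero_le : (0 : Ordinal) ≤ (g i)) with h0 | hpos
            · rw [← h0, ← ht0, htb]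
              exact le_add_self.trans (self_le_add_right _ _)
            · rw [IH (g i) (hg i) ((hg i).le.trans hbγ) hpos, htb]
              refine add_le_add_left (add_le_add_left ?_ t0) Cardinal.aleph0
              exact Ordinal.card_le_card (hg i).le
          have hsup_le : (⨆ i, Cardinal.mk (S i)) ≤ tb := ciSup_le' hSi_le
          have hbcard_le : Cardinal.mk b.ToType ≤ tb := by
            rw [Cardinal.mk_toType, htb]
            exact (self_le_add_right _ _).trans (self_le_add_right _ _)
          have hωtb : Cardinal.aleph0 ≤ tb := le_add_self
          calc c ≤ Cardinal.mk TT := hcle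
            _ ≤ Cardinal.mk b.ToType * ⨆ i, Cardinal.mk (S i) := hTTle
            _ ≤ tb * tb := mul_le_mul' hbcard_le hsup_le
            _ = tb := Cardinal.mul_eq_self hωtb
        refine le_antisymm hupper ?_
        calc tb = b.card + t0 + Cardinal.aleph0 := by rw [htb]
          _ ≤ c + c + c := add_le_add (add_le_add hlowcard hlowt0) hlowℵ
          _ = c := by rw [Cardinal.add_eq_self hlowℵ, Cardinal.add_eq_self hlowℵ]
  rw [localWeight_quotient_eq (K γ) (hcomp γ le_rfl),
    localWeight_quotient_eq (K 0) (hcomp 0 (zero_le : (0 : Ordinal) ≤ γ))]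
  exact main γ le_rfl hγ
end

section
/- Every locally compact group G has a compact subgroup K such that the quotient space G/K is metrizable; moreover, if G is non-metrizable, then χ(K) = χ(G) for any such K, and if G is σ-compact, K can be chosen normal in G. -/
open Topology

section Auxiliary

open Filter Set Pointwise

/-- A T2 topological group whose neighbourhood filter at `1` is countably generated
is metrizable. -/
theorem aux_metrizable_of_nhds_one_cg {H : Type v} [Group H] [TopologicalSpace H]
    [IsTopologicalGroup H] [T2Space H] (h : (𝓝 (1 : H)).IsCountablyGenerated) :
    TopologicalSpace.MetrizableSpace H := by
  letI := IsTopologicalGroup.rightUniformSpace H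
  haveI : (uniformity H).IsCountablyGenerated := by
    rw [uniformity_eq_comap_nhds_one']; exact Filter.comap.isCountablyGenerated _ _
  exact UniformSpace.metrizableSpace

/-- A sigma type of metrizable spaces is metrizable. -/
theorem aux_sigma_metrizable {ι : Type v} {E : ι → Type w} [∀ i, TopologicalSpace (E i)]
    [∀ i, TopologicalSpace.MetrizableSpace (E i)] :
    TopologicalSpace.MetrizableSpace (Σ i, E i) := by
  letI : ∀ i, MetricSpace (E i) := fun i => TopologicalSpace.metrizableSpaceMetric (E i)
  letI : MetricSpace (Σ i, E i) := Metric.Sigma.metricSpace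
  infer_instance

/-- A space partitioned into open metrizable pieces is metrizable. -/
theorem aux_partition_metrizable {X : Type u} {ι : Type v} [TopologicalSpace X] (f : X → ι)
    (hopen : ∀ i, IsOpen (f ⁻¹' {i}))
    (hmet : ∀ i, TopologicalSpace.MetrizableSpace (f ⁻¹' {i})) :
    TopologicalSpace.MetrizableSpace X := by
  haveI := hmet
  haveI : TopologicalSpace.MetrizableSpace (Σ i, f ⁻¹' {i}) := aux_sigma_metrizable
  let e : (Σ i, (f ⁻¹' {i} : Set X)) ≃ X :=
    { toFun := fun p => p.2.1
      invFun := fun x => ⟨f x, x, rfl⟩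
      left_inv := by
        rintro ⟨i, x, hx⟩
        simp only [mem_preimage, mem_singleton_iff] at hx
        subst hx; rfl
      right_inv := fun x => rfl }
  have hc : Continuous e := continuous_sigma fun i => continuous_subtype_val
  have ho : IsOpenMap e := isOpenMap_sigma.2 fun i => (hopen i).isOpenMap_subtype_val
  exact (e.toHomeomorphOfContinuousOpen hc ho).symm.isEmbedding.metrizableSpace

theorem aux_isCompact_pow {M : Type v} [Monoid M] [TopologicalSpace M] [ContinuousMul M]
    {s : Set M} (hs : IsCompact s) (n : ℕ) : IsCompact (s ^ n) := by
  induction n with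
  | zero => rw [pow_zero, ← Set.singleton_one]; exact isCompact_singleton
  | succ n ih => rw [pow_succ]; exact ih.mul hs

theorem aux_submonoid_closure_coe_eq_iUnion_pow {M : Type v} [Monoid M] (s : Set M) :
    (Submonoid.closure s : Set M) = ⋃ n : ℕ, s ^ n := by
  apply subset_antisymm
  · let S' : Submonoid M :=
      { carrier := ⋃ n : ℕ, s ^ n
        one_mem' := mem_iUnion.2 ⟨0, by rw [pow_zero]; exact Set.one_mem_one⟩
        mul_mem' := by
          rintro a b ha hb
          obtain ⟨m, hm⟩ := mem_iUnion.1 ha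
          obtain ⟨n, hn⟩ := mem_iUnion.1 hb
          exact mem_iUnion.2 ⟨m + n, by rw [pow_add]; exact Set.mul_mem_mul hm hn⟩ }
    exact Submonoid.closure_le (S := S') |>.2
      (fun x hx => mem_iUnion.2 ⟨1, by rwa [pow_one]⟩)
  · refine iUnion_subset fun n => ?_
    induction n with
    | zero =>
      rw [pow_zero]
      rintro x hx
      rw [Set.mem_one] at hx
      subst hx
      exact (Submonoid.closure s).one_mem
    | succ n ih =>
      rw [pow_succ, Set.mul_subset_iff]
      exact fun x hx y hy => (Submonoid.closure s).mul_mem (ih hx) (Submonoid.subset_closure hy)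

/-- Every locally compact group has an open σ-compact subgroup. -/
theorem aux_exists_open_sigmaCompact_subgroup {G : Type u} [Group G] [TopologicalSpace G]
    [IsTopologicalGroup G] [WeaklyLocallyCompactSpace G] :
    ∃ H : Subgroup G, IsOpen (H : Set G) ∧ IsSigmaCompact (H : Set G) := by
  obtain ⟨C, hCc, hCn⟩ := exists_compact_mem_nhds (1 : G)
  refine ⟨Subgroup.closure C, Subgroup.isOpen_of_mem_nhds _
    (Filter.mem_of_superset hCn Subgroup.subset_closure), ?_⟩
  have hcoe : ((Subgroup.closure C : Subgroup G) : Set G) = ⋃ n : ℕ, (C ∪ C⁻¹) ^ n := by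
    rw [← Subgroup.coe_toSubmonoid, Subgroup.closure_toSubmonoid,
      aux_submonoid_closure_coe_eq_iUnion_pow]
  rw [hcoe]
  exact ⟨fun n => (C ∪ C⁻¹) ^ n, fun n => aux_isCompact_pow (hCc.union hCc.inv) n, rfl⟩

/-- One refinement step in the Kakutani–Kodaira construction. -/
theorem aux_kk_step {H : Type v} [Group H] [TopologicalSpace H] [IsTopologicalGroup H]
    (C : Set H) (hC : C ∈ 𝓝 1) (F : Set H) (hF : IsCompact F)
    (U : Set H) (hU : U ∈ 𝓝 1) :
    ∃ W : Set H, (W ∈ 𝓝 1 ∧ W⁻¹ = W ∧ W ⊆ C) ∧ W * W ⊆ U ∧ closure W ⊆ U ∧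
      ∀ g ∈ F, ∀ w ∈ W, g * w * g⁻¹ ∈ U := by
  obtain ⟨V2, hV2o, hV21, hV2U⟩ := exists_open_nhds_one_mul_subset hU
  obtain ⟨N, ⟨hNn, hNc⟩, hNU⟩ := (closed_nhds_basis (1 : H)).mem_iff.mp hU
  have hφ : Continuous fun p : H × H => p.1 * p.2 * p.1⁻¹ := by fun_prop
  have hOopen : IsOpen ((fun p : H × H => p.1 * p.2 * p.1⁻¹) ⁻¹' interior U) :=
    isOpen_interior.preimage hφ
  have hsub : F ×ˢ ({1} : Set H) ⊆ (fun p : H × H => p.1 * p.2 * p.1⁻¹) ⁻¹' interior U := by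
    rintro ⟨g, x⟩ ⟨hg, hx⟩
    simp only [mem_singleton_iff] at hx
    subst hx
    simp only [mem_preimage, mul_one, mul_inv_cancel]
    exact mem_interior_iff_mem_nhds.2 hU
  obtain ⟨uu, vv, huo, hvo, hFu, h1v, huv⟩ :=
    generalized_tube_lemma hF isCompact_singleton hOopen hsub
  set W0 := C ∩ V2 ∩ N ∩ vv with hW0def
  have hW0 : W0 ∈ 𝓝 1 := by
    refine Filter.inter_mem (Filter.inter_mem (Filter.inter_mem hC ?_) hNn) ?_
    · exact hV2o.mem_nhds hV21
    · exact hvo.mem_nhds (h1v rfl)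
  have hW0inv : W0⁻¹ ∈ 𝓝 (1 : H) := by
    rw [← Set.inv_preimage]
    exact continuous_inv.continuousAt.preimage_mem_nhds (by rwa [inv_one])
  refine ⟨W0 ∩ W0⁻¹, ⟨Filter.inter_mem hW0 hW0inv, ?_, ?_⟩, ?_, ?_, ?_⟩
  · rw [Set.inter_inv, inv_inv, Set.inter_comm]
  · exact fun x hx => hx.1.1.1.1
  · refine (Set.mul_subset_mul ?_ ?_).trans hV2U <;>
      exact fun x hx => hx.1.1.1.2
  · refine (closure_minimal ?_ hNc).trans hNU
    exact fun x hx => hx.1.1.2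
  · intro g hg w hw
    have : (g, w) ∈ uu ×ˢ vv := ⟨hFu hg, hw.1.2⟩
    exact interior_subset (huv this)

/-- **Kakutani–Kodaira**: a σ-compact locally compact group has a compact normal subgroup
with metrizable quotient. -/
theorem aux_kakutani_kodaira (H : Type v) [Group H] [TopologicalSpace H] [IsTopologicalGroup H]
    [LocallyCompactSpace H] [T2Space H] [SigmaCompactSpace H] :
    ∃ K : Subgroup H, IsCompact (K : Set H) ∧ K.Normal ∧
      TopologicalSpace.MetrizableSpace (H ⧸ K) := by
  obtain ⟨C0, hC0c, hC0n⟩ := exists_compact_mem_nhds (1 : H)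
  have hC0invc : IsCompact (C0⁻¹ : Set H) := hC0c.inv
  set C : Set H := C0 ∩ C0⁻¹ with hCdef
  have hCc : IsCompact C := hC0c.inter_right hC0invc.isClosed
  have hCn : C ∈ 𝓝 (1 : H) := by
    refine Filter.inter_mem hC0n ?_
    rw [← Set.inv_preimage]
    exact continuous_inv.continuousAt.preimage_mem_nhds (by rwa [inv_one])
  have hCsymm : C⁻¹ = C := by
    rw [hCdef, Set.inter_inv, inv_inv, Set.inter_comm]
  have step : ∀ (n : ℕ) (U : Set H), U ∈ 𝓝 1 →
      ∃ W : Set H, (W ∈ 𝓝 1 ∧ W⁻¹ = W ∧ W ⊆ C) ∧ W * W ⊆ U ∧ closure W ⊆ U ∧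
        ∀ g ∈ compactCovering H n, ∀ w ∈ W, g * w * g⁻¹ ∈ U :=
    fun n U hU => aux_kk_step C hCn (compactCovering H n) (isCompact_compactCovering H n) U hU
  choose W hW1 hW2 hW3 hW4 using step
  let V : ℕ → {s : Set H // s ∈ 𝓝 1 ∧ s⁻¹ = s ∧ s ⊆ C} := fun n =>
    Nat.rec ⟨C, hCn, hCsymm, Set.Subset.rfl⟩ (fun n p => ⟨W n p.1 p.2.1, hW1 n p.1 p.2.1⟩) n
  have hmul : ∀ n, (V (n + 1)).1 * (V (n + 1)).1 ⊆ (V n).1 := fun n => hW2 n (V n).1 (V n).2.1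
  have hcl : ∀ n, closure (V (n + 1)).1 ⊆ (V n).1 := fun n => hW3 n (V n).1 (V n).2.1
  have hconj : ∀ n, ∀ g ∈ compactCovering H n, ∀ w ∈ (V (n + 1)).1, g * w * g⁻¹ ∈ (V n).1 :=
    fun n => hW4 n (V n).1 (V n).2.1
  have hone : ∀ n, (1 : H) ∈ (V n).1 := fun n => mem_of_mem_nhds (V n).2.1
  have hdec : ∀ n, (V (n + 1)).1 ⊆ (V n).1 := by
    intro n x hx
    have := Set.mul_mem_mul hx (hone (n + 1))
    rw [mul_one] at this
    exact hmul n this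
  have hanti : Antitone fun n => (V n).1 := antitone_nat_of_succ_le hdec
  set Kc : Set H := ⋂ n, (V n).1 with hKcdef
  have hKcl : Kc = ⋂ n, closure (V n).1 := by
    apply subset_antisymm
    · exact subset_iInter fun n => (iInter_subset _ n).trans subset_closure
    · intro x hx
      exact mem_iInter.2 fun n => hcl n (mem_iInter.1 hx (n + 1))
  let K : Subgroup H :=
    { carrier := Kc
      one_mem' := mem_iInter.2 hone
      mul_mem' := fun {a b} ha hb => mem_iInter.2 fun n =>
        hmul n (Set.mul_mem_mul (mem_iInter.1 ha (n + 1)) (mem_iInter.1 hb (n + 1)))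
      inv_mem' := fun {a} ha => mem_iInter.2 fun n => by
        rw [← (V n).2.2.1]
        exact Set.inv_mem_inv.2 (mem_iInter.1 ha n) }
  have hKcc : IsCompact Kc := by
    have hcls : IsClosed Kc := by
      rw [hKcl]; exact isClosed_iInter fun n => isClosed_closure
    exact hCc.of_isClosed_subset hcls (iInter_subset _ 0)
  have hnormal : K.Normal := by
    refine ⟨fun x hx g => mem_iInter.2 fun n => ?_⟩
    obtain ⟨N0, hg⟩ := exists_mem_compactCovering g
    have hg' : g ∈ compactCovering H (max n N0) :=
      compactCovering_subset H (le_max_right n N0) hg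
    have hx' : x ∈ (V (max n N0 + 1)).1 := mem_iInter.1 hx (max n N0 + 1)
    exact hanti (le_max_left n N0) (hconj _ g hg' x hx')
  haveI := hnormal
  haveI hKclosed : IsClosed (K : Set H) := hKcc.isClosed
  have hmap : 𝓝 (1 : H ⧸ K) = Filter.map (QuotientGroup.mk : H → H ⧸ K) (𝓝 (1 : H)) := by
    have := QuotientGroup.nhds_eq K (1 : H)
    rwa [QuotientGroup.mk_one] at this
  have hb : (𝓝 (1 : H ⧸ K)).HasBasis (fun _ : ℕ => True)
      (fun n => (QuotientGroup.mk : H → H ⧸ K) '' (V n).1) := by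
    constructor
    intro t
    simp only [true_and]
    constructor
    · intro ht
      have hVcpt : ∀ n, IsCompact (closure (V n).1) :=
        fun n => hCc.of_isClosed_subset isClosed_closure (closure_minimal (V n).2.2.2 hCc.isClosed)
      have hanticl : Antitone fun n => closure (V n).1 :=
        antitone_nat_of_succ_le fun n => (hcl n).trans subset_closure
      have hnhd : ∀ x ∈ ⋂ n, closure (V n).1,
          ((QuotientGroup.mk : H → H ⧸ K) ⁻¹' t) ∈ 𝓝 x := by
        intro x hx
        rw [← hKcl] at hx
        have hx1 : ((x : H) : H ⧸ K) = (1 : H ⧸ K) := (QuotientGroup.eq_one_iff x).2 hx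
        have ht' : t ∈ Filter.map (QuotientGroup.mk : H → H ⧸ K) (𝓝 x) := by
          rw [← QuotientGroup.nhds_eq K x, hx1]; exact ht
        exact Filter.mem_map.1 ht'
      obtain ⟨n, hn⟩ := exists_subset_nhds_of_isCompact hanticl.directed_ge hVcpt hnhd
      exact ⟨n, image_subset_iff.2 (subset_closure.trans hn)⟩
    · rintro ⟨n, hsub⟩
      refine Filter.mem_of_superset ?_ hsub
      rw [hmap]
      exact Filter.mem_map.2 (Filter.mem_of_superset (V n).2.1 (subset_preimage_image _ _))
  exact ⟨K, hKcc, hnormal, aux_metrizable_of_nhds_one_cg hb.isCountablyGenerated⟩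

/-- If `H` is an open subgroup of `G` and `K'` a subgroup of `H` with `H ⧸ K'` metrizable,
then `G ⧸ K'` (viewed in `G`) is metrizable. -/
theorem aux_coset_metrizable {G : Type u} [Group G] [TopologicalSpace G] [IsTopologicalGroup G]
    (H : Subgroup G) (hHo : IsOpen (H : Set G)) (K' : Subgroup ↥H)
    (hmet : TopologicalSpace.MetrizableSpace (↥H ⧸ K')) :
    TopologicalSpace.MetrizableSpace (G ⧸ K'.map H.subtype) := by
  haveI := hmet
  set K : Subgroup G := K'.map H.subtype with hKdef
  have hKH : K ≤ H := Subgroup.map_subtype_le K'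
  let f : G ⧸ K → G ⧸ H := Quotient.map' id (fun a b hab => by
    rw [QuotientGroup.leftRel_apply] at hab ⊢
    exact hKH hab)
  have hf : ∀ g : G, f (QuotientGroup.mk g) = QuotientGroup.mk g := fun g => rfl
  apply aux_partition_metrizable f
  · intro i
    obtain ⟨g₀, rfl⟩ := QuotientGroup.mk_surjective i
    rw [← (QuotientGroup.isQuotientMap_mk K).isOpen_preimage]
    have heq : ((QuotientGroup.mk : G → G ⧸ K) ⁻¹' (f ⁻¹' {QuotientGroup.mk g₀}) : Set G)
        = (fun g => g⁻¹ * g₀) ⁻¹' (H : Set G) := by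
      ext g
      simp only [mem_preimage, mem_singleton_iff, hf, QuotientGroup.eq, SetLike.mem_coe]
    rw [heq]
    exact hHo.preimage (by fun_prop)
  · intro i
    obtain ⟨g₀, rfl⟩ := QuotientGroup.mk_surjective i
    let φ : ↥H ⧸ K' → G ⧸ K := fun y => Quotient.liftOn' y
      (fun h : ↥H => (QuotientGroup.mk (g₀ * h) : G ⧸ K)) (by
        intro a b hab
        rw [QuotientGroup.leftRel_apply] at hab
        apply (QuotientGroup.eq (s := K)).2
        have : ((a⁻¹ * b : ↥H) : G) ∈ K := ⟨a⁻¹ * b, hab, rfl⟩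
        simpa [mul_assoc] using this)
    have hφmk : ∀ h : ↥H, φ (QuotientGroup.mk h) = QuotientGroup.mk (g₀ * h) := fun _ => rfl
    have hcont : Continuous φ := by
      rw [(QuotientGroup.isQuotientMap_mk K').continuous_iff]
      exact QuotientGroup.continuous_mk.comp (by fun_prop)
    have hinj : Function.Injective φ := by
      intro y1 y2 h12
      obtain ⟨a, rfl⟩ := QuotientGroup.mk_surjective y1
      obtain ⟨b, rfl⟩ := QuotientGroup.mk_surjective y2
      rw [hφmk, hφmk] at h12
      have h3 : ((g₀ * a)⁻¹ * (g₀ * b) : G) ∈ K := (QuotientGroup.eq (s := K)).1 h12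
      have h4 : ((a : G))⁻¹ * (b : G) ∈ K := by simpa [mul_assoc] using h3
      obtain ⟨k, hk, hco⟩ := h4
      have : k = a⁻¹ * b := Subtype.val_injective (by simpa using hco)
      subst this
      exact (QuotientGroup.eq (s := K')).2 hk
    have hopen : IsOpenMap φ := by
      intro O hO
      have himg : φ '' O = (QuotientGroup.mk : G → G ⧸ K) ''
          ((g₀ * ·) '' (Subtype.val '' ((QuotientGroup.mk : ↥H → ↥H ⧸ K') ⁻¹' O))) := by
        ext y
        constructor
        · rintro ⟨z, hz, rfl⟩
          obtain ⟨h, rfl⟩ := QuotientGroup.mk_surjective z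
          exact ⟨g₀ * h, ⟨h, ⟨h, hz, rfl⟩, rfl⟩, rfl⟩
        · rintro ⟨-, ⟨-, ⟨h, hh, rfl⟩, rfl⟩, rfl⟩
          exact ⟨QuotientGroup.mk h, hh, rfl⟩
      rw [himg]
      exact QuotientGroup.isOpenMap_coe _ ((Homeomorph.mulLeft g₀).isOpenMap _
        (hHo.isOpenMap_subtype_val _ (hO.preimage QuotientGroup.continuous_mk)))
    have hemb : Topology.IsOpenEmbedding φ :=
      .of_continuous_injective_isOpenMap hcont hinj hopen
    have hrange : Set.range φ = f ⁻¹' {QuotientGroup.mk g₀} := by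
      ext y
      simp only [mem_preimage, mem_singleton_iff, Set.mem_range]
      constructor
      · rintro ⟨z, rfl⟩
        obtain ⟨h, rfl⟩ := QuotientGroup.mk_surjective z
        rw [hφmk]
        show f (QuotientGroup.mk (g₀ * h)) = QuotientGroup.mk g₀
        rw [hf]
        exact (QuotientGroup.eq (s := H)).2 (by simp [mul_assoc])
      · intro hy
        obtain ⟨g, rfl⟩ := QuotientGroup.mk_surjective y
        rw [hf] at hy
        have hgH : g⁻¹ * g₀ ∈ H := (QuotientGroup.eq (s := H)).1 hy
        refine ⟨QuotientGroup.mk ⟨g₀⁻¹ * g, ?_⟩, ?_⟩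
        · have := H.inv_mem hgH
          simpa using this
        · rw [hφmk]
          congr 1
          simp [mul_assoc]
    rw [← hrange]
    exact hemb.isEmbedding.toHomeomorph.symm.isEmbedding.metrizableSpace

end Auxiliary

section LocalWeight

open Filter Set

variable {X : Type u} [TopologicalSpace X] {x : X}

theorem aux_hasBasis_subtype {Y : Type v} {l : Filter Y} {S : Set (Set Y)}
    (h : l.HasBasis (· ∈ S) id) :
    l.HasBasis (fun _ : S => True) (fun s => (s : Set Y)) :=
  ⟨fun t => by simp [h.mem_iff, Subtype.exists]⟩

theorem aux_localWeight_le_of_basis {ι : Type u} {p : ι → Prop} {s : ι → Set X}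
    (h : (𝓝 x).HasBasis p s) : localWeight X x ≤ Cardinal.mk {i // p i} := by
  have hS : (𝓝 x).HasBasis (· ∈ s '' {i | p i}) id := by
    refine ⟨fun t => ?_⟩
    rw [h.mem_iff]
    constructor
    · rintro ⟨i, hpi, hi⟩; exact ⟨s i, ⟨i, hpi, rfl⟩, hi⟩
    · rintro ⟨u, ⟨i, hpi, rfl⟩, hu⟩; exact ⟨i, hpi, hu⟩
  calc localWeight X x ≤ Cardinal.mk (s '' {i | p i}) :=
        ciInf_le' _ (⟨_, hS⟩ : {S : Set (Set X) // (𝓝 x).HasBasis (· ∈ S) id})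
    _ ≤ Cardinal.mk {i | p i} := Cardinal.mk_image_le
    _ = Cardinal.mk {i // p i} := rfl

theorem aux_exists_basis_localWeight (x : X) :
    ∃ S : Set (Set X), (𝓝 x).HasBasis (· ∈ S) id ∧ Cardinal.mk S = localWeight X x := by
  have hne : Nonempty {S : Set (Set X) // (𝓝 x).HasBasis (· ∈ S) id} :=
    ⟨⟨{s | s ∈ 𝓝 x}, (𝓝 x).basis_sets⟩⟩
  obtain ⟨B, hB⟩ := csInf_mem (Set.range_nonempty
    (fun B : {S : Set (Set X) // (𝓝 x).HasBasis (· ∈ S) id} => Cardinal.mk B.1))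
  exact ⟨B.1, B.2, hB⟩

theorem aux_nhds_isCountablyGenerated_of_localWeight
    (h : localWeight X x ≤ Cardinal.aleph0) : (𝓝 x).IsCountablyGenerated := by
  obtain ⟨S, hS, hcard⟩ := aux_exists_basis_localWeight x
  haveI : Countable S := Cardinal.mk_le_aleph0_iff.mp (hcard.le.trans h)
  exact (aux_hasBasis_subtype hS).isCountablyGenerated

/-- The key cardinality bound: if `K` is a compact subgroup with metrizable quotient and `B`
is a neighbourhood basis of `1` in `K`, then `χ(G) ≤ #B * ℵ₀`. -/
theorem aux_localWeight_le_basis_mul_aleph0 {G : Type u} [Group G] [TopologicalSpace G]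
    [IsTopologicalGroup G] [LocallyCompactSpace G] [T2Space G] (K : Subgroup G)
    [TopologicalSpace.MetrizableSpace (G ⧸ K)]
    (B : Set (Set ↥K)) (hB : (𝓝 (1 : ↥K)).HasBasis (· ∈ B) id) :
    localWeight G 1 ≤ Cardinal.mk B * Cardinal.aleph0 := by
  set π : G → G ⧸ K := QuotientGroup.mk with hπdef
  set q : G ⧸ K := π 1 with hqdef
  obtain ⟨Wseq, hWprop, hWbasis⟩ := (closed_nhds_basis q).exists_antitone_subbasis
  obtain ⟨V₀, hV₀c, hV₀n⟩ := exists_compact_mem_nhds (1 : G)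
  have hchoice : ∀ A : B, ∃ O : Set G, O ∈ 𝓝 1 ∧ closure O ⊆ V₀ ∧
      ∀ x, ∀ hx : x ∈ K, x ∈ closure O → (⟨x, hx⟩ : ↥K) ∈ (A : Set ↥K) := by
    rintro ⟨A, hA⟩
    have hA1 : A ∈ 𝓝 (1 : ↥K) := hB.mem_of_mem hA
    rw [nhds_induced Subtype.val, Filter.mem_comap] at hA1
    obtain ⟨O, hO1, hOA⟩ := hA1
    obtain ⟨N, ⟨hNn, hNc⟩, hNsub⟩ := (closed_nhds_basis (1 : G)).mem_iff.mp
      (Filter.inter_mem hO1 (interior_mem_nhds.2 hV₀n))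
    refine ⟨interior N, interior_mem_nhds.2 hNn, ?_, ?_⟩
    · exact (closure_minimal interior_subset hNc).trans
        (fun y hy => interior_subset (hNsub hy).2)
    · intro x hx hxcl
      exact hOA (hNsub ((closure_minimal interior_subset hNc) hxcl)).1
  choose O hO1 hO2 hO3 using hchoice
  have hbasis : (𝓝 (1 : G)).HasBasis (fun _ : B × ℕ => True)
      (fun p => O p.1 ∩ π ⁻¹' (Wseq p.2)) := by
    constructor
    intro t
    simp only [true_and]
    constructor
    · intro ht
      set t' : Set G := interior t with ht'def
      have ht'n : t' ∈ 𝓝 (1 : G) := by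
        rw [ht'def]; exact interior_mem_nhds.2 ht
      have hA1 : Subtype.val ⁻¹' t' ∈ 𝓝 (1 : ↥K) := by
        rw [nhds_induced Subtype.val]
        exact Filter.preimage_mem_comap ht'n
      obtain ⟨A, hA, hAt⟩ := hB.mem_iff.mp hA1
      have hOc : IsCompact (closure (O ⟨A, hA⟩)) :=
        hV₀c.of_isClosed_subset isClosed_closure (hO2 ⟨A, hA⟩)
      by_cases hex : ∃ n, closure (O ⟨A, hA⟩) ∩ π ⁻¹' (Wseq n) ⊆ t'
      · obtain ⟨n, hn⟩ := hex
        exact ⟨(⟨A, hA⟩, n), fun x hx =>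
          interior_subset (hn ⟨subset_closure hx.1, hx.2⟩)⟩
      · exfalso
        push_neg at hex
        have hT : ∀ n : ℕ, (closure (O ⟨A, hA⟩) ∩ π ⁻¹' (Wseq n) ∩ t'ᶜ).Nonempty := by
          intro n
          obtain ⟨x, hx1, hx2⟩ := not_subset.mp (hex n)
          exact ⟨x, ⟨hx1.1, hx1.2⟩, hx2⟩
        have hTc : ∀ n, IsClosed (closure (O ⟨A, hA⟩) ∩ π ⁻¹' (Wseq n) ∩ t'ᶜ) := fun n =>
          ((isClosed_closure.inter ((hWprop n).2.preimage QuotientGroup.continuous_mk)).inter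
            isOpen_interior.isClosed_compl)
        have hTdec : ∀ n, closure (O ⟨A, hA⟩) ∩ π ⁻¹' (Wseq (n + 1)) ∩ t'ᶜ ⊆
            closure (O ⟨A, hA⟩) ∩ π ⁻¹' (Wseq n) ∩ t'ᶜ := fun n x hx =>
          ⟨⟨hx.1.1, preimage_mono (hWbasis.antitone (Nat.le_succ n)) hx.1.2⟩, hx.2⟩
        obtain ⟨y, hy⟩ := IsCompact.nonempty_iInter_of_sequence_nonempty_isCompact_isClosed
          _ hTdec hT ((hOc.inter_right
            ((hWprop 0).2.preimage QuotientGroup.continuous_mk)).inter_right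
            isOpen_interior.isClosed_compl) hTc
        have hyW : ∀ n, π y ∈ Wseq n := fun n => (mem_iInter.1 hy n).1.2
        have hq : π y = q := by
          by_contra hne
          have hco : ({π y}ᶜ : Set (G ⧸ K)) ∈ 𝓝 q :=
            isOpen_compl_singleton.mem_nhds (by simpa using Ne.symm hne)
          obtain ⟨n, -, hn⟩ := hWbasis.toHasBasis.mem_iff.mp hco
          exact hn (hyW n) rfl
        have hyK : y ∈ K := by
          have h5 : y⁻¹ * 1 ∈ K := (QuotientGroup.eq (s := K)).1 hq
          rw [mul_one] at h5
          exact K.inv_mem_iff.1 h5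
        have hyA := hO3 ⟨A, hA⟩ y hyK (mem_iInter.1 hy 0).1.1
        exact (mem_iInter.1 hy 0).2 (hAt hyA)
    · rintro ⟨⟨A, n⟩, hsub⟩
      refine Filter.mem_of_superset (Filter.inter_mem (hO1 A) ?_) hsub
      exact QuotientGroup.continuous_mk.continuousAt.preimage_mem_nhds (hWbasis.mem n)
  calc localWeight G 1 ≤ Cardinal.mk {p : B × ℕ // True} :=
        aux_localWeight_le_of_basis hbasis
    _ = Cardinal.mk (B × ℕ : Type u) := Cardinal.mk_congr (Equiv.subtypeUnivEquiv fun _ => trivial)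
    _ = Cardinal.mk B * Cardinal.aleph0 := by
        simp [Cardinal.mk_prod]

end LocalWeight

/-- Every locally compact group `G` has a compact subgroup `K` with `G/K`
metrizable; if `G` is non-metrizable then `χ(K) = χ(G)` for every such `K`; and if `G` is
σ-compact, `K` can be chosen normal in `G`. -/
theorem stmt_11 {G : Type u} [Group G] [TopologicalSpace G] [IsTopologicalGroup G]
    [LocallyCompactSpace G] [T2Space G] :
    (∃ K : Subgroup G, IsCompact (K : Set G) ∧
      TopologicalSpace.MetrizableSpace (G ⧸ K)) ∧
    (¬ TopologicalSpace.MetrizableSpace G →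
      ∀ K : Subgroup G, IsCompact (K : Set G) →
        TopologicalSpace.MetrizableSpace (G ⧸ K) →
          localWeight (↥K) (1 : K) = localWeight G (1 : G)) ∧
    (SigmaCompactSpace G →
      ∃ K : Subgroup G, IsCompact (K : Set G) ∧ K.Normal ∧
        TopologicalSpace.MetrizableSpace (G ⧸ K)) := by
  refine ⟨?_, ?_, ?_⟩
  · -- Part 1
    obtain ⟨H, hHo, hHsc⟩ := aux_exists_open_sigmaCompact_subgroup (G := G)
    haveI : SigmaCompactSpace ↥H := isSigmaCompact_iff_sigmaCompactSpace.mp hHsc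
    haveI : LocallyCompactSpace ↥H := hHo.locallyCompactSpace
    obtain ⟨K', hK'c, hK'n, hK'm⟩ := aux_kakutani_kodaira ↥H
    refine ⟨K'.map H.subtype, ?_, aux_coset_metrizable H hHo K' hK'm⟩
    rw [Subgroup.coe_map]
    exact hK'c.image continuous_subtype_val
  · -- Part 2
    intro hnm K hKc hQm
    haveI := hQm
    have hKbig : ¬ localWeight ↥K (1 : ↥K) ≤ Cardinal.aleph0 := by
      intro hle
      obtain ⟨B, hBbasis, hBcard⟩ := aux_exists_basis_localWeight (1 : ↥K)
      have h1 : localWeight G 1 ≤ Cardinal.mk B * Cardinal.aleph0 :=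
        aux_localWeight_le_basis_mul_aleph0 K B hBbasis
      have h2 : localWeight G 1 ≤ Cardinal.aleph0 := by
        refine h1.trans ?_
        calc Cardinal.mk B * Cardinal.aleph0
            ≤ Cardinal.aleph0 * Cardinal.aleph0 :=
              mul_le_mul' (hBcard.le.trans hle) le_rfl
          _ = Cardinal.aleph0 := Cardinal.aleph0_mul_aleph0
      exact hnm (aux_metrizable_of_nhds_one_cg
        (aux_nhds_isCountablyGenerated_of_localWeight h2))
    obtain ⟨B, hBbasis, hBcard⟩ := aux_exists_basis_localWeight (1 : ↥K)
    have hge : Cardinal.aleph0 ≤ Cardinal.mk B := by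
      rw [hBcard]; exact (not_le.1 hKbig).le
    have h1 : localWeight G 1 ≤ localWeight ↥K 1 := by
      have hbd := aux_localWeight_le_basis_mul_aleph0 K B hBbasis
      rwa [Cardinal.mul_eq_left hge hge Cardinal.aleph0_ne_zero, hBcard] at hbd
    have h2 : localWeight ↥K 1 ≤ localWeight G 1 := by
      obtain ⟨S, hS, hScard⟩ := aux_exists_basis_localWeight (1 : G)
      have hb2 : (𝓝 (1 : ↥K)).HasBasis (fun _ : S => True)
          (fun s => (Subtype.val ⁻¹' (s : Set G) : Set ↥K)) := by
        rw [nhds_induced Subtype.val (1 : ↥K)]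
        exact (aux_hasBasis_subtype hS).comap _
      calc localWeight ↥K 1 ≤ Cardinal.mk {s : S // True} :=
            aux_localWeight_le_of_basis hb2
        _ = Cardinal.mk S := Cardinal.mk_congr (Equiv.subtypeUnivEquiv fun _ => trivial)
        _ = localWeight G 1 := hScard
    exact le_antisymm h2 h1
  · -- Part 3
    intro _
    exact aux_kakutani_kodaira G
end
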